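/- arXiv:1904.03044 — 10 statements merged into one kernel-verified Lean document; each statement's English description precedes it below -/
import Mathlib

section
/- Suppose the maps R^{(ij)} : ℂ → End(ℂ^d⊗ℂ^d) and K : ℂ → End(ℂ^d) satisfy the boundary Yang–Baxter equation for all u,v ∈ ℂ and the quasi-classical asymptotics with invertible leading term κ. Then κ satisfies the classical boundary Yang–Baxter constraints: C^{(11)}·(κ⊗κ) = (κ⊗κ)·C^{(22)} and (κ⊗1)·C^{(21)}·(1⊗κ) = (1⊗κ)·C^{(12)}·(κ⊗1). -/
open Kronecker
open Filter Topology

attribute [local instance 100] LieRing.ofAssociativeRing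

/-- The flip operator `P` on `ℂ^d ⊗ ℂ^d`, `P(x ⊗ y) = y ⊗ x`, as a matrix. -/
def matFlip (d : ℕ) : Matrix (Fin d × Fin d) (Fin d × Fin d) ℂ :=
  fun p q => if p.1 = q.2 ∧ p.2 = q.1 then 1 else 0

/-- Entrywise big-O bound `‖f(u)‖ = O(g(‖u‖))` as `‖u‖ → ∞`. -/
def AsympO {m : Type*} (f : ℂ → Matrix m m ℂ) (g : ℝ → ℝ) : Prop :=
  ∃ c r : ℝ, ∀ u : ℂ, r ≤ ‖u‖ → ∀ p q, ‖f u p q‖ ≤ c * g ‖u‖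

section Aux

lemma matFlip_mul {d : ℕ} (M : Matrix (Fin d × Fin d) (Fin d × Fin d) ℂ) :
    matFlip d * M = M.submatrix Prod.swap id := by
  ext p q
  simp only [Matrix.mul_apply, matFlip, Matrix.submatrix_apply, id]
  have key : ∀ r : Fin d × Fin d,
      (if p.1 = r.2 ∧ p.2 = r.1 then (1:ℂ) else 0) * M r q
        = if Prod.swap p = r then M r q else 0 := by
    intro r
    by_cases h : Prod.swap p = r
    · obtain ⟨a, b⟩ := p; cases h; simp
    · have : ¬ (p.1 = r.2 ∧ p.2 = r.1) := by
        rintro ⟨h1, h2⟩; exact h (Prod.ext h2 h1)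
      simp [h, this]
  rw [Finset.sum_congr rfl (fun r _ => key r),
    Finset.sum_ite_eq Finset.univ (Prod.swap p) (fun r => M r q)]
  simp

lemma mul_matFlip {d : ℕ} (M : Matrix (Fin d × Fin d) (Fin d × Fin d) ℂ) :
    M * matFlip d = M.submatrix id Prod.swap := by
  ext p q
  simp only [Matrix.mul_apply, matFlip, Matrix.submatrix_apply, id]
  have key : ∀ r : Fin d × Fin d,
      M p r * (if r.1 = q.2 ∧ r.2 = q.1 then (1:ℂ) else 0)
        = if Prod.swap q = r then M p r else 0 := by
    intro r
    by_cases h : Prod.swap q = r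
    · obtain ⟨a, b⟩ := q; cases h; simp
    · have : ¬ (r.1 = q.2 ∧ r.2 = q.1) := by
        rintro ⟨h1, h2⟩; exact h (Prod.ext h1.symm h2.symm)
      simp [h, this]
  rw [Finset.sum_congr rfl (fun r _ => key r),
    Finset.sum_ite_eq Finset.univ (Prod.swap q) (fun r => M p r)]
  simp

lemma matFlip_conj_kron {d : ℕ} (X Y : Matrix (Fin d) (Fin d) ℂ) :
    matFlip d * (X ⊗ₖ Y) * matFlip d = Y ⊗ₖ X := by
  rw [matFlip_mul, mul_matFlip]
  ext p q
  simp [Matrix.kroneckerMap_apply, mul_comm]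

lemma matFlip_conj_one {d : ℕ} :
    matFlip d * (1 : Matrix (Fin d × Fin d) (Fin d × Fin d) ℂ) * matFlip d = 1 := by
  have := matFlip_conj_kron (d := d) 1 1
  rwa [Matrix.one_kronecker_one] at this

lemma dual_symm {L : Type*} [LieRing L] [LieAlgebra ℂ L]
    {ι : Type*} [Fintype ι] [DecidableEq ι] (Xb : Module.Basis ι ℂ L) (Xd : ι → L)
    (hdual : ∀ A B : ι, killingForm ℂ L (Xb A) (Xd B) = if A = B then 1 else 0)
    {M : Type*} [AddCommMonoid M] [Module ℂ M]
    (φ : L →ₗ[ℂ] L →ₗ[ℂ] M) :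
    ∑ A : ι, φ (Xd A) (Xb A) = ∑ A : ι, φ (Xb A) (Xd A) := by
  classical
  set c : Matrix ι ι ℂ := Matrix.of fun A B => Xb.repr (Xd A) B with hc
  have hXd : ∀ A, Xd A = ∑ B, c A B • Xb B := by
    intro A
    simpa [hc] using (Xb.sum_repr (Xd A)).symm
  set G : Matrix ι ι ℂ := Matrix.of fun A B => killingForm ℂ L (Xb A) (Xb B) with hG
  have hGsymm : G.transpose = G := by
    ext A B
    exact LieModule.traceForm_comm ℂ L L (Xb B) (Xb A)
  have h1 : G * c.transpose = 1 := by
    ext A B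
    rw [Matrix.mul_apply]
    have : killingForm ℂ L (Xb A) (Xd B) = ∑ j, G A j * c B j := by
      rw [hXd B, map_sum]
      refine Finset.sum_congr rfl fun j _ => ?_
      rw [_root_.map_smul]
      simp [hG, hc, mul_comm]
    simp only [Matrix.transpose_apply, Matrix.one_apply]
    rw [← this, hdual]
  have hct : c.transpose = G⁻¹ := Matrix.inv_eq_right_inv h1 |>.symm
  have hcsymm : ∀ A B, c A B = c B A := by
    intro A B
    have h2 : (c.transpose).transpose = c.transpose := by
      rw [hct, Matrix.transpose_nonsing_inv, hGsymm]
    calc c A B = (c.transpose).transpose A B := rfl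
      _ = c.transpose A B := by rw [h2]
      _ = c B A := rfl
  calc ∑ A : ι, φ (Xd A) (Xb A)
      = ∑ A : ι, ∑ B : ι, c A B • φ (Xb B) (Xb A) := by
        refine Finset.sum_congr rfl fun A _ => ?_
        rw [hXd A, map_sum, LinearMap.sum_apply]
        refine Finset.sum_congr rfl fun B _ => ?_
        rw [_root_.map_smul]; rfl
    _ = ∑ B : ι, ∑ A : ι, c A B • φ (Xb B) (Xb A) := Finset.sum_comm
    _ = ∑ A : ι, ∑ B : ι, c B A • φ (Xb A) (Xb B) := rfl
    _ = ∑ A : ι, ∑ B : ι, c A B • φ (Xb A) (Xb B) := by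
        simp_rw [fun A B => hcsymm A B]
    _ = ∑ A : ι, φ (Xb A) (Xd A) := by
        refine Finset.sum_congr rfl fun A _ => ?_
        rw [hXd A, map_sum]
        refine Finset.sum_congr rfl fun B _ => ?_
        rw [_root_.map_smul]

lemma tendsto_matrix_iff {α m n : Type*} {l : Filter α} (f : α → Matrix m n ℂ)
    (M : Matrix m n ℂ) :
    Tendsto f l (𝓝 M) ↔ ∀ p q, Tendsto (fun x => f x p q) l (𝓝 (M p q)) := by
  exact tendsto_pi_nhds.trans (forall_congr' fun p => tendsto_pi_nhds)

lemma asymp_smul_tendsto {m : Type*} (f : ℂ → Matrix m m ℂ) (g : ℝ → ℝ)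
    (h : AsympO f g) (φ : ℝ → ℂ) (hφ : Tendsto (fun t => ‖φ t‖) atTop atTop)
    (hg : Tendsto (fun t => t * g ‖φ t‖) atTop (𝓝 0)) :
    Tendsto (fun t : ℝ => (t : ℂ) • f (φ t)) atTop (𝓝 0) := by
  obtain ⟨c, r, hcr⟩ := h
  rw [tendsto_matrix_iff]
  intro p q
  apply squeeze_zero_norm' (a := fun t => c * (t * g ‖φ t‖))
  · filter_upwards [hφ.eventually_ge_atTop r, eventually_ge_atTop (0:ℝ)] with t h1 h2
    have : ‖((t:ℂ) • f (φ t)) p q‖ = |t| * ‖f (φ t) p q‖ := by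
      simp [Matrix.smul_apply, norm_smul, Complex.norm_real]
    rw [this, abs_of_nonneg h2]
    calc t * ‖f (φ t) p q‖ ≤ t * (c * g ‖φ t‖) :=
          mul_le_mul_of_nonneg_left (hcr (φ t) h1 p q) h2
      _ = c * (t * g ‖φ t‖) := by ring
  · simpa using hg.const_mul c

lemma scaledR {m : Type*} [Fintype m] [DecidableEq m] (R : ℂ → Matrix m m ℂ)
    (Cm : Matrix m m ℂ)
    (h : AsympO (fun u => R u - 1 - u⁻¹ • Cm) fun t => (t ^ 2)⁻¹) (φ : ℝ → ℂ) (α : ℂ)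
    (hφ : Tendsto (fun t => ‖φ t‖) atTop atTop)
    (hα : Tendsto (fun t : ℝ => (t : ℂ) * (φ t)⁻¹) atTop (𝓝 α))
    (hg : Tendsto (fun t : ℝ => t * (‖φ t‖ ^ 2)⁻¹) atTop (𝓝 0)) :
    Tendsto (fun t : ℝ => (t : ℂ) • (R (φ t) - 1)) atTop (𝓝 (α • Cm)) := by
  have h1 := asymp_smul_tendsto _ _ h φ hφ hg
  have h2 : Tendsto (fun t : ℝ => ((t:ℂ) * (φ t)⁻¹) • Cm) atTop (𝓝 (α • Cm)) :=
    hα.smul_const Cm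
  have key : ∀ t : ℝ, (t:ℂ) • (R (φ t) - 1)
      = (t:ℂ) • (R (φ t) - 1 - (φ t)⁻¹ • Cm) + ((t:ℂ) * (φ t)⁻¹) • Cm := by
    intro t
    rw [mul_smul, ← smul_add, sub_add_cancel]
  rw [show (α • Cm) = 0 + α • Cm by simp]
  exact Tendsto.congr (fun t => (key t).symm) (h1.add h2)

lemma unscale {n : Type*} {f : ℝ → Matrix n n ℂ} {L M : Matrix n n ℂ}
    (h : Tendsto (fun t : ℝ => (t : ℂ) • (f t - L)) atTop (𝓝 M)) :
    Tendsto f atTop (𝓝 L) := by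
  have hinv : Tendsto (fun t : ℝ => ((t : ℂ))⁻¹) atTop (𝓝 0) := by
    have := (Complex.continuous_ofReal.tendsto 0).comp tendsto_inv_atTop_zero
    simpa using this.congr fun t => (Complex.ofReal_inv t)
  have h2 := hinv.smul h
  rw [zero_smul] at h2
  have h3 : Tendsto (fun t => f t - L) atTop (𝓝 0) := by
    refine h2.congr' ?_
    filter_upwards [eventually_ge_atTop (1:ℝ)] with t ht
    have : (t:ℂ) ≠ 0 := by
      simpa using ne_of_gt (by linarith : (0:ℝ) < t)
    rw [smul_smul, inv_mul_cancel₀ this, one_smul]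
  have h4 : Tendsto (fun t => f t - L + L) atTop (𝓝 (0 + L)) := h3.add tendsto_const_nhds
  simpa using h4

lemma tendsto_scaled_prod4 {n : Type*} [Fintype n] [DecidableEq n]
    {A B C D : ℝ → Matrix n n ℂ} {A₀ B₀ C₀ D₀ A₁ B₁ C₁ D₁ : Matrix n n ℂ}
    (hA : Tendsto (fun t : ℝ => (t:ℂ) • (A t - A₀)) atTop (𝓝 A₁))
    (hB : Tendsto (fun t : ℝ => (t:ℂ) • (B t - B₀)) atTop (𝓝 B₁))
    (hC : Tendsto (fun t : ℝ => (t:ℂ) • (C t - C₀)) atTop (𝓝 C₁))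
    (hD : Tendsto (fun t : ℝ => (t:ℂ) • (D t - D₀)) atTop (𝓝 D₁)) :
    Tendsto (fun t : ℝ => (t:ℂ) • (A t * B t * C t * D t - A₀ * B₀ * C₀ * D₀)) atTop
      (𝓝 (A₁ * B₀ * C₀ * D₀ + A₀ * B₁ * C₀ * D₀ + A₀ * B₀ * C₁ * D₀ + A₀ * B₀ * C₀ * D₁)) := by
  have hA' := unscale hA
  have hB' := unscale hB
  have hC' := unscale hC
  have hD' := unscale hD
  have key : ∀ t : ℝ, (t:ℂ) • (A t * B t * C t * D t - A₀ * B₀ * C₀ * D₀)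
      = ((t:ℂ) • (A t - A₀)) * (B t * (C t * D t))
        + A₀ * (((t:ℂ) • (B t - B₀)) * (C t * D t))
        + A₀ * (B₀ * (((t:ℂ) • (C t - C₀)) * D t))
        + A₀ * (B₀ * (C₀ * ((t:ℂ) • (D t - D₀)))) := by
    intro t
    simp only [smul_mul_assoc, mul_smul_comm, ← smul_add]
    congr 1
    noncomm_ring
  have cA : Tendsto (fun _ : ℝ => A₀) atTop (𝓝 A₀) := tendsto_const_nhds
  have cB : Tendsto (fun _ : ℝ => B₀) atTop (𝓝 B₀) := tendsto_const_nhds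
  have cC : Tendsto (fun _ : ℝ => C₀) atTop (𝓝 C₀) := tendsto_const_nhds
  have T :=
    (((hA.mul (hB'.mul (hC'.mul hD'))).add
      (cA.mul (hB.mul (hC'.mul hD')))).add
      (cA.mul (cB.mul (hC.mul hD')))).add
      (cA.mul (cB.mul (cC.mul hD)))
  have T' := T.congr fun t => (key t).symm
  convert T' using 1
  congr 1
  noncomm_ring

lemma kron_right_tendsto {d : ℕ} {f : ℝ → Matrix (Fin d) (Fin d) ℂ}
    {M N : Matrix (Fin d) (Fin d) ℂ} (h : Tendsto f atTop (𝓝 M)) :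
    Tendsto (fun t => f t ⊗ₖ N) atTop (𝓝 (M ⊗ₖ N)) := by
  rw [tendsto_matrix_iff] at h ⊢
  intro p q
  simpa [Matrix.kroneckerMap_apply] using (h p.1 q.1).mul_const (N p.2 q.2)

lemma kron_left_tendsto {d : ℕ} {f : ℝ → Matrix (Fin d) (Fin d) ℂ}
    {M N : Matrix (Fin d) (Fin d) ℂ} (h : Tendsto f atTop (𝓝 M)) :
    Tendsto (fun t => N ⊗ₖ f t) atTop (𝓝 (N ⊗ₖ M)) := by
  rw [tendsto_matrix_iff] at h ⊢
  intro p q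
  simpa [Matrix.kroneckerMap_apply] using (h p.2 q.2).const_mul (N p.1 q.1)

lemma smul_sub_kron {d : ℕ} (t : ℂ) (X Y N : Matrix (Fin d) (Fin d) ℂ) :
    (t • (X - Y)) ⊗ₖ N = t • (X ⊗ₖ N - Y ⊗ₖ N) := by
  ext p q
  simp [Matrix.kroneckerMap_apply, Matrix.sub_apply, Matrix.smul_apply]
  ring

lemma kron_smul_sub {d : ℕ} (t : ℂ) (X Y N : Matrix (Fin d) (Fin d) ℂ) :
    N ⊗ₖ (t • (X - Y)) = t • (N ⊗ₖ X - N ⊗ₖ Y) := by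
  ext p q
  simp [Matrix.kroneckerMap_apply, Matrix.sub_apply, Matrix.smul_apply]
  ring

end Aux
/-- if `R^{(ij)}` and `K` satisfy the boundary Yang–Baxter equation and the
quasi-classical asymptotics with invertible leading term `κ`, then `κ` satisfies the two
classical boundary Yang–Baxter constraints. -/
theorem stmt_1 {L : Type*} [LieRing L] [LieAlgebra ℂ L] [FiniteDimensional ℂ L]
    [LieAlgebra.IsSimple ℂ L]
    (hB : LinearMap.BilinForm.Nondegenerate (killingForm ℂ L))
    {d : ℕ} (ρ : Fin 2 → L →ₗ⁅ℂ⁆ Matrix (Fin d) (Fin d) ℂ)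
    (hρ : ∀ i, Function.Injective (ρ i))
    {ι : Type*} [Fintype ι] [DecidableEq ι] (Xb : Module.Basis ι ℂ L) (Xd : ι → L)
    (hdual : ∀ A B : ι, killingForm ℂ L (Xb A) (Xd B) = if A = B then 1 else 0)
    (C : Fin 2 → Fin 2 → Matrix (Fin d × Fin d) (Fin d × Fin d) ℂ)
    (hC : ∀ i j, C i j = ∑ A : ι, (ρ i) (Xb A) ⊗ₖ (ρ j) (Xd A))
    (R : Fin 2 → Fin 2 → ℂ → Matrix (Fin d × Fin d) (Fin d × Fin d) ℂ)
    (K : ℂ → Matrix (Fin d) (Fin d) ℂ)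
    (κ : Matrix (Fin d) (Fin d) ℂ) (hκ : IsUnit κ)
    (hRasymp : ∀ i j, AsympO (fun u => R i j u - 1 - u⁻¹ • C i j) (fun t => (t ^ 2)⁻¹))
    (hKasymp : AsympO (fun u => K u - κ) (fun t => t⁻¹))
    (hbYBE : ∀ u v : ℂ,
      R 0 0 (u - v) * (K u ⊗ₖ (1 : Matrix (Fin d) (Fin d) ℂ)) *
          (matFlip d * R 0 1 (u + v) * matFlip d) * ((1 : Matrix (Fin d) (Fin d) ℂ) ⊗ₖ K v) =
        ((1 : Matrix (Fin d) (Fin d) ℂ) ⊗ₖ K v) * R 0 1 (u + v) *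
          (K u ⊗ₖ (1 : Matrix (Fin d) (Fin d) ℂ)) * (matFlip d * R 1 1 (u - v) * matFlip d)) :
    C 0 0 * (κ ⊗ₖ κ) = (κ ⊗ₖ κ) * C 1 1 ∧
      (κ ⊗ₖ (1 : Matrix (Fin d) (Fin d) ℂ)) * C 1 0 * ((1 : Matrix (Fin d) (Fin d) ℂ) ⊗ₖ κ) =
        ((1 : Matrix (Fin d) (Fin d) ℂ) ⊗ₖ κ) * C 0 1 * (κ ⊗ₖ (1 : Matrix (Fin d) (Fin d) ℂ)) := by
  classical
  -- flip conjugation of the Casimir-type tensors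
  have hflipC : ∀ i j : Fin 2, matFlip d * C i j * matFlip d = C j i := by
    intro i j
    rw [hC i j, hC j i, Matrix.mul_sum, Matrix.sum_mul]
    have step1 : ∀ A : ι, matFlip d * ((ρ i) (Xb A) ⊗ₖ (ρ j) (Xd A)) * matFlip d
        = (ρ j) (Xd A) ⊗ₖ (ρ i) (Xb A) := fun A => matFlip_conj_kron _ _
    rw [Finset.sum_congr rfl fun A _ => step1 A]
    let φk : L →ₗ[ℂ] L →ₗ[ℂ] Matrix (Fin d × Fin d) (Fin d × Fin d) ℂ :=
      LinearMap.mk₂ ℂ (fun x y => ((ρ j) x) ⊗ₖ ((ρ i) y))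
        (fun m₁ m₂ n => by simp [map_add, Matrix.add_kronecker])
        (fun c m n => by simp [map_smul, Matrix.smul_kronecker])
        (fun m n₁ n₂ => by simp [map_add, Matrix.kronecker_add])
        (fun c m n => by simp [map_smul, Matrix.kronecker_smul])
    have := dual_symm Xb Xd hdual φk
    simpa [φk] using this
  -- the paths
  set u : ℝ → ℂ := fun t => (((t^2 + t)/2 : ℝ) : ℂ) with hu_def
  set v1 : ℝ → ℂ := fun t => (((t^2 - t)/2 : ℝ) : ℂ) with hv1_def
  set v2 : ℝ → ℂ := fun t => (((t - t^2)/2 : ℝ) : ℂ) with hv2_def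
  have e1 : ∀ t : ℝ, u t - v1 t = ((t : ℝ) : ℂ) := by
    intro t; simp only [hu_def, hv1_def]; push_cast; ring
  have e2 : ∀ t : ℝ, u t + v1 t = ((t^2 : ℝ) : ℂ) := by
    intro t; simp only [hu_def, hv1_def]; push_cast; ring
  have e3 : ∀ t : ℝ, u t - v2 t = ((t^2 : ℝ) : ℂ) := by
    intro t; simp only [hu_def, hv2_def]; push_cast; ring
  have e4 : ∀ t : ℝ, u t + v2 t = ((t : ℝ) : ℂ) := by
    intro t; simp only [hu_def, hv2_def]; push_cast; ring
  have normCast : ∀ x : ℝ, ‖((x : ℝ) : ℂ)‖ = |x| := fun x => by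
    simp [Complex.norm_real]
  have hinvC : Tendsto (fun t : ℝ => ((t : ℂ))⁻¹) atTop (𝓝 0) := by
    have := (Complex.continuous_ofReal.tendsto 0).comp tendsto_inv_atTop_zero
    simpa using this.congr fun t => (Complex.ofReal_inv t)
  -- scalar limit facts
  have F1 : Tendsto (fun t : ℝ => ‖((t : ℝ) : ℂ)‖) atTop atTop := by
    refine tendsto_atTop_mono' atTop ?_ tendsto_id
    filter_upwards [eventually_ge_atTop (0:ℝ)] with t ht
    rw [normCast, abs_of_nonneg ht]
    exact le_rfl
  have F2 : Tendsto (fun t : ℝ => (t : ℂ) * (((t : ℝ) : ℂ))⁻¹) atTop (𝓝 1) := by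
    refine Tendsto.congr' ?_ tendsto_const_nhds
    filter_upwards [eventually_ge_atTop (1:ℝ)] with t ht
    have h0 : (t:ℂ) ≠ 0 := by
      simpa using ne_of_gt (by linarith : (0:ℝ) < t)
    exact (mul_inv_cancel₀ h0).symm
  have F3 : Tendsto (fun t : ℝ => t * (‖((t : ℝ) : ℂ)‖ ^ 2)⁻¹) atTop (𝓝 0) := by
    refine Tendsto.congr' ?_ tendsto_inv_atTop_zero
    filter_upwards [eventually_ge_atTop (1:ℝ)] with t ht
    have h0 : t ≠ 0 := ne_of_gt (by linarith)
    rw [normCast, abs_of_nonneg (by linarith), sq, mul_inv, ← mul_assoc,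
      mul_inv_cancel₀ h0, one_mul]
  have F4 : Tendsto (fun t : ℝ => ‖((t^2 : ℝ) : ℂ)‖) atTop atTop := by
    refine tendsto_atTop_mono' atTop ?_ tendsto_id
    filter_upwards [eventually_ge_atTop (1:ℝ)] with t ht
    simp only [id_eq]
    rw [normCast, abs_of_nonneg (by positivity)]
    nlinarith
  have F5 : Tendsto (fun t : ℝ => (t : ℂ) * (((t^2 : ℝ) : ℂ))⁻¹) atTop (𝓝 0) := by
    refine Tendsto.congr' ?_ hinvC
    filter_upwards [eventually_ge_atTop (1:ℝ)] with t ht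
    have h0 : (t:ℂ) ≠ 0 := by
      simpa using ne_of_gt (by linarith : (0:ℝ) < t)
    push_cast
    rw [sq, mul_inv, ← mul_assoc, mul_inv_cancel₀ h0, one_mul]
  have F6 : Tendsto (fun t : ℝ => t * (‖((t^2 : ℝ) : ℂ)‖ ^ 2)⁻¹) atTop (𝓝 0) := by
    refine squeeze_zero' ?_ ?_ tendsto_inv_atTop_zero
    · filter_upwards [eventually_ge_atTop (0:ℝ)] with t ht
      positivity
    · filter_upwards [eventually_ge_atTop (1:ℝ)] with t ht
      have h0 : t ≠ 0 := ne_of_gt (by linarith)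
      rw [normCast, abs_of_nonneg (by positivity)]
      have key : t * ((t^2)^2)⁻¹ = (t^3)⁻¹ := by
        field_simp
      rw [key]
      have h1 : t ≤ t^3 := by nlinarith
      exact inv_anti₀ (by linarith) h1
  -- facts about u
  have hu_norm : ∀ t : ℝ, 1 ≤ t → ‖u t‖ = (t^2 + t)/2 := by
    intro t ht
    rw [hu_def]
    rw [normCast]
    exact abs_of_nonneg (by nlinarith)
  have F7 : Tendsto (fun t : ℝ => ‖u t‖) atTop atTop := by
    refine tendsto_atTop_mono' atTop ?_ tendsto_id
    filter_upwards [eventually_ge_atTop (1:ℝ)] with t ht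
    simp only [id_eq]
    rw [hu_norm t ht]
    nlinarith
  have F8 : Tendsto (fun t : ℝ => t * (‖u t‖)⁻¹) atTop (𝓝 0) := by
    refine squeeze_zero' ?_ ?_ (by simpa using tendsto_inv_atTop_zero.const_mul (2:ℝ))
    · filter_upwards [eventually_ge_atTop (0:ℝ)] with t ht
      exact mul_nonneg ht (inv_nonneg.mpr (norm_nonneg _))
    · filter_upwards [eventually_ge_atTop (1:ℝ)] with t ht
      have h0 : t ≠ 0 := ne_of_gt (by linarith)
      have h1 : t^2/2 ≤ ‖u t‖ := by rw [hu_norm t ht]; nlinarith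
      have h2 : (‖u t‖)⁻¹ ≤ (t^2/2)⁻¹ := inv_anti₀ (by nlinarith) h1
      calc t * (‖u t‖)⁻¹ ≤ t * (t^2/2)⁻¹ :=
            mul_le_mul_of_nonneg_left h2 (by linarith)
        _ = 2 * t⁻¹ := by field_simp
  -- facts about v1, v2
  have hv1_norm : ∀ t : ℝ, 1 ≤ t → ‖v1 t‖ = (t^2 - t)/2 := by
    intro t ht
    rw [hv1_def, normCast]
    exact abs_of_nonneg (by nlinarith)
  have hv2v1 : ∀ t : ℝ, ‖v2 t‖ = ‖v1 t‖ := by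
    intro t
    have : v2 t = -(v1 t) := by
      rw [hv1_def, hv2_def]; push_cast; ring
    rw [this, norm_neg]
  have F9 : Tendsto (fun t : ℝ => ‖v1 t‖) atTop atTop := by
    refine tendsto_atTop_mono' atTop ?_ tendsto_id
    filter_upwards [eventually_ge_atTop (4:ℝ)] with t ht
    simp only [id_eq]
    rw [hv1_norm t (by linarith)]
    nlinarith
  have F10 : Tendsto (fun t : ℝ => t * (‖v1 t‖)⁻¹) atTop (𝓝 0) := by
    refine squeeze_zero' ?_ ?_ (by simpa using tendsto_inv_atTop_zero.const_mul (4:ℝ))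
    · filter_upwards [eventually_ge_atTop (0:ℝ)] with t ht
      exact mul_nonneg ht (inv_nonneg.mpr (norm_nonneg _))
    · filter_upwards [eventually_ge_atTop (4:ℝ)] with t ht
      have h0 : t ≠ 0 := ne_of_gt (by linarith)
      have h1 : t^2/4 ≤ ‖v1 t‖ := by rw [hv1_norm t (by linarith)]; nlinarith
      have h2 : (‖v1 t‖)⁻¹ ≤ (t^2/4)⁻¹ := inv_anti₀ (by nlinarith) h1
      calc t * (‖v1 t‖)⁻¹ ≤ t * (t^2/4)⁻¹ :=
            mul_le_mul_of_nonneg_left h2 (by linarith)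
        _ = 4 * t⁻¹ := by field_simp
  have F9' : Tendsto (fun t : ℝ => ‖v2 t‖) atTop atTop :=
    F9.congr fun t => (hv2v1 t).symm
  have F10' : Tendsto (fun t : ℝ => t * (‖v2 t‖)⁻¹) atTop (𝓝 0) :=
    F10.congr fun t => by rw [hv2v1 t]
  -- conjugation transfers limits
  have hPP : matFlip d * matFlip d = 1 := by
    have := matFlip_conj_one (d := d)
    rwa [mul_one] at this
  have conjT : ∀ (g : ℝ → Matrix (Fin d × Fin d) (Fin d × Fin d) ℂ)
      (Mlim : Matrix (Fin d × Fin d) (Fin d × Fin d) ℂ),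
      Tendsto (fun t : ℝ => (t:ℂ) • (g t - 1)) atTop (𝓝 Mlim) →
      Tendsto (fun t : ℝ => (t:ℂ) • (matFlip d * g t * matFlip d - 1)) atTop
        (𝓝 (matFlip d * Mlim * matFlip d)) := by
    intro g Mlim hg
    have h2 : Tendsto (fun t : ℝ => matFlip d * ((t:ℂ) • (g t - 1)) * matFlip d) atTop
        (𝓝 (matFlip d * Mlim * matFlip d)) :=
      (tendsto_const_nhds.mul hg).mul tendsto_const_nhds
    refine h2.congr fun t => ?_
    rw [mul_smul_comm, smul_mul_assoc]
    congr 1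
    rw [mul_sub, mul_one, sub_mul, hPP]
  -- scaled limits for the R factors
  have tR00a : Tendsto (fun t : ℝ => (t:ℂ) • (R 0 0 (u t - v1 t) - 1)) atTop
      (𝓝 ((1:ℂ) • C 0 0)) := by
    refine scaledR _ _ (hRasymp 0 0) _ 1 ?_ ?_ ?_ <;> simp only [e1]
    exacts [F1, F2, F3]
  have tR11a : Tendsto (fun t : ℝ => (t:ℂ) • (R 1 1 (u t - v1 t) - 1)) atTop
      (𝓝 ((1:ℂ) • C 1 1)) := by
    refine scaledR _ _ (hRasymp 1 1) _ 1 ?_ ?_ ?_ <;> simp only [e1]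
    exacts [F1, F2, F3]
  have tR01a : Tendsto (fun t : ℝ => (t:ℂ) • (R 0 1 (u t + v1 t) - 1)) atTop
      (𝓝 ((0:ℂ) • C 0 1)) := by
    refine scaledR _ _ (hRasymp 0 1) _ 0 ?_ ?_ ?_ <;> simp only [e2]
    exacts [F4, F5, F6]
  have tR00b : Tendsto (fun t : ℝ => (t:ℂ) • (R 0 0 (u t - v2 t) - 1)) atTop
      (𝓝 ((0:ℂ) • C 0 0)) := by
    refine scaledR _ _ (hRasymp 0 0) _ 0 ?_ ?_ ?_ <;> simp only [e3]
    exacts [F4, F5, F6]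
  have tR11b : Tendsto (fun t : ℝ => (t:ℂ) • (R 1 1 (u t - v2 t) - 1)) atTop
      (𝓝 ((0:ℂ) • C 1 1)) := by
    refine scaledR _ _ (hRasymp 1 1) _ 0 ?_ ?_ ?_ <;> simp only [e3]
    exacts [F4, F5, F6]
  have tR01b : Tendsto (fun t : ℝ => (t:ℂ) • (R 0 1 (u t + v2 t) - 1)) atTop
      (𝓝 ((1:ℂ) • C 0 1)) := by
    refine scaledR _ _ (hRasymp 0 1) _ 1 ?_ ?_ ?_ <;> simp only [e4]
    exacts [F1, F2, F3]
  -- scaled limits for the K factors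
  have tKu : Tendsto (fun t : ℝ => (t:ℂ) • (K (u t) - κ)) atTop (𝓝 0) :=
    asymp_smul_tendsto _ _ hKasymp u F7 F8
  have tKv1 : Tendsto (fun t : ℝ => (t:ℂ) • (K (v1 t) - κ)) atTop (𝓝 0) :=
    asymp_smul_tendsto _ _ hKasymp v1 F9 F10
  have tKv2 : Tendsto (fun t : ℝ => (t:ℂ) • (K (v2 t) - κ)) atTop (𝓝 0) :=
    asymp_smul_tendsto _ _ hKasymp v2 F9' F10'
  have tKu1 : Tendsto (fun t : ℝ => (t:ℂ) • (K (u t) ⊗ₖ (1 : Matrix (Fin d) (Fin d) ℂ)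
      - κ ⊗ₖ (1 : Matrix (Fin d) (Fin d) ℂ))) atTop (𝓝 0) := by
    have h := kron_right_tendsto (N := (1 : Matrix (Fin d) (Fin d) ℂ)) tKu
    rw [Matrix.zero_kronecker] at h
    exact h.congr fun t => smul_sub_kron _ _ _ _
  have t1Kv1 : Tendsto (fun t : ℝ => (t:ℂ) • ((1 : Matrix (Fin d) (Fin d) ℂ) ⊗ₖ K (v1 t)
      - (1 : Matrix (Fin d) (Fin d) ℂ) ⊗ₖ κ)) atTop (𝓝 0) := by
    have h := kron_left_tendsto (N := (1 : Matrix (Fin d) (Fin d) ℂ)) tKv1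
    rw [Matrix.kronecker_zero] at h
    exact h.congr fun t => kron_smul_sub _ _ _ _
  have t1Kv2 : Tendsto (fun t : ℝ => (t:ℂ) • ((1 : Matrix (Fin d) (Fin d) ℂ) ⊗ₖ K (v2 t)
      - (1 : Matrix (Fin d) (Fin d) ℂ) ⊗ₖ κ)) atTop (𝓝 0) := by
    have h := kron_left_tendsto (N := (1 : Matrix (Fin d) (Fin d) ℂ)) tKv2
    rw [Matrix.kronecker_zero] at h
    exact h.congr fun t => kron_smul_sub _ _ _ _
  -- kronecker product collapses
  have eK1 : (κ ⊗ₖ (1 : Matrix (Fin d) (Fin d) ℂ)) * ((1 : Matrix (Fin d) (Fin d) ℂ) ⊗ₖ κ)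
      = κ ⊗ₖ κ := by
    rw [← Matrix.mul_kronecker_mul, mul_one, one_mul]
  have eK2 : ((1 : Matrix (Fin d) (Fin d) ℂ) ⊗ₖ κ) * (κ ⊗ₖ (1 : Matrix (Fin d) (Fin d) ℂ))
      = κ ⊗ₖ κ := by
    rw [← Matrix.mul_kronecker_mul, mul_one, one_mul]
  -- CASE 1
  constructor
  · have TL := tendsto_scaled_prod4 tR00a tKu1 (conjT _ _ tR01a) t1Kv1
    have TR := tendsto_scaled_prod4 t1Kv1 tR01a tKu1 (conjT _ _ tR11a)
    have TZ := TL.sub TR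
    have hcc : (1 : Matrix (Fin d × Fin d) (Fin d × Fin d) ℂ)
          * (κ ⊗ₖ (1 : Matrix (Fin d) (Fin d) ℂ)) * 1 * ((1 : Matrix (Fin d) (Fin d) ℂ) ⊗ₖ κ)
        = ((1 : Matrix (Fin d) (Fin d) ℂ) ⊗ₖ κ) * 1
          * (κ ⊗ₖ (1 : Matrix (Fin d) (Fin d) ℂ)) * 1 := by
      simp only [one_mul, mul_one]
      rw [eK1, eK2]
    have TZ' := TZ.congr (f₂ := fun _ : ℝ => (0 : Matrix (Fin d × Fin d) (Fin d × Fin d) ℂ))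
      fun t => by
        rw [← smul_sub, hbYBE (u t) (v1 t), hcc, sub_self, smul_zero]
    have hlim := tendsto_nhds_unique TZ' tendsto_const_nhds
    have heq := sub_eq_zero.mp hlim
    simp only [one_smul, zero_smul, mul_zero, zero_mul, add_zero, zero_add,
      mul_one, one_mul] at heq
    rw [hflipC 1 1] at heq
    rw [mul_assoc, eK1, eK2] at heq
    exact heq
  · have TL := tendsto_scaled_prod4 tR00b tKu1 (conjT _ _ tR01b) t1Kv2
    have TR := tendsto_scaled_prod4 t1Kv2 tR01b tKu1 (conjT _ _ tR11b)
    have TZ := TL.sub TR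
    have hcc : (1 : Matrix (Fin d × Fin d) (Fin d × Fin d) ℂ)
          * (κ ⊗ₖ (1 : Matrix (Fin d) (Fin d) ℂ)) * 1 * ((1 : Matrix (Fin d) (Fin d) ℂ) ⊗ₖ κ)
        = ((1 : Matrix (Fin d) (Fin d) ℂ) ⊗ₖ κ) * 1
          * (κ ⊗ₖ (1 : Matrix (Fin d) (Fin d) ℂ)) * 1 := by
      simp only [one_mul, mul_one]
      rw [eK1, eK2]
    have TZ' := TZ.congr (f₂ := fun _ : ℝ => (0 : Matrix (Fin d × Fin d) (Fin d × Fin d) ℂ))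
      fun t => by
        rw [← smul_sub, hbYBE (u t) (v2 t), hcc, sub_self, smul_zero]
    have hlim := tendsto_nhds_unique TZ' tendsto_const_nhds
    have heq := sub_eq_zero.mp hlim
    simp only [one_smul, zero_smul, mul_zero, zero_mul, add_zero, zero_add,
      mul_one, one_mul] at heq
    rw [hflipC 0 1] at heq
    exact heq
end

section
/- Suppose κ ∈ End(ℂ^d) is invertible and satisfies C^{(11)}·(κ⊗κ) = (κ⊗κ)·C^{(22)}. Then for every X ∈ 𝔤 one has κ·ρ⁽²⁾(X)·κ⁻¹ ∈ ρ⁽¹⁾(𝔤); consequently the map Ad_κ : Y ↦ κYκ⁻¹ restricts to a linear bijection from ρ⁽²⁾(𝔤) onto ρ⁽¹⁾(𝔤). -/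
open Kronecker

attribute [local instance 100] LieRing.ofAssociativeRing

/-- Partial trace over the second tensor factor. -/
noncomputable def ptr2 {d : ℕ} (M : Matrix (Fin d × Fin d) (Fin d × Fin d) ℂ) :
    Matrix (Fin d) (Fin d) ℂ :=
  Matrix.of fun i j => ∑ k, M (i, k) (j, k)

lemma ptr2_kron {d : ℕ} (A B : Matrix (Fin d) (Fin d) ℂ) :
    ptr2 (A ⊗ₖ B) = B.trace • A := by
  ext i j
  simp [ptr2, Matrix.trace, Matrix.diag, ← Finset.mul_sum, mul_comm]

lemma ptr2_sum {d : ℕ} {ι : Type*} (s : Finset ι)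
    (f : ι → Matrix (Fin d × Fin d) (Fin d × Fin d) ℂ) :
    ptr2 (∑ a ∈ s, f a) = ∑ a ∈ s, ptr2 (f a) := by
  ext i j
  simp only [ptr2, Matrix.of_apply, Matrix.sum_apply]
  exact Finset.sum_comm

/-- Key step: the intertwining relation for the split Casimirs forces
`κ ρ₂(X) κ⁻¹` to lie in the image of `ρ₁`. -/
lemma key_step {L : Type*} [LieRing L] [LieAlgebra ℂ L]
    {d : ℕ} (ρ₁ ρ₂ : L →ₗ⁅ℂ⁆ Matrix (Fin d) (Fin d) ℂ)
    (c₂ : ℂ) (hc₂ : c₂ ≠ 0)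
    (htr₂ : ∀ X Y : L, Matrix.trace (ρ₂ X * ρ₂ Y) = c₂ * killingForm ℂ L X Y)
    {ι : Type*} [Fintype ι] [DecidableEq ι] (Xb : Module.Basis ι ℂ L) (Xd : ι → L)
    (hdual : ∀ A B : ι, killingForm ℂ L (Xb A) (Xd B) = if A = B then 1 else 0)
    (κ : Matrix (Fin d) (Fin d) ℂ) (hκ : IsUnit κ.det)
    (hcb : (∑ A : ι, ρ₁ (Xb A) ⊗ₖ ρ₁ (Xd A)) * (κ ⊗ₖ κ) =
        (κ ⊗ₖ κ) * (∑ A : ι, ρ₂ (Xb A) ⊗ₖ ρ₂ (Xd A))) :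
    ∀ X : L, ∃ Y : L, ρ₁ Y = κ * ρ₂ X * κ⁻¹ := by
  intro X
  have hκr : κ * κ⁻¹ = 1 := Matrix.mul_nonsing_inv κ hκ
  have hκl : κ⁻¹ * κ = 1 := Matrix.nonsing_inv_mul κ hκ
  -- reconstruction from the dual basis
  have hrec : ∑ A : ι, (killingForm ℂ L (Xd A) X) • Xb A = X := by
    have hXA : ∀ A : ι, killingForm ℂ L (Xd A) X = Xb.repr X A := by
      intro A
      conv_lhs => rw [← Module.Basis.sum_repr Xb X]
      rw [map_sum]
      have h1 : ∀ B : ι, (killingForm ℂ L (Xd A)) ((Xb.repr X B) • Xb B)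
          = (Xb.repr X B) * killingForm ℂ L (Xd A) (Xb B) := by
        intro B; rw [map_smul]; rfl
      rw [Finset.sum_congr rfl fun B _ => h1 B]
      have h2 : ∀ B : ι, killingForm ℂ L (Xd A) (Xb B) = if B = A then 1 else 0 := by
        intro B
        rw [LieModule.traceForm_comm]
        exact hdual B A
      simp [h2]
    simp_rw [hXA]
    exact Module.Basis.sum_repr Xb X
  set m : Matrix (Fin d) (Fin d) ℂ := ρ₂ X * κ⁻¹ with hm
  -- multiply the intertwining relation on the right by `1 ⊗ m`
  have e1 : ∀ A : ι, (ρ₁ (Xb A) * κ) ⊗ₖ (ρ₁ (Xd A) * (κ * m))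
      = ((ρ₁ (Xb A) ⊗ₖ ρ₁ (Xd A)) * (κ ⊗ₖ κ)) * ((1 : Matrix (Fin d) (Fin d) ℂ) ⊗ₖ m) := by
    intro A
    rw [mul_assoc, ← Matrix.mul_kronecker_mul, ← Matrix.mul_kronecker_mul, mul_one]
  have e2 : ∀ A : ι, (κ * ρ₂ (Xb A)) ⊗ₖ (κ * (ρ₂ (Xd A) * m))
      = (κ ⊗ₖ κ) * ((ρ₂ (Xb A) ⊗ₖ ρ₂ (Xd A)) * ((1 : Matrix (Fin d) (Fin d) ℂ) ⊗ₖ m)) := by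
    intro A
    rw [← Matrix.mul_kronecker_mul, ← Matrix.mul_kronecker_mul, mul_one]
  have h1 : (∑ A : ι, (ρ₁ (Xb A) * κ) ⊗ₖ (ρ₁ (Xd A) * (κ * m)))
      = ∑ A : ι, (κ * ρ₂ (Xb A)) ⊗ₖ (κ * (ρ₂ (Xd A) * m)) := by
    simp_rw [e1, e2]
    rw [← Finset.sum_mul, ← Finset.sum_mul, hcb, ← Finset.mul_sum, ← Finset.sum_mul,
      mul_assoc]
  -- take the partial trace over the second factor
  have h2 := congrArg ptr2 h1
  rw [ptr2_sum, ptr2_sum] at h2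
  simp_rw [ptr2_kron] at h2
  -- simplify the traces on the right-hand side
  have htrR : ∀ A : ι, (κ * (ρ₂ (Xd A) * m)).trace
      = c₂ * killingForm ℂ L (Xd A) X := by
    intro A
    rw [Matrix.trace_mul_comm, hm, mul_assoc, mul_assoc, hκl, mul_one, ← htr₂]
  simp_rw [htrR] at h2
  -- right-hand side is `c₂ • (κ * ρ₂ X)`
  have hρsum : ρ₂ X = ∑ A : ι, (killingForm ℂ L (Xd A) X) • ρ₂ (Xb A) := by
    conv_lhs => rw [← hrec]
    rw [← LieHom.coe_toLinearMap, map_sum]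
    simp only [map_smul, LieHom.coe_toLinearMap]
  have hRHS : ∑ A : ι, (c₂ * killingForm ℂ L (Xd A) X) • (κ * ρ₂ (Xb A))
      = c₂ • (κ * ρ₂ X) := by
    rw [hρsum, Finset.mul_sum, Finset.smul_sum]
    refine Finset.sum_congr rfl fun A _ => ?_
    rw [mul_smul_comm, smul_smul]
  rw [hRHS] at h2
  -- multiply on the right by κ⁻¹
  have h3 : ∑ A : ι, ((ρ₁ (Xd A) * (κ * m)).trace) • ρ₁ (Xb A)
      = c₂ • (κ * ρ₂ X * κ⁻¹) := by
    have h4 := congrArg (· * κ⁻¹) h2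
    simp only [Finset.sum_mul, smul_mul_assoc, mul_assoc, hκr, mul_one] at h4
    rw [mul_assoc]
    exact h4
  refine ⟨c₂⁻¹ • ∑ A : ι, ((ρ₁ (Xd A) * (κ * m)).trace) • Xb A, ?_⟩
  have h5 : ρ₁ (∑ A : ι, ((ρ₁ (Xd A) * (κ * m)).trace) • Xb A)
      = ∑ A : ι, ((ρ₁ (Xd A) * (κ * m)).trace) • ρ₁ (Xb A) := by
    rw [← LieHom.coe_toLinearMap, map_sum]
    simp only [map_smul, LieHom.coe_toLinearMap]
  rw [map_smul, h5, h3, smul_smul, inv_mul_cancel₀ hc₂, one_smul]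

/-- if `κ` is invertible and `C^{(11)}(κ⊗κ) = (κ⊗κ)C^{(22)}`, then
`κρ⁽²⁾(X)κ⁻¹ ∈ ρ⁽¹⁾(𝔤)` for all `X`, and `Ad_κ` restricts to a bijection from `ρ⁽²⁾(𝔤)`
onto `ρ⁽¹⁾(𝔤)`. -/
theorem stmt_2 {L : Type*} [LieRing L] [LieAlgebra ℂ L] [FiniteDimensional ℂ L]
    [LieAlgebra.IsSimple ℂ L]
    (hB : LinearMap.BilinForm.Nondegenerate (killingForm ℂ L))
    {d : ℕ} (ρ₁ ρ₂ : L →ₗ⁅ℂ⁆ Matrix (Fin d) (Fin d) ℂ)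
    (hρ₁ : Function.Injective ρ₁) (hρ₂ : Function.Injective ρ₂)
    (c₁ c₂ : ℂ) (hc₁ : c₁ ≠ 0) (hc₂ : c₂ ≠ 0)
    (htr₁ : ∀ X Y : L, Matrix.trace (ρ₁ X * ρ₁ Y) = c₁ * killingForm ℂ L X Y)
    (htr₂ : ∀ X Y : L, Matrix.trace (ρ₂ X * ρ₂ Y) = c₂ * killingForm ℂ L X Y)
    {ι : Type*} [Fintype ι] [DecidableEq ι] (Xb : Module.Basis ι ℂ L) (Xd : ι → L)
    (hdual : ∀ A B : ι, killingForm ℂ L (Xb A) (Xd B) = if A = B then 1 else 0)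
    (κ : Matrix (Fin d) (Fin d) ℂ) (hκ : IsUnit κ)
    (hcbYBE : (∑ A : ι, ρ₁ (Xb A) ⊗ₖ ρ₁ (Xd A)) * (κ ⊗ₖ κ) =
        (κ ⊗ₖ κ) * (∑ A : ι, ρ₂ (Xb A) ⊗ₖ ρ₂ (Xd A))) :
    (∀ X : L, ∃ Y : L, ρ₁ Y = κ * ρ₂ X * κ⁻¹) ∧
      Set.BijOn (fun M => κ * M * κ⁻¹) (Set.range ρ₂) (Set.range ρ₁) := by
  have hκd : IsUnit κ.det := (Matrix.isUnit_iff_isUnit_det κ).mp hκ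
  have hκr : κ * κ⁻¹ = 1 := Matrix.mul_nonsing_inv κ hκd
  have hκl : κ⁻¹ * κ = 1 := Matrix.nonsing_inv_mul κ hκd
  have hfwd : ∀ X : L, ∃ Y : L, ρ₁ Y = κ * ρ₂ X * κ⁻¹ :=
    key_step ρ₁ ρ₂ c₂ hc₂ htr₂ Xb Xd hdual κ hκd hcbYBE
  -- the reversed intertwining relation for κ⁻¹
  have hκdinv : IsUnit κ⁻¹.det := by
    rw [Matrix.det_nonsing_inv]
    exact isUnit_ringInverse.mpr hκd
  have hinvinv : κ⁻¹⁻¹ = κ := Matrix.nonsing_inv_nonsing_inv κ hκd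
  have hkinv : (κ⁻¹ ⊗ₖ κ⁻¹) * (κ ⊗ₖ κ) = 1 := by
    rw [← Matrix.mul_kronecker_mul, hκl, Matrix.one_kronecker_one]
  have hkinv' : (κ ⊗ₖ κ) * (κ⁻¹ ⊗ₖ κ⁻¹) = 1 := by
    rw [← Matrix.mul_kronecker_mul, hκr, Matrix.one_kronecker_one]
  have hcb' : (∑ A : ι, ρ₂ (Xb A) ⊗ₖ ρ₂ (Xd A)) * (κ⁻¹ ⊗ₖ κ⁻¹) =
      (κ⁻¹ ⊗ₖ κ⁻¹) * (∑ A : ι, ρ₁ (Xb A) ⊗ₖ ρ₁ (Xd A)) := by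
    have h := congrArg (fun M => (κ⁻¹ ⊗ₖ κ⁻¹) * M * (κ⁻¹ ⊗ₖ κ⁻¹)) hcbYBE
    simp only [← mul_assoc, hkinv, one_mul] at h
    rw [mul_assoc, mul_assoc, hkinv', mul_one] at h
    exact h.symm
  have hbwd : ∀ X : L, ∃ Y : L, ρ₂ Y = κ⁻¹ * ρ₁ X * κ :=
    fun X => by
      obtain ⟨Y, hY⟩ := key_step ρ₂ ρ₁ c₁ hc₁ htr₁ Xb Xd hdual κ⁻¹ hκdinv hcb' X
      exact ⟨Y, by rwa [hinvinv] at hY⟩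
  have cancel : ∀ M : Matrix (Fin d) (Fin d) ℂ, κ⁻¹ * (κ * M * κ⁻¹) * κ = M := by
    intro M
    simp only [← mul_assoc]
    rw [hκl, one_mul, mul_assoc, hκl, mul_one]
  have cancel' : ∀ M : Matrix (Fin d) (Fin d) ℂ, κ * (κ⁻¹ * M * κ) * κ⁻¹ = M := by
    intro M
    simp only [← mul_assoc]
    rw [hκr, one_mul, mul_assoc, hκr, mul_one]
  refine ⟨hfwd, ?_, ?_, ?_⟩
  · rintro M ⟨X, rfl⟩
    obtain ⟨Y, hY⟩ := hfwd X
    exact ⟨Y, hY⟩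
  · rintro M _ N _ h
    simp only at h
    have h2 := congrArg (fun P => κ⁻¹ * P * κ) h
    simpa only [cancel] using h2
  · rintro M ⟨X, rfl⟩
    obtain ⟨Y, hY⟩ := hbwd X
    refine ⟨ρ₂ Y, ⟨Y, rfl⟩, ?_⟩
    simp only [hY, cancel']
end

section
/- Suppose κ ∈ End(ℂ^d) is invertible and satisfies C^{(11)}·(κ⊗κ) = (κ⊗κ)·C^{(22)}. Then the map α := (ρ⁽¹⁾)⁻¹ ∘ Ad_κ ∘ ρ⁽²⁾ : 𝔤 → 𝔤 (well-defined since Ad_κ maps ρ⁽²⁾(𝔤) into ρ⁽¹⁾(𝔤) and ρ⁽¹⁾ is injective) is a linear bijection of 𝔤 that preserves the Killing form: B(α(X), α(Y)) = B(X, Y) for all X, Y ∈ 𝔤. -/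
open Kronecker

attribute [local instance 100] LieRing.ofAssociativeRing

/-- Partial trace over the second tensor factor of a sum of Kronecker products. -/
lemma ptrace_aux {d : ℕ} {ι : Type*} [Fintype ι]
    (M N : ι → Matrix (Fin d) (Fin d) ℂ) (i k : Fin d) :
    ∑ j : Fin d, (∑ A : ι, M A ⊗ₖ N A) (i, j) (k, j)
      = ∑ A : ι, M A i k * (N A).trace := by
  simp only [Matrix.sum_apply, Matrix.kroneckerMap_apply, Matrix.trace, Matrix.diag,
    Finset.mul_sum]
  exact Finset.sum_comm

lemma ksum_mul {d : ℕ} {ι : Type*} [Fintype ι]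
    (M N : ι → Matrix (Fin d) (Fin d) ℂ) (C D : Matrix (Fin d) (Fin d) ℂ) :
    (∑ A : ι, M A ⊗ₖ N A) * (C ⊗ₖ D) = ∑ A : ι, (M A * C) ⊗ₖ (N A * D) := by
  rw [Finset.sum_mul]
  simp [Matrix.mul_kronecker_mul]

/-- if `κ` is invertible and `C^{(11)}(κ⊗κ) = (κ⊗κ)C^{(22)}`, then the map
`α := (ρ⁽¹⁾)⁻¹ ∘ Ad_κ ∘ ρ⁽²⁾` is a well-defined linear bijection of `𝔤` preserving the
Killing form. -/
theorem stmt_3 {L : Type*} [LieRing L] [LieAlgebra ℂ L] [FiniteDimensional ℂ L]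
    [LieAlgebra.IsSimple ℂ L]
    (hB : LinearMap.BilinForm.Nondegenerate (killingForm ℂ L))
    {d : ℕ} (ρ₁ ρ₂ : L →ₗ⁅ℂ⁆ Matrix (Fin d) (Fin d) ℂ)
    (hρ₁ : Function.Injective ρ₁) (hρ₂ : Function.Injective ρ₂)
    (c₁ c₂ : ℂ) (hc₁ : c₁ ≠ 0) (hc₂ : c₂ ≠ 0)
    (htr₁ : ∀ X Y : L, Matrix.trace (ρ₁ X * ρ₁ Y) = c₁ * killingForm ℂ L X Y)
    (htr₂ : ∀ X Y : L, Matrix.trace (ρ₂ X * ρ₂ Y) = c₂ * killingForm ℂ L X Y)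
    {ι : Type*} [Fintype ι] [DecidableEq ι] (Xb : Module.Basis ι ℂ L) (Xd : ι → L)
    (hdual : ∀ A B : ι, killingForm ℂ L (Xb A) (Xd B) = if A = B then 1 else 0)
    (κ : Matrix (Fin d) (Fin d) ℂ) (hκ : IsUnit κ)
    (hcbYBE : (∑ A : ι, ρ₁ (Xb A) ⊗ₖ ρ₁ (Xd A)) * (κ ⊗ₖ κ) =
        (κ ⊗ₖ κ) * (∑ A : ι, ρ₂ (Xb A) ⊗ₖ ρ₂ (Xd A))) :
    ∃ α : L ≃ₗ[ℂ] L, (∀ X : L, ρ₁ (α X) = κ * ρ₂ X * κ⁻¹) ∧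
      (∀ X Y : L, killingForm ℂ L (α X) (α Y) = killingForm ℂ L X Y) := by
  have hdet : IsUnit κ.det := (Matrix.isUnit_iff_isUnit_det κ).mp hκ
  have hκκ : κ * κ⁻¹ = 1 := Matrix.mul_nonsing_inv κ hdet
  have hκκ' : κ⁻¹ * κ = 1 := Matrix.nonsing_inv_mul κ hdet
  -- coordinates w.r.t. dual basis
  have hrepr : ∀ (Z : L) (A : ι), killingForm ℂ L Z (Xd A) = Xb.repr Z A := by
    intro Z A
    conv_lhs => rw [← Xb.sum_repr Z]
    rw [map_sum]
    simp only [map_smul, LinearMap.sum_apply, LinearMap.smul_apply, hdual, smul_eq_mul,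
      mul_ite, mul_one, mul_zero]
    simp
  have hexp : ∀ Z : L, ∑ A : ι, (killingForm ℂ L (Xd A) Z) • Xb A = Z := by
    intro Z
    have : ∀ A : ι, killingForm ℂ L (Xd A) Z = Xb.repr Z A := fun A => by
      rw [LieModule.traceForm_comm]; exact hrepr Z A
    simp only [this]
    exact Xb.sum_repr Z
  -- the key existence statement
  have key : ∀ Y : L, ∃ Z : L, ρ₁ Z = κ * ρ₂ Y * κ⁻¹ := by
    intro Y
    -- rewrite the braiding relation as sums of Kronecker products
    have E1 : ∑ A : ι, (ρ₁ (Xb A) * κ) ⊗ₖ (ρ₁ (Xd A) * κ)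
        = ∑ A : ι, (κ * ρ₂ (Xb A)) ⊗ₖ (κ * ρ₂ (Xd A)) := by
      have h1 : (∑ A : ι, ρ₁ (Xb A) ⊗ₖ ρ₁ (Xd A)) * (κ ⊗ₖ κ)
          = ∑ A : ι, (ρ₁ (Xb A) * κ) ⊗ₖ (ρ₁ (Xd A) * κ) := ksum_mul _ _ _ _
      have h2 : (κ ⊗ₖ κ) * (∑ A : ι, ρ₂ (Xb A) ⊗ₖ ρ₂ (Xd A))
          = ∑ A : ι, (κ * ρ₂ (Xb A)) ⊗ₖ (κ * ρ₂ (Xd A)) := by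
        rw [Finset.mul_sum]
        simp [Matrix.mul_kronecker_mul]
      rw [← h1, ← h2, hcbYBE]
    have E2 : ∑ A : ι, (ρ₁ (Xb A)) ⊗ₖ (ρ₁ (Xd A) * (κ * (ρ₂ Y * κ⁻¹)))
        = ∑ A : ι, (κ * (ρ₂ (Xb A) * κ⁻¹)) ⊗ₖ (κ * (ρ₂ (Xd A) * (ρ₂ Y * κ⁻¹))) := by
      have := congrArg (· * (κ⁻¹ ⊗ₖ (ρ₂ Y * κ⁻¹))) E1
      simp only [ksum_mul] at this
      simpa only [mul_assoc, hκκ, mul_one] using this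
    -- take the partial trace over the second factor
    have E3 : ∀ i k : Fin d,
        ∑ A : ι, (ρ₁ (Xb A)) i k * (ρ₁ (Xd A) * (κ * (ρ₂ Y * κ⁻¹))).trace
          = ∑ A : ι, (κ * (ρ₂ (Xb A) * κ⁻¹)) i k
              * (κ * (ρ₂ (Xd A) * (ρ₂ Y * κ⁻¹))).trace := by
      intro i k
      rw [← ptrace_aux, ← ptrace_aux]
      exact Finset.sum_congr rfl fun j _ => by rw [E2]
    -- evaluate the traces on the right-hand side
    have htrR : ∀ A : ι, (κ * (ρ₂ (Xd A) * (ρ₂ Y * κ⁻¹))).trace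
        = c₂ * killingForm ℂ L (Xd A) Y := by
      intro A
      rw [Matrix.trace_mul_comm]
      have : ρ₂ (Xd A) * (ρ₂ Y * κ⁻¹) * κ = ρ₂ (Xd A) * ρ₂ Y := by
        simp [mul_assoc, hκκ']
      rw [this, htr₂]
    -- assemble the matrix identity
    set t : ι → ℂ := fun A => (ρ₁ (Xd A) * (κ * (ρ₂ Y * κ⁻¹))).trace with ht
    have hmap : ∀ (f : L →ₗ⁅ℂ⁆ Matrix (Fin d) (Fin d) ℂ) (v : ι → L),
        f (∑ A : ι, v A) = ∑ A : ι, f (v A) := fun f v =>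
      map_sum f.toLinearMap v Finset.univ
    have E4 : ρ₁ (∑ A : ι, t A • Xb A) = c₂ • (κ * (ρ₂ Y * κ⁻¹)) := by
      have lhs_eq : ρ₁ (∑ A : ι, t A • Xb A) = ∑ A : ι, t A • ρ₁ (Xb A) := by
        rw [hmap]; simp [map_smul]
      have rhs_eq : ∑ A : ι, (c₂ * killingForm ℂ L (Xd A) Y) • (κ * (ρ₂ (Xb A) * κ⁻¹))
          = c₂ • (κ * (ρ₂ Y * κ⁻¹)) := by
        have h5 : ∑ A : ι, (c₂ * killingForm ℂ L (Xd A) Y) • (κ * (ρ₂ (Xb A) * κ⁻¹))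
            = κ * (ρ₂ (∑ A : ι, (c₂ * killingForm ℂ L (Xd A) Y) • Xb A) * κ⁻¹) := by
          rw [hmap, Finset.sum_mul, Finset.mul_sum]
          refine Finset.sum_congr rfl fun A _ => ?_
          rw [map_smul]
          simp [smul_mul_assoc, mul_smul_comm]
        rw [h5]
        have h6 : ∑ A : ι, (c₂ * killingForm ℂ L (Xd A) Y) • Xb A = c₂ • Y := by
          calc ∑ A : ι, (c₂ * killingForm ℂ L (Xd A) Y) • Xb A
              = c₂ • ∑ A : ι, (killingForm ℂ L (Xd A) Y) • Xb A := by
                rw [Finset.smul_sum]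
                exact Finset.sum_congr rfl fun A _ => (smul_smul _ _ _).symm
            _ = c₂ • Y := by rw [hexp]
        rw [h6, map_smul]
        simp [mul_smul_comm, smul_mul_assoc]
      rw [lhs_eq, ← rhs_eq]
      ext i k
      simp only [Matrix.sum_apply, Matrix.smul_apply, smul_eq_mul]
      calc ∑ A : ι, t A * (ρ₁ (Xb A)) i k
          = ∑ A : ι, (ρ₁ (Xb A)) i k * t A := by
            exact Finset.sum_congr rfl fun A _ => mul_comm _ _
        _ = ∑ A : ι, (κ * (ρ₂ (Xb A) * κ⁻¹)) i k
              * (κ * (ρ₂ (Xd A) * (ρ₂ Y * κ⁻¹))).trace := E3 i k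
        _ = ∑ A : ι, (c₂ * killingForm ℂ L (Xd A) Y) * (κ * (ρ₂ (Xb A) * κ⁻¹)) i k := by
            refine Finset.sum_congr rfl fun A _ => ?_
            rw [htrR A, mul_comm]
    refine ⟨c₂⁻¹ • ∑ A : ι, t A • Xb A, ?_⟩
    rw [map_smul, E4, smul_smul, inv_mul_cancel₀ hc₂, one_smul, mul_assoc]
  choose g hg using key
  -- `g` is ℂ-linear and a Lie algebra morphism, by injectivity of `ρ₁`
  have hadd : ∀ X Y : L, g (X + Y) = g X + g Y := by
    intro X Y
    apply hρ₁
    rw [map_add, hg, hg, hg, map_add]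
    simp [add_mul, mul_add]
  have hsmul : ∀ (c : ℂ) (X : L), g (c • X) = c • g X := by
    intro c X
    apply hρ₁
    rw [map_smul, hg, hg, map_smul]
    simp [smul_mul_assoc, mul_smul_comm]
  have hlie : ∀ X Y : L, g ⁅X, Y⁆ = ⁅g X, g Y⁆ := by
    intro X Y
    apply hρ₁
    rw [LieHom.map_lie, hg, LieHom.map_lie, Ring.lie_def, Ring.lie_def, hg, hg]
    have : ∀ U V : Matrix (Fin d) (Fin d) ℂ,
        (κ * U * κ⁻¹) * (κ * V * κ⁻¹) = κ * (U * V) * κ⁻¹ := by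
      intro U V
      calc (κ * U * κ⁻¹) * (κ * V * κ⁻¹) = κ * U * (κ⁻¹ * κ) * V * κ⁻¹ := by
            simp [mul_assoc]
        _ = κ * (U * V) * κ⁻¹ := by rw [hκκ']; simp [mul_assoc]
    rw [Matrix.mul_sub, Matrix.sub_mul, this, this]
  let G : L →ₗ⁅ℂ⁆ L :=
    { toFun := g
      map_add' := hadd
      map_smul' := hsmul
      map_lie' := fun {X Y} => hlie X Y }
  have hGinj : Function.Injective G := by
    intro X Y h
    apply hρ₂
    have h1 : ρ₁ (g X) = ρ₁ (g Y) := by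
      show ρ₁ (G X) = ρ₁ (G Y); rw [h]
    rw [hg, hg] at h1
    have conj_cancel : ∀ U : Matrix (Fin d) (Fin d) ℂ, κ⁻¹ * (κ * U * κ⁻¹) * κ = U := by
      intro U
      simp only [← mul_assoc, hκκ', one_mul]
      simp only [mul_assoc, hκκ', mul_one]
    have h2 := congrArg (fun M => κ⁻¹ * M * κ) h1
    simpa only [conj_cancel] using h2
  have hGbij : Function.Bijective G :=
    ⟨hGinj, (LinearMap.injective_iff_surjective (f := (G : L →ₗ[ℂ] L))).mp hGinj⟩
  let e : L ≃ₗ⁅ℂ⁆ L := LieEquiv.ofBijective G hGbij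
  refine ⟨e.toLinearEquiv, fun X => ?_, fun X Y => ?_⟩
  · exact hg X
  · exact LieAlgebra.killingForm_of_equiv_apply e X Y
end

section
/- Suppose κ ∈ End(ℂ^d) is invertible and satisfies both C^{(11)}·(κ⊗κ) = (κ⊗κ)·C^{(22)} and (κ⊗1)·C^{(21)}·(1⊗κ) = (1⊗κ)·C^{(12)}·(κ⊗1). Then the linear map α := (ρ⁽¹⁾)⁻¹ ∘ Ad_κ ∘ ρ⁽²⁾ : 𝔤 → 𝔤 is self-adjoint with respect to the Killing form, B(α(X), Y) = B(X, α(Y)) for all X,Y ∈ 𝔤, and satisfies α ∘ α = id_𝔤. -/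
open Kronecker

attribute [local instance 100] LieRing.ofAssociativeRing

noncomputable def ptr {n : Type*} [Fintype n] (N : Matrix n n ℂ) :
    Matrix (n × n) (n × n) ℂ →ₗ[ℂ] Matrix n n ℂ where
  toFun M := Matrix.of fun i k => ∑ j, ∑ l, M (i, j) (k, l) * N l j
  map_add' P Q := by
    ext i k
    simp [add_mul, Finset.sum_add_distrib]
  map_smul' c M := by
    ext i k
    simp [Finset.mul_sum, mul_assoc]

lemma ptr_kron {n : Type*} [Fintype n] (N A B : Matrix n n ℂ) :
    ptr N (A ⊗ₖ B) = Matrix.trace (B * N) • A := by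
  ext i k
  simp only [ptr, LinearMap.coe_mk, AddHom.coe_mk, Matrix.of_apply,
    Matrix.smul_apply, Matrix.kroneckerMap_apply, smul_eq_mul]
  rw [Matrix.trace]
  simp only [Matrix.diag, Matrix.mul_apply]
  rw [Finset.sum_mul]
  refine Finset.sum_congr rfl fun j _ => ?_
  rw [Finset.sum_mul]
  refine Finset.sum_congr rfl fun l _ => ?_
  ring

/-- if `κ` is invertible and satisfies both classical bYBE constraints, then
the linear map `α := (ρ⁽¹⁾)⁻¹ ∘ Ad_κ ∘ ρ⁽²⁾` is self-adjoint for the Killing form and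
satisfies `α ∘ α = id`. -/
theorem stmt_4 {L : Type*} [LieRing L] [LieAlgebra ℂ L] [FiniteDimensional ℂ L]
    [LieAlgebra.IsSimple ℂ L]
    (hB : LinearMap.BilinForm.Nondegenerate (killingForm ℂ L))
    {d : ℕ} (ρ₁ ρ₂ : L →ₗ⁅ℂ⁆ Matrix (Fin d) (Fin d) ℂ)
    (hρ₁ : Function.Injective ρ₁) (hρ₂ : Function.Injective ρ₂)
    (c₁ c₂ : ℂ) (hc₁ : c₁ ≠ 0) (hc₂ : c₂ ≠ 0)
    (htr₁ : ∀ X Y : L, Matrix.trace (ρ₁ X * ρ₁ Y) = c₁ * killingForm ℂ L X Y)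
    (htr₂ : ∀ X Y : L, Matrix.trace (ρ₂ X * ρ₂ Y) = c₂ * killingForm ℂ L X Y)
    {ι : Type*} [Fintype ι] [DecidableEq ι] (Xb : Module.Basis ι ℂ L) (Xd : ι → L)
    (hdual : ∀ A B : ι, killingForm ℂ L (Xb A) (Xd B) = if A = B then 1 else 0)
    (κ : Matrix (Fin d) (Fin d) ℂ) (hκ : IsUnit κ)
    (hcbYBE₁ : (∑ A : ι, ρ₁ (Xb A) ⊗ₖ ρ₁ (Xd A)) * (κ ⊗ₖ κ) =
        (κ ⊗ₖ κ) * (∑ A : ι, ρ₂ (Xb A) ⊗ₖ ρ₂ (Xd A)))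
    (hcbYBE₂ : (κ ⊗ₖ (1 : Matrix (Fin d) (Fin d) ℂ)) *
          (∑ A : ι, ρ₂ (Xb A) ⊗ₖ ρ₁ (Xd A)) * ((1 : Matrix (Fin d) (Fin d) ℂ) ⊗ₖ κ) =
        ((1 : Matrix (Fin d) (Fin d) ℂ) ⊗ₖ κ) *
          (∑ A : ι, ρ₁ (Xb A) ⊗ₖ ρ₂ (Xd A)) * (κ ⊗ₖ (1 : Matrix (Fin d) (Fin d) ℂ))) :
    ∃ α : L →ₗ[ℂ] L, (∀ X : L, ρ₁ (α X) = κ * ρ₂ X * κ⁻¹) ∧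
      (∀ X Y : L, killingForm ℂ L (α X) Y = killingForm ℂ L X (α Y)) ∧
      (∀ X : L, α (α X) = X) := by
  classical
  have hκd : IsUnit κ.det := (Matrix.isUnit_iff_isUnit_det κ).mp hκ
  have hκκ : κ * κ⁻¹ = 1 := Matrix.mul_nonsing_inv κ hκd
  have hκκ' : κ⁻¹ * κ = 1 := Matrix.nonsing_inv_mul κ hκd
  have hcanc₁ : ∀ M : Matrix (Fin d) (Fin d) ℂ, κ⁻¹ * (κ * M) = M := fun M => by
    rw [← mul_assoc, hκκ', one_mul]
  have hcanc₂ : ∀ M : Matrix (Fin d) (Fin d) ℂ, κ * (κ⁻¹ * M) = M := fun M => by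
    rw [← mul_assoc, hκκ, one_mul]
  have hmapsum₁ : ∀ (f : ι → L), ρ₁ (∑ A : ι, f A) = ∑ A : ι, ρ₁ (f A) := by
    intro f
    exact map_sum ρ₁.toLinearMap f Finset.univ
  have hmapsum₂ : ∀ (f : ι → L), ρ₂ (∑ A : ι, f A) = ∑ A : ι, ρ₂ (f A) := by
    intro f
    exact map_sum ρ₂.toLinearMap f Finset.univ
  have hKsymm : ∀ x y : L, killingForm ℂ L x y = killingForm ℂ L y x := fun x y =>
    LieModule.traceForm_comm ℂ L L x y
  -- first expansion: Y = ∑ K (Xd A) Y • Xb A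
  have hrepr : ∀ (Y : L) (A : ι), killingForm ℂ L (Xd A) Y = Xb.repr Y A := by
    intro Y A
    rw [hKsymm]
    conv_lhs => rw [← Xb.sum_repr Y]
    simp [hdual, -Module.Basis.sum_repr]
  have hexp1 : ∀ Y : L, ∑ A : ι, killingForm ℂ L (Xd A) Y • Xb A = Y := by
    intro Y
    conv_rhs => rw [← Xb.sum_repr Y]
    exact Finset.sum_congr rfl fun A _ => by rw [hrepr]
  -- second expansion: Y = ∑ K (Xb A) Y • Xd A
  have hexp2 : ∀ Y : L, ∑ A : ι, killingForm ℂ L (Xb A) Y • Xd A = Y := by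
    intro Y
    have hXbD : ∀ C, killingForm ℂ L (Xb C)
        ((∑ A : ι, killingForm ℂ L (Xb A) Y • Xd A) - Y) = 0 := by
      intro C
      simp [hdual, Finset.sum_ite_eq, mul_comm]
    have hz : ∀ Z, killingForm ℂ L Z
        ((∑ A : ι, killingForm ℂ L (Xb A) Y • Xd A) - Y) = 0 := by
      intro Z
      conv_lhs => rw [← Xb.sum_repr Z]
      simp only [map_sum, map_smul, LinearMap.sum_apply, LinearMap.smul_apply, hXbD,
        smul_eq_mul, mul_zero, Finset.sum_const_zero]
    have := hB.1 _ (fun n => by rw [hKsymm]; exact hz n)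
    exact sub_eq_zero.mp this
  -- trace helper
  have tr2 : ∀ Z W : L, Matrix.trace (κ * (ρ₂ Z * (ρ₂ W * κ⁻¹))) = c₂ * killingForm ℂ L Z W := by
    intro Z W
    have h1 : κ * (ρ₂ Z * (ρ₂ W * κ⁻¹)) = κ * (ρ₂ Z * ρ₂ W) * κ⁻¹ := by
      simp [mul_assoc]
    rw [h1, Matrix.trace_mul_cycle, ← mul_assoc, hκκ', one_mul, htr₂]
  -- step 1: rewrite bYBE₁ as sum of Kronecker products
  have hC1 : ∑ A : ι, (ρ₁ (Xb A) * κ) ⊗ₖ (ρ₁ (Xd A) * κ) =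
      ∑ A : ι, (κ * ρ₂ (Xb A)) ⊗ₖ (κ * ρ₂ (Xd A)) := by
    have h := hcbYBE₁
    rw [Finset.sum_mul, Finset.mul_sum] at h
    simpa only [← Matrix.mul_kronecker_mul] using h
  -- key identity for defining α
  have key1 : ∀ Y : L, ∑ A : ι,
      Matrix.trace (ρ₁ (Xd A) * (κ * (ρ₂ Y * κ⁻¹))) • ρ₁ (Xb A) = c₂ • (κ * (ρ₂ Y * κ⁻¹)) := by
    intro Y
    have h := congrArg (ptr (ρ₂ Y * κ⁻¹)) hC1
    rw [map_sum, map_sum] at h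
    simp only [ptr_kron] at h
    -- h : ∑ Tr(ρ₁(Xd A)*κ*(ρ₂Y*κ⁻¹)) • (ρ₁(Xb A)*κ) = ∑ Tr(κ*ρ₂(Xd A)*(ρ₂Y*κ⁻¹)) • (κ*ρ₂(Xb A))
    have hrhs : ∑ A : ι, Matrix.trace (κ * ρ₂ (Xd A) * (ρ₂ Y * κ⁻¹)) • (κ * ρ₂ (Xb A)) =
        c₂ • ((κ * ρ₂ Y) * κ⁻¹) * κ := by
      rw [Matrix.smul_mul, mul_assoc, hκκ', mul_one]
      conv_rhs => rw [← hexp1 Y, hmapsum₂]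
      rw [Finset.mul_sum, Finset.smul_sum]
      refine Finset.sum_congr rfl fun A _ => ?_
      rw [mul_assoc, tr2, map_smul, mul_smul_comm, smul_smul]
    have hlhs : ∑ A : ι, Matrix.trace (ρ₁ (Xd A) * κ * (ρ₂ Y * κ⁻¹)) • (ρ₁ (Xb A) * κ) =
        (∑ A : ι, Matrix.trace (ρ₁ (Xd A) * (κ * (ρ₂ Y * κ⁻¹))) • ρ₁ (Xb A)) * κ := by
      rw [Finset.sum_mul]
      refine Finset.sum_congr rfl fun A _ => ?_
      rw [Matrix.smul_mul, mul_assoc]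
    rw [hlhs, hrhs] at h
    have h2 := congrArg (fun M => M * κ⁻¹) h
    simp only [mul_assoc, hκκ, mul_one] at h2
    simpa only [mul_assoc] using h2
  -- define α
  set α : L →ₗ[ℂ] L :=
    { toFun := fun Y => c₂⁻¹ • ∑ A : ι, Matrix.trace (ρ₁ (Xd A) * (κ * (ρ₂ Y * κ⁻¹))) • Xb A
      map_add' := by
        intro x y
        simp only [map_add, add_mul, mul_add, Matrix.trace_add, add_smul,
          Finset.sum_add_distrib, smul_add]
      map_smul' := by
        intro c x
        simp only [map_smul, RingHom.id_apply, smul_mul_assoc, mul_smul_comm,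
          Matrix.trace_smul, smul_eq_mul, smul_smul, Finset.smul_sum]
        refine congrArg _ (funext fun A => ?_)
        congr 1
        ring } with hαdef
  have hα : ∀ X : L, ρ₁ (α X) = κ * ρ₂ X * κ⁻¹ := by
    intro X
    have : α X = c₂⁻¹ • ∑ A : ι, Matrix.trace (ρ₁ (Xd A) * (κ * (ρ₂ X * κ⁻¹))) • Xb A := rfl
    rw [this, map_smul, hmapsum₁]
    simp only [map_smul]
    rw [key1 X, smul_smul, inv_mul_cancel₀ hc₂, one_smul, mul_assoc]
  -- step 2: rewrite bYBE₂ as sum of Kronecker products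
  have hC2 : ∑ A : ι, (κ * ρ₂ (Xb A)) ⊗ₖ (ρ₁ (Xd A) * κ) =
      ∑ A : ι, (ρ₁ (Xb A) * κ) ⊗ₖ (κ * ρ₂ (Xd A)) := by
    have h := hcbYBE₂
    rw [Finset.mul_sum, Finset.sum_mul, Finset.mul_sum, Finset.sum_mul] at h
    simpa only [← Matrix.mul_kronecker_mul, mul_one, one_mul] using h
  -- sum helpers
  have sum1 : ∀ (Z : L) (M : Matrix (Fin d) (Fin d) ℂ),
      ∑ A : ι, killingForm ℂ L (Xb A) Z * Matrix.trace (ρ₁ (Xd A) * M) =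
        Matrix.trace (ρ₁ Z * M) := by
    intro Z M
    conv_rhs => rw [← hexp2 Z, hmapsum₁, Finset.sum_mul, Matrix.trace_sum]
    refine Finset.sum_congr rfl fun A _ => ?_
    rw [map_smul, Matrix.smul_mul, Matrix.trace_smul, smul_eq_mul]
  have sum2 : ∀ (Z : L) (M : Matrix (Fin d) (Fin d) ℂ),
      ∑ A : ι, killingForm ℂ L (Xd A) Z * Matrix.trace (ρ₁ (Xb A) * M) =
        Matrix.trace (ρ₁ Z * M) := by
    intro Z M
    conv_rhs => rw [← hexp1 Z, hmapsum₁, Finset.sum_mul, Matrix.trace_sum]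
    refine Finset.sum_congr rfl fun A _ => ?_
    rw [map_smul, Matrix.smul_mul, Matrix.trace_smul, smul_eq_mul]
  -- key symmetry identity
  have key2 : ∀ X Y : L, Matrix.trace (ρ₁ X * (κ * (ρ₂ Y * κ⁻¹))) =
      Matrix.trace (ρ₁ Y * (κ * (ρ₂ X * κ⁻¹))) := by
    intro X Y
    have h := congrArg (fun M => Matrix.trace (M * ((ρ₂ X * κ⁻¹) ⊗ₖ (ρ₂ Y * κ⁻¹)))) hC2
    simp only [Finset.sum_mul, Matrix.trace_sum, ← Matrix.mul_kronecker_mul,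
      Matrix.trace_kronecker] at h
    -- h : ∑ Tr(κ*ρ₂(Xb A)*(ρ₂X*κ⁻¹)) * Tr(ρ₁(Xd A)*κ*(ρ₂Y*κ⁻¹)) =
    --     ∑ Tr(ρ₁(Xb A)*κ*(ρ₂X*κ⁻¹)) * Tr(κ*ρ₂(Xd A)*(ρ₂Y*κ⁻¹))
    have hL : ∑ A : ι, Matrix.trace (κ * ρ₂ (Xb A) * (ρ₂ X * κ⁻¹)) *
        Matrix.trace (ρ₁ (Xd A) * κ * (ρ₂ Y * κ⁻¹)) =
        c₂ * Matrix.trace (ρ₁ X * (κ * (ρ₂ Y * κ⁻¹))) := by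
      rw [← sum1 X (κ * (ρ₂ Y * κ⁻¹)), Finset.mul_sum]
      refine Finset.sum_congr rfl fun A _ => ?_
      rw [mul_assoc κ, tr2, mul_assoc (ρ₁ (Xd A))]
      ring
    have hR : ∑ A : ι, Matrix.trace (ρ₁ (Xb A) * κ * (ρ₂ X * κ⁻¹)) *
        Matrix.trace (κ * ρ₂ (Xd A) * (ρ₂ Y * κ⁻¹)) =
        c₂ * Matrix.trace (ρ₁ Y * (κ * (ρ₂ X * κ⁻¹))) := by
      rw [← sum2 Y (κ * (ρ₂ X * κ⁻¹)), Finset.mul_sum]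
      refine Finset.sum_congr rfl fun A _ => ?_
      rw [mul_assoc κ, tr2, mul_assoc (ρ₁ (Xb A))]
      ring
    rw [hL, hR] at h
    exact mul_left_cancel₀ hc₂ h
  -- self-adjointness
  have hsa : ∀ X Y : L, killingForm ℂ L (α X) Y = killingForm ℂ L X (α Y) := by
    intro X Y
    apply mul_left_cancel₀ hc₁
    rw [← htr₁ (α X) Y, ← htr₁ X (α Y), hα X, hα Y, Matrix.trace_mul_comm]
    simpa only [mul_assoc] using key2 Y X
  -- α is a Lie algebra morphism
  have hbr : ∀ X Y : L, α ⁅X, Y⁆ = ⁅α X, α Y⁆ := by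
    intro X Y
    apply hρ₁
    rw [hα ⁅X, Y⁆, LieHom.map_lie, LieHom.map_lie, hα X, hα Y]
    simp only [Ring.lie_def, mul_sub, sub_mul, mul_assoc, hcanc₁]
  -- α is injective, hence bijective
  have hinj : Function.Injective α := by
    intro x y hxy
    apply hρ₂
    have h : κ * ρ₂ x * κ⁻¹ = κ * ρ₂ y * κ⁻¹ := by rw [← hα x, ← hα y, hxy]
    have h2 := congrArg (fun M => κ⁻¹ * M * κ) h
    simpa only [mul_assoc, hκκ', mul_one, hcanc₁] using h2
  have hbij : Function.Bijective α := ⟨hinj, (LinearMap.injective_iff_surjective).mp hinj⟩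
  -- build a Lie algebra equivalence
  let αh : L →ₗ⁅ℂ⁆ L := { α with map_lie' := fun {x y} => hbr x y }
  let e : L ≃ₗ⁅ℂ⁆ L := LieEquiv.ofBijective αh hbij
  have hinv : ∀ X Y : L, killingForm ℂ L (α X) (α Y) = killingForm ℂ L X Y := by
    intro X Y
    have he : ∀ Z : L, e Z = α Z := fun Z => rfl
    rw [← he X, ← he Y]
    exact LieAlgebra.killingForm_of_equiv_apply e X Y
  -- conclude the involution
  have hsq : ∀ X : L, α (α X) = X := by
    intro X
    have key : ∀ Z : L, killingForm ℂ L Z (α (α X) - X) = 0 := by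
      intro Z
      rw [map_sub]
      rw [← hsa Z (α X), hinv Z X]
      simp
    have := hB.1 _ (fun n => by rw [hKsymm]; exact key n)
    exact sub_eq_zero.mp this
  exact ⟨α, hα, hsa, hsq⟩
end

section
/- Suppose the maps R^{(ij)} : ℂ → End(ℂ^d⊗ℂ^d) and K : ℂ → End(ℂ^d) satisfy the boundary Yang–Baxter equation for all u,v ∈ ℂ and the quasi-classical asymptotics with invertible leading term κ. Then for every fixed u ∈ ℂ: Σ_A (K(u)·ρ⁽²⁾(X_A) − ρ⁽¹⁾(X_A)·K(u)) ⊗ (ρ⁽¹⁾(X^A) + κ·ρ⁽²⁾(X^A)·κ⁻¹) = 0 in End(ℂ^d ⊗ ℂ^d). -/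
open Kronecker

attribute [local instance 100] LieRing.ofAssociativeRing

open Filter Asymptotics

namespace Stmt6

variable {d : ℕ}

lemma matFlip_mul (Z : Matrix (Fin d × Fin d) (Fin d × Fin d) ℂ) :
    matFlip d * Z = Matrix.of fun p q => Z (p.2, p.1) q := by
  ext p q
  rw [Matrix.mul_apply]
  rw [Finset.sum_eq_single ((p.2, p.1) : Fin d × Fin d)]
  · simp [matFlip]
  · intro s _ hs
    have : ¬(p.1 = s.2 ∧ p.2 = s.1) := by
      rintro ⟨h1, h2⟩; exact hs (by ext <;> simp [← h1, ← h2])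
    simp [matFlip, this]
  · intro h; exact absurd (Finset.mem_univ _) h

lemma mul_matFlip (Z : Matrix (Fin d × Fin d) (Fin d × Fin d) ℂ) :
    Z * matFlip d = Matrix.of fun p q => Z p (q.2, q.1) := by
  ext p q
  rw [Matrix.mul_apply]
  rw [Finset.sum_eq_single ((q.2, q.1) : Fin d × Fin d)]
  · simp [matFlip]
  · intro s _ hs
    have : ¬(s.1 = q.2 ∧ s.2 = q.1) := by
      rintro ⟨h1, h2⟩; exact hs (by ext <;> simp [h1, h2])
    simp [matFlip, this]
  · intro h; exact absurd (Finset.mem_univ _) h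

lemma conj_apply (Z : Matrix (Fin d × Fin d) (Fin d × Fin d) ℂ) (p q) :
    (matFlip d * Z * matFlip d) p q = Z (p.2, p.1) (q.2, q.1) := by
  rw [mul_matFlip, matFlip_mul]; rfl

lemma conj_kron (X Y : Matrix (Fin d) (Fin d) ℂ) :
    matFlip d * (X ⊗ₖ Y) * matFlip d = Y ⊗ₖ X := by
  ext p q
  rw [conj_apply]
  simp [Matrix.kronecker_apply, mul_comm]

lemma conj_one : matFlip d * 1 * matFlip d = (1 : Matrix (Fin d × Fin d) (Fin d × Fin d) ℂ) := by
  ext p q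
  rw [conj_apply]
  simp [Matrix.one_apply, Prod.ext_iff, and_comm]



variable {L : Type*} [LieRing L] [LieAlgebra ℂ L] [FiniteDimensional ℂ L]
  {ι : Type*} [Fintype ι] [DecidableEq ι] {d : ℕ}

lemma killing_comm (x y : L) : killingForm ℂ L x y = killingForm ℂ L y x :=
  LieModule.traceForm_comm ℂ L L x y

lemma sum_kron {β : Type*} {s : Finset β} (f : β → Matrix (Fin d) (Fin d) ℂ)
    (N : Matrix (Fin d) (Fin d) ℂ) : (∑ b ∈ s, f b) ⊗ₖ N = ∑ b ∈ s, f b ⊗ₖ N := by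
  ext p q; simp [Matrix.kronecker_apply, Matrix.sum_apply, Finset.sum_mul]

lemma kron_sum {β : Type*} {s : Finset β} (f : β → Matrix (Fin d) (Fin d) ℂ)
    (N : Matrix (Fin d) (Fin d) ℂ) : N ⊗ₖ (∑ b ∈ s, f b) = ∑ b ∈ s, N ⊗ₖ f b := by
  ext p q; simp [Matrix.kronecker_apply, Matrix.sum_apply, Finset.mul_sum]

lemma repr_symm (Xb : Module.Basis ι ℂ L) (Xd : ι → L)
    (hdual : ∀ A B : ι, killingForm ℂ L (Xb A) (Xd B) = if A = B then 1 else 0)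
    (A B : ι) : Xb.repr (Xd A) B = Xb.repr (Xd B) A := by
  have key : ∀ A B : ι, killingForm ℂ L (Xd B) (Xd A) = Xb.repr (Xd A) B := by
    intro A B
    conv_lhs => rw [← Xb.sum_repr (Xd A)]
    rw [map_sum]
    simp only [map_smul, smul_eq_mul]
    rw [Finset.sum_eq_single B]
    · rw [killing_comm (Xd B) (Xb B), hdual B B]; simp
    · intro C _ hC
      rw [killing_comm (Xd B) (Xb C), hdual C B, if_neg hC, mul_zero]
    · intro h; exact absurd (Finset.mem_univ _) h
  rw [← key A B, ← key B A, killing_comm]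

lemma casimir_symm (Xb : Module.Basis ι ℂ L) (Xd : ι → L)
    (hdual : ∀ A B : ι, killingForm ℂ L (Xb A) (Xd B) = if A = B then 1 else 0)
    (Φ Ψ : L →ₗ⁅ℂ⁆ Matrix (Fin d) (Fin d) ℂ) :
    ∑ A : ι, Φ (Xd A) ⊗ₖ Ψ (Xb A) = ∑ A : ι, Φ (Xb A) ⊗ₖ Ψ (Xd A) := by
  have hL : ∀ A : ι, Φ (Xd A) = ∑ B : ι, Xb.repr (Xd A) B • Φ (Xb B) := by
    intro A
    conv_lhs => rw [← Xb.sum_repr (Xd A)]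
    rw [← LieHom.coe_toLinearMap, map_sum]; simp
  have hR : ∀ A : ι, Ψ (Xd A) = ∑ B : ι, Xb.repr (Xd A) B • Ψ (Xb B) := by
    intro A
    conv_lhs => rw [← Xb.sum_repr (Xd A)]
    rw [← LieHom.coe_toLinearMap, map_sum]; simp
  calc ∑ A : ι, Φ (Xd A) ⊗ₖ Ψ (Xb A)
      = ∑ A : ι, ∑ B : ι, Xb.repr (Xd A) B • (Φ (Xb B) ⊗ₖ Ψ (Xb A)) := by
        refine Finset.sum_congr rfl fun A _ => ?_
        rw [hL A, sum_kron]
        exact Finset.sum_congr rfl fun B _ => by rw [Matrix.smul_kronecker]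
    _ = ∑ A : ι, ∑ B : ι, Xb.repr (Xd B) A • (Φ (Xb B) ⊗ₖ Ψ (Xb A)) := by
        refine Finset.sum_congr rfl fun A _ => Finset.sum_congr rfl fun B _ => ?_
        rw [repr_symm Xb Xd hdual A B]
    _ = ∑ B : ι, ∑ A : ι, Xb.repr (Xd B) A • (Φ (Xb B) ⊗ₖ Ψ (Xb A)) := Finset.sum_comm
    _ = ∑ B : ι, Φ (Xb B) ⊗ₖ Ψ (Xd B) := by
        refine Finset.sum_congr rfl fun B _ => ?_
        rw [hR B, kron_sum]
        exact (Finset.sum_congr rfl fun A _ => by rw [Matrix.kronecker_smul]).symm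


attribute [local instance] Matrix.linftyOpNormedRing Matrix.linftyOpNormedAlgebra

variable {n : Type*} [Fintype n] [DecidableEq n]

lemma norm_le_sum (A : Matrix n n ℂ) : ‖A‖ ≤ ∑ p : n, ∑ q : n, ‖A p q‖ := by
  have h : ‖A‖₊ ≤ ∑ p : n, ∑ q : n, ‖A p q‖₊ := by
    rw [Matrix.linfty_opNNNorm_def]
    refine Finset.sup_le fun i _ => ?_
    exact Finset.single_le_sum (f := fun p => ∑ q : n, ‖A p q‖₊) (fun p _ => zero_le) (Finset.mem_univ i)
  have := NNReal.coe_le_coe.mpr h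
  push_cast at this
  exact this

lemma ev_half_sub (u : ℂ) : ∀ᶠ t : ℝ in atTop, t / 2 ≤ ‖u - (t : ℂ)‖ := by
  filter_upwards [eventually_ge_atTop (2 * ‖u‖), eventually_ge_atTop (0:ℝ)] with t h1 h2
  have : ‖(t:ℂ)‖ - ‖u‖ ≤ ‖(t:ℂ) - u‖ := norm_sub_norm_le _ _
  rw [norm_sub_rev] at this
  have ht : ‖(t:ℂ)‖ = t := by simp [Complex.norm_real, abs_of_nonneg h2]
  rw [ht] at this
  linarith

lemma ev_half_add (u : ℂ) : ∀ᶠ t : ℝ in atTop, t / 2 ≤ ‖u + (t : ℂ)‖ := by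
  filter_upwards [ev_half_sub (-u)] with t h
  have : -u - (t:ℂ) = -(u + t) := by ring
  rw [this, norm_neg] at h
  exact h

lemma ev_half_id : ∀ᶠ t : ℝ in atTop, t / 2 ≤ ‖(t : ℂ)‖ := by
  filter_upwards [eventually_ge_atTop (0:ℝ)] with t h2
  have ht : ‖(t:ℂ)‖ = t := by simp [abs_of_nonneg h2]
  rw [ht]; linarith

lemma asympO_isBigO {f : ℂ → Matrix n n ℂ} {k : ℕ}
    (hf : AsympO f (fun t => (t ^ k)⁻¹)) {φ : ℝ → ℂ}
    (hφ : ∀ᶠ t in atTop, t / 2 ≤ ‖φ t‖) :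
    (fun t : ℝ => f (φ t)) =O[atTop] fun t : ℝ => (t ^ k)⁻¹ := by
  obtain ⟨c, r, h⟩ := hf
  rw [isBigO_iff]
  refine ⟨(Fintype.card n)^2 * (max c 0) * 2 ^ k, ?_⟩
  filter_upwards [hφ, eventually_ge_atTop (max (2*r) 1)] with t hφt ht
  have ht1 : (1:ℝ) ≤ t := le_trans (le_max_right _ _) ht
  have htpos : (0:ℝ) < t := lt_of_lt_of_le one_pos ht1
  have hr : r ≤ ‖φ t‖ := by
    have h2r : 2*r ≤ t := le_trans (le_max_left _ _) ht
    linarith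
  have hφpos : 0 < ‖φ t‖ := lt_of_lt_of_le (by linarith) hφt
  have hentry : ∀ p q, ‖f (φ t) p q‖ ≤ (max c 0) * (‖φ t‖ ^ k)⁻¹ := by
    intro p q
    refine le_trans (h (φ t) hr p q) ?_
    have : (0:ℝ) ≤ (‖φ t‖ ^ k)⁻¹ := by positivity
    exact mul_le_mul_of_nonneg_right (le_max_left _ _) this
  have h1 : ‖f (φ t)‖ ≤ (Fintype.card n)^2 * ((max c 0) * (‖φ t‖ ^ k)⁻¹) := by
    refine le_trans (norm_le_sum _) ?_
    calc ∑ p : n, ∑ q : n, ‖f (φ t) p q‖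
        ≤ ∑ _p : n, ∑ _q : n, (max c 0) * (‖φ t‖ ^ k)⁻¹ :=
          Finset.sum_le_sum fun p _ => Finset.sum_le_sum fun q _ => hentry p q
      _ = (Fintype.card n)^2 * ((max c 0) * (‖φ t‖ ^ k)⁻¹) := by
          simp [Finset.sum_const, Finset.card_univ]; ring
  have h2 : (‖φ t‖ ^ k)⁻¹ ≤ 2 ^ k * (t ^ k)⁻¹ := by
    have hp : (t/2) ^ k ≤ ‖φ t‖ ^ k := pow_le_pow_left₀ (by positivity) hφt k
    have h3 : ((t/2) ^ k)⁻¹ = 2 ^ k * (t ^ k)⁻¹ := by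
      rw [div_pow]; rw [inv_div]; rw [div_eq_mul_inv]
    rw [← h3]
    exact inv_anti₀ (by positivity) hp
  have hnorm : ‖(t ^ k)⁻¹‖ = (t ^ k)⁻¹ := Real.norm_of_nonneg (by positivity)
  rw [hnorm]
  calc ‖f (φ t)‖ ≤ (Fintype.card n)^2 * ((max c 0) * (‖φ t‖ ^ k)⁻¹) := h1
    _ ≤ (Fintype.card n)^2 * ((max c 0) * (2 ^ k * (t ^ k)⁻¹)) := by
        have : (0:ℝ) ≤ max c 0 := le_max_right _ _
        have := mul_le_mul_of_nonneg_left h2 this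
        exact mul_le_mul_of_nonneg_left this (by positivity)
    _ = (Fintype.card n)^2 * (max c 0) * 2 ^ k * (t ^ k)⁻¹ := by ring

lemma inv_isBigO {φ : ℝ → ℂ} (hφ : ∀ᶠ t in atTop, t / 2 ≤ ‖φ t‖) :
    (fun t : ℝ => (φ t)⁻¹) =O[atTop] fun t : ℝ => t⁻¹ := by
  rw [isBigO_iff]
  refine ⟨2, ?_⟩
  filter_upwards [hφ, eventually_ge_atTop (1:ℝ)] with t hφt ht
  have htpos : (0:ℝ) < t := lt_of_lt_of_le one_pos ht
  have hφpos : 0 < ‖φ t‖ := lt_of_lt_of_le (by linarith) hφt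
  rw [norm_inv, Real.norm_of_nonneg (by positivity)]
  have h5 : ‖φ t‖⁻¹ ≤ (t/2)⁻¹ := inv_anti₀ (by linarith) hφt
  calc ‖φ t‖⁻¹ ≤ (t/2)⁻¹ := h5
    _ = 2 * t⁻¹ := by rw [inv_div]; ring


lemma E_eq (X1 Y1 Y1' Z1 Wt K0 W0 : Matrix n n ℂ)
    (hE : X1 * K0 * Y1' * Wt = Wt * (Y1 * K0 * Z1))
    (hc : Wt * K0 = K0 * Wt) (hc0 : W0 * K0 = K0 * W0) :
    X1 * K0 * Y1' * W0 - W0 * (Y1 * K0 * Z1)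
      = (Wt - W0) * (Y1 * K0 * Z1 - K0) - (X1 * K0 * Y1' - K0) * (Wt - W0) := by
  simp only [sub_mul, mul_sub, mul_one, one_mul]
  rw [hE, ← hc, ← hc0]
  abel

lemma expand_lemma (X1 Y1 Y1' Z1 CX CY CY' CZ K0 W0 : Matrix n n ℂ) (a b : ℂ)
    (hK0W0 : K0 * W0 = W0 * K0) :
    X1 * K0 * Y1' * W0 - W0 * (Y1 * K0 * Z1) - a • (CX * K0 * W0 - W0 * (K0 * CZ))
        - b • (K0 * CY' * W0 - W0 * (CY * K0))
      = ((X1 - 1 - a • CX) * (K0 * (Y1' * W0)) + a • (CX * (K0 * ((Y1' - 1) * W0)))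
          + K0 * ((Y1' - 1 - b • CY') * W0))
        - (W0 * ((Y1 - 1 - b • CY) * (K0 * Z1)) + b • (W0 * (CY * (K0 * (Z1 - 1))))
          + W0 * (K0 * (Z1 - 1 - a • CZ))) := by
  simp only [sub_mul, mul_sub, smul_mul_assoc, mul_smul_comm, smul_sub, smul_smul,
    mul_assoc, one_mul, mul_one]
  rw [hK0W0]
  abel


lemma g1_isBigO_one : (fun t : ℝ => t⁻¹) =O[atTop] fun _ : ℝ => (1 : ℝ) := by
  rw [isBigO_iff]
  refine ⟨1, ?_⟩
  filter_upwards [eventually_ge_atTop (1:ℝ)] with t ht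
  rw [Real.norm_of_nonneg (by positivity), norm_one, mul_one]
  exact inv_le_one_of_one_le₀ ht

lemma g2_isBigO_g1 : (fun t : ℝ => (t ^ 2)⁻¹) =O[atTop] fun t : ℝ => t⁻¹ := by
  rw [isBigO_iff]
  refine ⟨1, ?_⟩
  filter_upwards [eventually_ge_atTop (1:ℝ)] with t ht
  have h1 : (0:ℝ) < t := lt_of_lt_of_le one_pos ht
  rw [Real.norm_of_nonneg (by positivity), Real.norm_of_nonneg (by positivity), one_mul]
  rw [pow_two]
  rw [mul_inv]
  calc t⁻¹ * t⁻¹ ≤ 1 * t⁻¹ := by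
        have : t⁻¹ ≤ 1 := inv_le_one_of_one_le₀ ht
        exact mul_le_mul_of_nonneg_right this (by positivity)
    _ = t⁻¹ := one_mul _

lemma const_isBigO_one (M : Matrix n n ℂ) :
    (fun _ : ℝ => M) =O[atTop] fun _ : ℝ => (1 : ℝ) :=
  isBigO_const_const M one_ne_zero atTop

lemma tendsto_mul_inv_sub (u : ℂ) :
    Tendsto (fun t : ℝ => (t : ℂ) * (u - t)⁻¹) atTop (nhds (-1)) := by
  have hinv : Tendsto (fun t : ℝ => ((t : ℂ))⁻¹) atTop (nhds 0) := by
    have h0 : Tendsto (fun t : ℝ => t⁻¹) atTop (nhds (0:ℝ)) := tendsto_inv_atTop_zero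
    have := (Complex.continuous_ofReal.tendsto (0:ℝ)).comp h0
    refine Tendsto.congr (fun t => ?_) (by simpa using this)
    simp [Function.comp, Complex.ofReal_inv]
  have h1 : Tendsto (fun t : ℝ => u * ((t : ℂ))⁻¹ - 1) atTop (nhds (-1)) := by
    have := (hinv.const_mul u).sub_const 1
    simpa using this
  have h2 : Tendsto (fun t : ℝ => (u * ((t : ℂ))⁻¹ - 1)⁻¹) atTop (nhds (-1)) := by
    have h3 := h1.inv₀ (by norm_num : (-1 : ℂ) ≠ 0)
    have h4 : ((-1:ℂ))⁻¹ = -1 := by norm_num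
    rwa [h4] at h3
  refine h2.congr' ?_
  filter_upwards [eventually_ge_atTop (1:ℝ)] with t ht
  have ht0 : (t : ℂ) ≠ 0 := by
    simp only [ne_eq, Complex.ofReal_eq_zero]
    intro h; rw [h] at ht; linarith
  have : u * ((t:ℂ))⁻¹ - 1 = (u - t) * ((t:ℂ))⁻¹ := by
    field_simp
  rw [this, mul_inv_rev, inv_inv]

lemma tendsto_mul_inv_add (u : ℂ) :
    Tendsto (fun t : ℝ => (t : ℂ) * (u + t)⁻¹) atTop (nhds 1) := by
  have := tendsto_mul_inv_sub (-u)
  have heq : ∀ t : ℝ, (t:ℂ) * (-u - t)⁻¹ = -((t:ℂ) * (u + t)⁻¹) := by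
    intro t
    have : -u - (t:ℂ) = -(u + t) := by ring
    rw [this, inv_neg, mul_neg]
  rw [show (fun t : ℝ => (t:ℂ) * (-u - t)⁻¹) = fun t : ℝ => -((t:ℂ) * (u + t)⁻¹) from funext heq] at this
  have := this.neg
  simpa using this

lemma key (u : ℂ) (X Y Y' Z W : ℂ → Matrix n n ℂ)
    (CX CY CY' CZ K0 W0 : Matrix n n ℂ)
    (hX : AsympO (fun w => X w - 1 - w⁻¹ • CX) (fun t => (t ^ 2)⁻¹))
    (hY : AsympO (fun w => Y w - 1 - w⁻¹ • CY) (fun t => (t ^ 2)⁻¹))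
    (hY' : AsympO (fun w => Y' w - 1 - w⁻¹ • CY') (fun t => (t ^ 2)⁻¹))
    (hZ : AsympO (fun w => Z w - 1 - w⁻¹ • CZ) (fun t => (t ^ 2)⁻¹))
    (hW : AsympO (fun w => W w - W0) (fun t => (t ^ 1)⁻¹))
    (hcomm : ∀ v : ℂ, W v * K0 = K0 * W v) (hcomm0 : W0 * K0 = K0 * W0)
    (hE : ∀ v : ℂ, X (u - v) * K0 * Y' (u + v) * W v = W v * (Y (u + v) * K0 * Z (u - v))) :
    CX * K0 * W0 - W0 * (K0 * CZ) = K0 * CY' * W0 - W0 * (CY * K0) := by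
  set A' := CX * K0 * W0 - W0 * (K0 * CZ) with hA'
  set B' := K0 * CY' * W0 - W0 * (CY * K0) with hB'
  -- basic big-O facts
  have hx : (fun t : ℝ => X (u - t) - 1 - (u - (t:ℂ))⁻¹ • CX) =O[atTop]
      (fun t : ℝ => (t ^ 2)⁻¹) := asympO_isBigO hX (ev_half_sub u)
  have hy : (fun t : ℝ => Y (u + t) - 1 - (u + (t:ℂ))⁻¹ • CY) =O[atTop]
      (fun t : ℝ => (t ^ 2)⁻¹) := asympO_isBigO hY (ev_half_add u)
  have hy' : (fun t : ℝ => Y' (u + t) - 1 - (u + (t:ℂ))⁻¹ • CY') =O[atTop]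
      (fun t : ℝ => (t ^ 2)⁻¹) := asympO_isBigO hY' (ev_half_add u)
  have hz : (fun t : ℝ => Z (u - t) - 1 - (u - (t:ℂ))⁻¹ • CZ) =O[atTop]
      (fun t : ℝ => (t ^ 2)⁻¹) := asympO_isBigO hZ (ev_half_sub u)
  have hw : (fun t : ℝ => W t - W0) =O[atTop] (fun t : ℝ => t⁻¹) := by
    have := asympO_isBigO (k := 1) hW ev_half_id
    exact this.congr_right fun t => by rw [pow_one]
  have ha : (fun t : ℝ => (u - (t:ℂ))⁻¹) =O[atTop] (fun t : ℝ => t⁻¹) :=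
    inv_isBigO (ev_half_sub u)
  have hb : (fun t : ℝ => (u + (t:ℂ))⁻¹) =O[atTop] (fun t : ℝ => t⁻¹) :=
    inv_isBigO (ev_half_add u)
  -- derived: X(u-t) - 1 is O(1/t), etc.
  have hX1 : (fun t : ℝ => X (u - t) - 1) =O[atTop] (fun t : ℝ => t⁻¹) := by
    have h1 : (fun t : ℝ => (u - (t:ℂ))⁻¹ • CX) =O[atTop] (fun t : ℝ => t⁻¹) := by
      have := ha.smul (const_isBigO_one CX)
      exact this.congr_right fun t => by simp
    have := (hx.trans g2_isBigO_g1).add h1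
    exact this.congr_left fun t => by abel
  have hY1 : (fun t : ℝ => Y (u + t) - 1) =O[atTop] (fun t : ℝ => t⁻¹) := by
    have h1 : (fun t : ℝ => (u + (t:ℂ))⁻¹ • CY) =O[atTop] (fun t : ℝ => t⁻¹) := by
      have := hb.smul (const_isBigO_one CY)
      exact this.congr_right fun t => by simp
    have := (hy.trans g2_isBigO_g1).add h1
    exact this.congr_left fun t => by abel
  have hY1' : (fun t : ℝ => Y' (u + t) - 1) =O[atTop] (fun t : ℝ => t⁻¹) := by
    have h1 : (fun t : ℝ => (u + (t:ℂ))⁻¹ • CY') =O[atTop] (fun t : ℝ => t⁻¹) := by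
      have := hb.smul (const_isBigO_one CY')
      exact this.congr_right fun t => by simp
    have := (hy'.trans g2_isBigO_g1).add h1
    exact this.congr_left fun t => by abel
  have hZ1 : (fun t : ℝ => Z (u - t) - 1) =O[atTop] (fun t : ℝ => t⁻¹) := by
    have h1 : (fun t : ℝ => (u - (t:ℂ))⁻¹ • CZ) =O[atTop] (fun t : ℝ => t⁻¹) := by
      have := ha.smul (const_isBigO_one CZ)
      exact this.congr_right fun t => by simp
    have := (hz.trans g2_isBigO_g1).add h1
    exact this.congr_left fun t => by abel
  -- boundedness of factors
  have hY'bd : (fun t : ℝ => Y' (u + t)) =O[atTop] (fun _ : ℝ => (1:ℝ)) := by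
    have := (hY1'.trans g1_isBigO_one).add (const_isBigO_one (1 : Matrix n n ℂ))
    refine (this.congr_left fun t => by abel).congr_right fun t => by norm_num
  have hZbd : (fun t : ℝ => Z (u - t)) =O[atTop] (fun _ : ℝ => (1:ℝ)) := by
    have := (hZ1.trans g1_isBigO_one).add (const_isBigO_one (1 : Matrix n n ℂ))
    refine (this.congr_left fun t => by abel).congr_right fun t => by norm_num
  -- ML - K0 and MR - K0 are O(1/t)
  have hML : (fun t : ℝ => X (u - t) * K0 * Y' (u + t) - K0) =O[atTop] (fun t : ℝ => t⁻¹) := by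
    have h1 : (fun t : ℝ => (X (u - t) - 1) * (K0 * Y' (u + t))) =O[atTop]
        (fun t : ℝ => t⁻¹) := by
      have := hX1.mul ((const_isBigO_one K0).mul hY'bd)
      exact this.congr_right fun t => by norm_num
    have h2 : (fun t : ℝ => K0 * (Y' (u + t) - 1)) =O[atTop] (fun t : ℝ => t⁻¹) := by
      have := (const_isBigO_one K0).mul hY1'
      exact this.congr_right fun t => by norm_num
    have := h1.add h2
    refine this.congr_left fun t => ?_
    simp only [sub_mul, mul_sub, one_mul, mul_one, mul_assoc]
    abel
  have hMR : (fun t : ℝ => Y (u + t) * K0 * Z (u - t) - K0) =O[atTop] (fun t : ℝ => t⁻¹) := by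
    have h1 : (fun t : ℝ => (Y (u + t) - 1) * (K0 * Z (u - t))) =O[atTop]
        (fun t : ℝ => t⁻¹) := by
      have := hY1.mul ((const_isBigO_one K0).mul hZbd)
      exact this.congr_right fun t => by norm_num
    have h2 : (fun t : ℝ => K0 * (Z (u - t) - 1)) =O[atTop] (fun t : ℝ => t⁻¹) := by
      have := (const_isBigO_one K0).mul hZ1
      exact this.congr_right fun t => by norm_num
    have := h1.add h2
    refine this.congr_left fun t => ?_
    simp only [sub_mul, mul_sub, one_mul, mul_one, mul_assoc]
    abel
  -- E is O(1/t^2)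
  set E : ℝ → Matrix n n ℂ :=
    fun t => X (u - t) * K0 * Y' (u + t) * W0 - W0 * (Y (u + t) * K0 * Z (u - t)) with hEdef
  have hE2 : E =O[atTop] (fun t : ℝ => (t ^ 2)⁻¹) := by
    have h1 : (fun t : ℝ => (W t - W0) * (Y (u + t) * K0 * Z (u - t) - K0)
        - (X (u - t) * K0 * Y' (u + t) - K0) * (W t - W0)) =O[atTop]
        (fun t : ℝ => (t ^ 2)⁻¹) := by
      have ha1 := hw.mul hMR
      have ha2 := hML.mul hw
      have := ha1.sub ha2
      exact this.congr_right fun t => by rw [pow_two, mul_inv]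
    refine (h1.congr_left fun t => ?_)
    exact (E_eq _ _ _ _ _ _ _ (hE (t:ℂ)) (hcomm (t:ℂ)) hcomm0).symm
  -- E - a•A' - b•B' is O(1/t^2)
  have hE3 : (fun t : ℝ => E t - (u - (t:ℂ))⁻¹ • A' - (u + (t:ℂ))⁻¹ • B') =O[atTop]
      (fun t : ℝ => (t ^ 2)⁻¹) := by
    have hG1a : (fun t : ℝ => (X (u - t) - 1 - (u - (t:ℂ))⁻¹ • CX)
        * (K0 * (Y' (u + t) * W0))) =O[atTop] (fun t : ℝ => (t ^ 2)⁻¹) := by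
      have := hx.mul ((const_isBigO_one K0).mul (hY'bd.mul (const_isBigO_one W0)))
      exact this.congr_right fun t => by norm_num
    have hG1b : (fun t : ℝ => (u - (t:ℂ))⁻¹ • (CX * (K0 * ((Y' (u + t) - 1) * W0)))) =O[atTop]
        (fun t : ℝ => (t ^ 2)⁻¹) := by
      have hin : (fun t : ℝ => CX * (K0 * ((Y' (u + t) - 1) * W0))) =O[atTop]
          (fun t : ℝ => t⁻¹) := by
        have := (const_isBigO_one CX).mul ((const_isBigO_one K0).mul
          (hY1'.mul (const_isBigO_one W0)))
        exact this.congr_right fun t => by norm_num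
      have := ha.smul hin
      exact this.congr_right fun t => by rw [smul_eq_mul, pow_two, mul_inv]
    have hG1c : (fun t : ℝ => K0 * ((Y' (u + t) - 1 - (u + (t:ℂ))⁻¹ • CY') * W0)) =O[atTop]
        (fun t : ℝ => (t ^ 2)⁻¹) := by
      have := (const_isBigO_one K0).mul (hy'.mul (const_isBigO_one W0))
      exact this.congr_right fun t => by norm_num
    have hG2a : (fun t : ℝ => W0 * ((Y (u + t) - 1 - (u + (t:ℂ))⁻¹ • CY)
        * (K0 * Z (u - t)))) =O[atTop] (fun t : ℝ => (t ^ 2)⁻¹) := by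
      have := (const_isBigO_one W0).mul (hy.mul ((const_isBigO_one K0).mul hZbd))
      exact this.congr_right fun t => by norm_num
    have hG2b : (fun t : ℝ => (u + (t:ℂ))⁻¹ • (W0 * (CY * (K0 * (Z (u - t) - 1))))) =O[atTop]
        (fun t : ℝ => (t ^ 2)⁻¹) := by
      have hin : (fun t : ℝ => W0 * (CY * (K0 * (Z (u - t) - 1)))) =O[atTop]
          (fun t : ℝ => t⁻¹) := by
        have := (const_isBigO_one W0).mul ((const_isBigO_one CY).mul
          ((const_isBigO_one K0).mul hZ1))
        exact this.congr_right fun t => by norm_num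
      have := hb.smul hin
      exact this.congr_right fun t => by rw [smul_eq_mul, pow_two, mul_inv]
    have hG2c : (fun t : ℝ => W0 * (K0 * (Z (u - t) - 1 - (u - (t:ℂ))⁻¹ • CZ))) =O[atTop]
        (fun t : ℝ => (t ^ 2)⁻¹) := by
      have := (const_isBigO_one W0).mul ((const_isBigO_one K0).mul hz)
      exact this.congr_right fun t => by norm_num
    have hsum := ((hG1a.add hG1b).add hG1c).sub ((hG2a.add hG2b).add hG2c)
    refine hsum.congr_left fun t => ?_
    exact (expand_lemma (X (u - t)) (Y (u + t)) (Y' (u + t)) (Z (u - t))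
      CX CY CY' CZ K0 W0 _ _ hcomm0.symm).symm
  -- combine: a•A' + b•B' is O(1/t^2)
  have hFsmall : (fun t : ℝ => (u - (t:ℂ))⁻¹ • A' + (u + (t:ℂ))⁻¹ • B') =O[atTop]
      (fun t : ℝ => (t ^ 2)⁻¹) := by
    have := hE2.sub hE3
    exact this.congr_left fun t => by abel
  -- limit argument
  have hzero : Tendsto (fun t : ℝ => (t:ℂ) • ((u - (t:ℂ))⁻¹ • A' + (u + (t:ℂ))⁻¹ • B'))
      atTop (nhds 0) := by
    rw [isBigO_iff] at hFsmall
    obtain ⟨c, hc⟩ := hFsmall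
    refine squeeze_zero_norm' ?_ (by simpa using (tendsto_inv_atTop_zero (𝕜 := ℝ)).const_mul c)
    filter_upwards [hc, eventually_ge_atTop (1:ℝ)] with t hct ht
    have htpos : (0:ℝ) < t := lt_of_lt_of_le one_pos ht
    rw [norm_smul]
    have h1 : ‖(t:ℂ)‖ = t := by simp [abs_of_nonneg htpos.le]
    have h2 : ‖(t ^ 2 : ℝ)⁻¹‖ = (t^2)⁻¹ := Real.norm_of_nonneg (by positivity)
    rw [h1]
    calc t * ‖(u - (t:ℂ))⁻¹ • A' + (u + (t:ℂ))⁻¹ • B'‖ ≤ t * (c * ‖(t ^ 2:ℝ)⁻¹‖) := by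
          exact mul_le_mul_of_nonneg_left hct htpos.le
      _ = c * t⁻¹ := by rw [h2]; field_simp
  have hlim : Tendsto (fun t : ℝ => (t:ℂ) • ((u - (t:ℂ))⁻¹ • A' + (u + (t:ℂ))⁻¹ • B'))
      atTop (nhds ((-1 : ℂ) • A' + (1 : ℂ) • B')) := by
    have heq : (fun t : ℝ => (t:ℂ) • ((u - (t:ℂ))⁻¹ • A' + (u + (t:ℂ))⁻¹ • B'))
        = fun t : ℝ => ((t:ℂ) * (u - (t:ℂ))⁻¹) • A' + ((t:ℂ) * (u + (t:ℂ))⁻¹) • B' := by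
      funext t; rw [smul_add, smul_smul, smul_smul]
    rw [heq]
    exact ((tendsto_mul_inv_sub u).smul_const A').add ((tendsto_mul_inv_add u).smul_const B')
  have hfin := tendsto_nhds_unique hlim hzero
  have : -A' + B' = 0 := by
    rw [neg_smul, one_smul] at hfin
    simpa using hfin
  exact neg_add_eq_zero.mp this

lemma asympO_conj {f : ℂ → Matrix (Fin d × Fin d) (Fin d × Fin d) ℂ} {g : ℝ → ℝ}
    (h : AsympO f g) : AsympO (fun w => matFlip d * f w * matFlip d) g := by
  obtain ⟨c, r, h⟩ := h
  refine ⟨c, r, fun w hw p q => ?_⟩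
  show ‖(matFlip d * f w * matFlip d) p q‖ ≤ c * g ‖w‖
  rw [conj_apply]; exact h w hw _ _

lemma conj_shift (Rf : ℂ → Matrix (Fin d × Fin d) (Fin d × Fin d) ℂ)
    (Cm : Matrix (Fin d × Fin d) (Fin d × Fin d) ℂ) :
    (fun w => matFlip d * Rf w * matFlip d - 1 - w⁻¹ • (matFlip d * Cm * matFlip d))
      = fun w => matFlip d * (Rf w - 1 - w⁻¹ • Cm) * matFlip d := by
  funext w
  ext p q
  simp only [Matrix.sub_apply, Matrix.smul_apply, conj_apply, smul_eq_mul]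
  have h1 : (1 : Matrix (Fin d × Fin d) (Fin d × Fin d) ℂ) p q
      = (1 : Matrix (Fin d × Fin d) (Fin d × Fin d) ℂ) (p.2, p.1) (q.2, q.1) := by
    simp [Matrix.one_apply, Prod.ext_iff, and_comm]
  rw [h1]

lemma asympO_W (K : ℂ → Matrix (Fin d) (Fin d) ℂ) (κ : Matrix (Fin d) (Fin d) ℂ)
    (h : AsympO (fun v => K v - κ) (fun t => t⁻¹)) :
    AsympO (fun v => (1 : Matrix (Fin d) (Fin d) ℂ) ⊗ₖ K v
      - (1 : Matrix (Fin d) (Fin d) ℂ) ⊗ₖ κ) (fun t => (t ^ 1)⁻¹) := by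
  obtain ⟨c, r, h⟩ := h
  refine ⟨c, r, fun v hv p q => ?_⟩
  have hb := h v hv p.2 q.2
  show ‖((1 : Matrix (Fin d) (Fin d) ℂ) ⊗ₖ K v - (1 : Matrix (Fin d) (Fin d) ℂ) ⊗ₖ κ) p q‖
      ≤ c * (‖v‖ ^ 1)⁻¹
  rw [pow_one]
  have hentry : ((1 : Matrix (Fin d) (Fin d) ℂ) ⊗ₖ K v
      - (1 : Matrix (Fin d) (Fin d) ℂ) ⊗ₖ κ) p q
      = (1 : Matrix (Fin d) (Fin d) ℂ) p.1 q.1 * (K v p.2 q.2 - κ p.2 q.2) := by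
    simp [Matrix.sub_apply, Matrix.kronecker_apply, mul_sub]
  rw [hentry, norm_mul]
  have h1 : ‖(1 : Matrix (Fin d) (Fin d) ℂ) p.1 q.1‖ ≤ 1 := by
    rw [Matrix.one_apply]; split <;> simp
  have hb' : ‖K v p.2 q.2 - κ p.2 q.2‖ ≤ c * ‖v‖⁻¹ := by
    simpa [Matrix.sub_apply] using hb
  calc ‖(1 : Matrix (Fin d) (Fin d) ℂ) p.1 q.1‖ * ‖K v p.2 q.2 - κ p.2 q.2‖
      ≤ 1 * (c * ‖v‖⁻¹) := mul_le_mul h1 hb' (norm_nonneg _) zero_le_one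
    _ = c * ‖v‖⁻¹ := one_mul _

end Stmt6

open Stmt6

/-- if `R^{(ij)}` and `K` satisfy the boundary Yang–Baxter equation and the
quasi-classical asymptotics with invertible leading term `κ`, then for every fixed `u`,
`Σ_A (K(u)ρ⁽²⁾(X_A) − ρ⁽¹⁾(X_A)K(u)) ⊗ (ρ⁽¹⁾(X^A) + κρ⁽²⁾(X^A)κ⁻¹) = 0`. -/
theorem stmt_6 {L : Type*} [LieRing L] [LieAlgebra ℂ L] [FiniteDimensional ℂ L]
    [LieAlgebra.IsSimple ℂ L]
    (hB : LinearMap.BilinForm.Nondegenerate (killingForm ℂ L))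
    {d : ℕ} (ρ : Fin 2 → L →ₗ⁅ℂ⁆ Matrix (Fin d) (Fin d) ℂ)
    (hρ : ∀ i, Function.Injective (ρ i))
    {ι : Type*} [Fintype ι] [DecidableEq ι] (Xb : Module.Basis ι ℂ L) (Xd : ι → L)
    (hdual : ∀ A B : ι, killingForm ℂ L (Xb A) (Xd B) = if A = B then 1 else 0)
    (C : Fin 2 → Fin 2 → Matrix (Fin d × Fin d) (Fin d × Fin d) ℂ)
    (hC : ∀ i j, C i j = ∑ A : ι, (ρ i) (Xb A) ⊗ₖ (ρ j) (Xd A))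
    (R : Fin 2 → Fin 2 → ℂ → Matrix (Fin d × Fin d) (Fin d × Fin d) ℂ)
    (K : ℂ → Matrix (Fin d) (Fin d) ℂ)
    (κ : Matrix (Fin d) (Fin d) ℂ) (hκ : IsUnit κ)
    (hRasymp : ∀ i j, AsympO (fun u => R i j u - 1 - u⁻¹ • C i j) (fun t => (t ^ 2)⁻¹))
    (hKasymp : AsympO (fun u => K u - κ) (fun t => t⁻¹))
    (hbYBE : ∀ u v : ℂ,
      R 0 0 (u - v) * (K u ⊗ₖ (1 : Matrix (Fin d) (Fin d) ℂ)) *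
          (matFlip d * R 0 1 (u + v) * matFlip d) * ((1 : Matrix (Fin d) (Fin d) ℂ) ⊗ₖ K v) =
        ((1 : Matrix (Fin d) (Fin d) ℂ) ⊗ₖ K v) * R 0 1 (u + v) *
          (K u ⊗ₖ (1 : Matrix (Fin d) (Fin d) ℂ)) * (matFlip d * R 1 1 (u - v) * matFlip d)) :
    ∀ u : ℂ, ∑ A : ι, (K u * (ρ 1) (Xb A) - (ρ 0) (Xb A) * K u) ⊗ₖ
        ((ρ 0) (Xd A) + κ * (ρ 1) (Xd A) * κ⁻¹) = 0 := by
  intro u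
  have hdet : IsUnit κ.det := (Matrix.isUnit_iff_isUnit_det κ).mp hκ
  have hκκ' : κ⁻¹ * κ = 1 := Matrix.nonsing_inv_mul κ hdet
  have hκκ : κ * κ⁻¹ = 1 := Matrix.mul_nonsing_inv κ hdet
  -- conjugated asymptotics
  have hY'a : AsympO (fun w => (matFlip d * R 0 1 w * matFlip d) - 1
      - w⁻¹ • (matFlip d * C 0 1 * matFlip d)) (fun t => (t ^ 2)⁻¹) := by
    rw [conj_shift]; exact asympO_conj (hRasymp 0 1)
  have hZa : AsympO (fun w => (matFlip d * R 1 1 w * matFlip d) - 1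
      - w⁻¹ • (matFlip d * C 1 1 * matFlip d)) (fun t => (t ^ 2)⁻¹) := by
    rw [conj_shift]; exact asympO_conj (hRasymp 1 1)
  have hWa := asympO_W K κ hKasymp
  have hcommv : ∀ v : ℂ, ((1 : Matrix (Fin d) (Fin d) ℂ) ⊗ₖ K v)
      * (K u ⊗ₖ (1 : Matrix (Fin d) (Fin d) ℂ))
      = (K u ⊗ₖ (1 : Matrix (Fin d) (Fin d) ℂ)) * ((1 : Matrix (Fin d) (Fin d) ℂ) ⊗ₖ K v) := by
    intro v
    rw [← Matrix.mul_kronecker_mul, ← Matrix.mul_kronecker_mul]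
    simp only [one_mul, mul_one]
  have hcomm0 : ((1 : Matrix (Fin d) (Fin d) ℂ) ⊗ₖ κ)
      * (K u ⊗ₖ (1 : Matrix (Fin d) (Fin d) ℂ))
      = (K u ⊗ₖ (1 : Matrix (Fin d) (Fin d) ℂ)) * ((1 : Matrix (Fin d) (Fin d) ℂ) ⊗ₖ κ) := by
    rw [← Matrix.mul_kronecker_mul, ← Matrix.mul_kronecker_mul]
    simp only [one_mul, mul_one]
  have hEybe : ∀ v : ℂ, R 0 0 (u - v) * (K u ⊗ₖ (1 : Matrix (Fin d) (Fin d) ℂ))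
      * (matFlip d * R 0 1 (u + v) * matFlip d) * ((1 : Matrix (Fin d) (Fin d) ℂ) ⊗ₖ K v)
      = ((1 : Matrix (Fin d) (Fin d) ℂ) ⊗ₖ K v) * (R 0 1 (u + v)
        * (K u ⊗ₖ (1 : Matrix (Fin d) (Fin d) ℂ)) * (matFlip d * R 1 1 (u - v) * matFlip d)) := by
    intro v
    rw [hbYBE u v]
    simp only [mul_assoc]
  have hkey := key u (R 0 0) (R 0 1) (fun w => matFlip d * R 0 1 w * matFlip d)
    (fun w => matFlip d * R 1 1 w * matFlip d)
    (fun v => (1 : Matrix (Fin d) (Fin d) ℂ) ⊗ₖ K v)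
    (C 0 0) (C 0 1) (matFlip d * C 0 1 * matFlip d) (matFlip d * C 1 1 * matFlip d)
    (K u ⊗ₖ (1 : Matrix (Fin d) (Fin d) ℂ)) ((1 : Matrix (Fin d) (Fin d) ℂ) ⊗ₖ κ)
    (hRasymp 0 0) (hRasymp 0 1) hY'a hZa hWa hcommv hcomm0 hEybe
  -- rewrite the four blocks as explicit sums
  have hD01 : matFlip d * C 0 1 * matFlip d = ∑ A : ι, (ρ 1) (Xb A) ⊗ₖ (ρ 0) (Xd A) := by
    rw [hC 0 1, Finset.mul_sum, Finset.sum_mul]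
    rw [Finset.sum_congr rfl fun A _ => conj_kron ((ρ 0) (Xb A)) ((ρ 1) (Xd A))]
    exact casimir_symm Xb Xd hdual (ρ 1) (ρ 0)
  have hD11 : matFlip d * C 1 1 * matFlip d = ∑ A : ι, (ρ 1) (Xb A) ⊗ₖ (ρ 1) (Xd A) := by
    rw [hC 1 1, Finset.mul_sum, Finset.sum_mul]
    rw [Finset.sum_congr rfl fun A _ => conj_kron ((ρ 1) (Xb A)) ((ρ 1) (Xd A))]
    exact casimir_symm Xb Xd hdual (ρ 1) (ρ 1)
  have e1 : C 0 0 * (K u ⊗ₖ (1 : Matrix (Fin d) (Fin d) ℂ))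
      * ((1 : Matrix (Fin d) (Fin d) ℂ) ⊗ₖ κ)
      = ∑ A : ι, ((ρ 0) (Xb A) * K u) ⊗ₖ ((ρ 0) (Xd A) * κ) := by
    rw [hC 0 0, Finset.sum_mul, Finset.sum_mul]
    exact Finset.sum_congr rfl fun A _ => by
      rw [← Matrix.mul_kronecker_mul, ← Matrix.mul_kronecker_mul]
      simp only [one_mul, mul_one]
  have e2 : ((1 : Matrix (Fin d) (Fin d) ℂ) ⊗ₖ κ)
      * ((K u ⊗ₖ (1 : Matrix (Fin d) (Fin d) ℂ)) * (matFlip d * C 1 1 * matFlip d))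
      = ∑ A : ι, (K u * (ρ 1) (Xb A)) ⊗ₖ (κ * (ρ 1) (Xd A)) := by
    rw [hD11, Finset.mul_sum, Finset.mul_sum]
    exact Finset.sum_congr rfl fun A _ => by
      rw [← Matrix.mul_kronecker_mul, ← Matrix.mul_kronecker_mul]
      simp only [one_mul, mul_one]
  have e3 : (K u ⊗ₖ (1 : Matrix (Fin d) (Fin d) ℂ)) * (matFlip d * C 0 1 * matFlip d)
      * ((1 : Matrix (Fin d) (Fin d) ℂ) ⊗ₖ κ)
      = ∑ A : ι, (K u * (ρ 1) (Xb A)) ⊗ₖ ((ρ 0) (Xd A) * κ) := by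
    rw [hD01, Finset.mul_sum, Finset.sum_mul]
    exact Finset.sum_congr rfl fun A _ => by
      rw [← Matrix.mul_kronecker_mul, ← Matrix.mul_kronecker_mul]
      simp only [one_mul, mul_one]
  have e4 : ((1 : Matrix (Fin d) (Fin d) ℂ) ⊗ₖ κ)
      * (C 0 1 * (K u ⊗ₖ (1 : Matrix (Fin d) (Fin d) ℂ)))
      = ∑ A : ι, ((ρ 0) (Xb A) * K u) ⊗ₖ (κ * (ρ 1) (Xd A)) := by
    rw [hC 0 1, Finset.sum_mul, Finset.mul_sum]
    exact Finset.sum_congr rfl fun A _ => by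
      rw [← Matrix.mul_kronecker_mul, ← Matrix.mul_kronecker_mul]
      simp only [one_mul, mul_one]
  rw [e1, e2, e3, e4] at hkey
  -- target sum times (1 ⊗ κ)
  have hS : (∑ A : ι, (K u * (ρ 1) (Xb A) - (ρ 0) (Xb A) * K u) ⊗ₖ
        ((ρ 0) (Xd A) + κ * (ρ 1) (Xd A) * κ⁻¹)) * ((1 : Matrix (Fin d) (Fin d) ℂ) ⊗ₖ κ)
      = (∑ A : ι, (K u * (ρ 1) (Xb A)) ⊗ₖ ((ρ 0) (Xd A) * κ)
          - ∑ A : ι, ((ρ 0) (Xb A) * K u) ⊗ₖ (κ * (ρ 1) (Xd A)))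
        - (∑ A : ι, ((ρ 0) (Xb A) * K u) ⊗ₖ ((ρ 0) (Xd A) * κ)
          - ∑ A : ι, (K u * (ρ 1) (Xb A)) ⊗ₖ (κ * (ρ 1) (Xd A))) := by
    rw [Finset.sum_mul, ← Finset.sum_sub_distrib, ← Finset.sum_sub_distrib,
      ← Finset.sum_sub_distrib]
    refine Finset.sum_congr rfl fun A _ => ?_
    rw [← Matrix.mul_kronecker_mul, mul_one]
    have hN : ((ρ 0) (Xd A) + κ * (ρ 1) (Xd A) * κ⁻¹) * κ
        = (ρ 0) (Xd A) * κ + κ * (ρ 1) (Xd A) := by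
      rw [add_mul, mul_assoc (κ * (ρ 1) (Xd A)), hκκ', mul_one]
    rw [hN]
    ext p q
    simp only [Matrix.kroneckerMap_apply, Matrix.sub_apply, Matrix.add_apply]
    ring
  have hS0 : (∑ A : ι, (K u * (ρ 1) (Xb A) - (ρ 0) (Xb A) * K u) ⊗ₖ
      ((ρ 0) (Xd A) + κ * (ρ 1) (Xd A) * κ⁻¹)) * ((1 : Matrix (Fin d) (Fin d) ℂ) ⊗ₖ κ) = 0 := by
    rw [hS, ← hkey, sub_self]
  have hIκ : ((1 : Matrix (Fin d) (Fin d) ℂ) ⊗ₖ κ)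
      * ((1 : Matrix (Fin d) (Fin d) ℂ) ⊗ₖ κ⁻¹) = 1 := by
    rw [← Matrix.mul_kronecker_mul, one_mul, hκκ, Matrix.one_kronecker_one]
  calc ∑ A : ι, (K u * (ρ 1) (Xb A) - (ρ 0) (Xb A) * K u) ⊗ₖ
        ((ρ 0) (Xd A) + κ * (ρ 1) (Xd A) * κ⁻¹)
      = (∑ A : ι, (K u * (ρ 1) (Xb A) - (ρ 0) (Xb A) * K u) ⊗ₖ
          ((ρ 0) (Xd A) + κ * (ρ 1) (Xd A) * κ⁻¹))
        * (((1 : Matrix (Fin d) (Fin d) ℂ) ⊗ₖ κ)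
          * ((1 : Matrix (Fin d) (Fin d) ℂ) ⊗ₖ κ⁻¹)) := by rw [hIκ, mul_one]
    _ = (∑ A : ι, (K u * (ρ 1) (Xb A) - (ρ 0) (Xb A) * K u) ⊗ₖ
          ((ρ 0) (Xd A) + κ * (ρ 1) (Xd A) * κ⁻¹))
        * ((1 : Matrix (Fin d) (Fin d) ℂ) ⊗ₖ κ) * ((1 : Matrix (Fin d) (Fin d) ℂ) ⊗ₖ κ⁻¹) := by
          rw [mul_assoc]
    _ = 0 := by rw [hS0, zero_mul]
end

section
/- Let ρ : 𝔤 → End(ℂ^d) be a faithful representation with Tr(ρ(X)ρ(Y)) = c·B(X,Y), c ≠ 0. If m ∈ End(ℂ^d) satisfies Σ_A [ρ(X_A), m] ⊗ ρ(X^A) = 0 in End(ℂ^d ⊗ ℂ^d), then [ρ(X), m] = 0 for all X ∈ 𝔤. If moreover ρ is irreducible, then m is a scalar multiple of the identity; and if in addition Tr(m) = 0, then m = 0. -/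
open Kronecker

attribute [local instance 100] LieRing.ofAssociativeRing

/-- `ρ` is an irreducible representation on `ℂ^d`: the only subspaces invariant under all
`ρ(X)` are `⊥` and `⊤`. -/
def MatIrreducible {L : Type*} {d : ℕ} (ρ : L → Matrix (Fin d) (Fin d) ℂ) : Prop :=
  ∀ W : Submodule ℂ (Fin d → ℂ), (∀ X : L, ∀ w ∈ W, (ρ X).mulVec w ∈ W) → W = ⊥ ∨ W = ⊤

/-- if `Σ_A [ρ(X_A), m] ⊗ ρ(X^A) = 0` then `m` commutes with `ρ(𝔤)`;
if moreover `ρ` is irreducible then `m` is scalar, and if in addition `Tr(m) = 0`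
then `m = 0`. -/
theorem stmt_9 {L : Type*} [LieRing L] [LieAlgebra ℂ L] [FiniteDimensional ℂ L]
    [LieAlgebra.IsSimple ℂ L]
    (hB : LinearMap.BilinForm.Nondegenerate (killingForm ℂ L))
    {d : ℕ} (ρ : L →ₗ⁅ℂ⁆ Matrix (Fin d) (Fin d) ℂ)
    (hρ : Function.Injective ρ)
    (c : ℂ) (hc : c ≠ 0)
    (htr : ∀ X Y : L, Matrix.trace (ρ X * ρ Y) = c * killingForm ℂ L X Y)
    {ι : Type*} [Fintype ι] [DecidableEq ι] (Xb : Module.Basis ι ℂ L) (Xd : ι → L)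
    (hdual : ∀ A B : ι, killingForm ℂ L (Xb A) (Xd B) = if A = B then 1 else 0)
    (m : Matrix (Fin d) (Fin d) ℂ)
    (hm : ∑ A : ι, (ρ (Xb A) * m - m * ρ (Xb A)) ⊗ₖ ρ (Xd A) = 0) :
    (∀ X : L, ρ X * m = m * ρ X) ∧
      (MatIrreducible (fun X : L => ρ X) →
        (∃ c₀ : ℂ, m = c₀ • (1 : Matrix (Fin d) (Fin d) ℂ)) ∧
          (Matrix.trace m = 0 → m = 0)) := by
  -- entrywise version of hm
  have hme : ∀ (p1 q1 p2 q2 : Fin d),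
      ∑ A : ι, (ρ (Xb A) * m - m * ρ (Xb A)) p1 q1 * (ρ (Xd A)) p2 q2 = 0 := by
    intro p1 q1 p2 q2
    have := congrFun (congrFun hm (p1, p2)) (q1, q2)
    simp only [Matrix.sum_apply, Matrix.kroneckerMap_apply, Matrix.zero_apply] at this
    exact this
  -- coefficients of Y in the basis Xb
  have hrepr : ∀ Y : L, ∀ A : ι, killingForm ℂ L Y (Xd A) = Xb.repr Y A := by
    intro Y A
    conv_lhs => rw [← Xb.linearCombination_repr Y]
    rw [Finsupp.linearCombination_apply, Finsupp.sum_fintype]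
    · simp only [map_sum, map_smul, LinearMap.sum_apply, LinearMap.smul_apply, hdual,
        smul_eq_mul]
      simp [Finset.sum_ite_eq', mul_comm]
    · intro i; simp
  have hcomm : ∀ X : L, ρ X * m = m * ρ X := by
    intro Y
    have hY : ρ Y = ∑ A : ι, (Xb.repr Y A) • ρ (Xb A) := by
      have h1 : Y = ∑ A : ι, Xb.repr Y A • Xb A := (Xb.sum_repr Y).symm
      conv_lhs => rw [h1]
      show ρ.toLinearMap (∑ A : ι, Xb.repr Y A • Xb A) = _
      rw [map_sum]
      exact Finset.sum_congr rfl fun A _ => map_smul ρ.toLinearMap _ _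
    have hsumY : ρ Y * m - m * ρ Y = ∑ A : ι, (Xb.repr Y A) • (ρ (Xb A) * m - m * ρ (Xb A)) := by
      rw [hY, Finset.sum_mul, Finset.mul_sum, ← Finset.sum_sub_distrib]
      refine Finset.sum_congr rfl fun A _ => ?_
      rw [smul_sub, smul_mul_assoc, mul_smul_comm]
    have key : ∀ p1 q1 : Fin d, c * ((ρ Y * m - m * ρ Y) p1 q1) = 0 := by
      intro p1 q1
      have e1 : c * ((ρ Y * m - m * ρ Y) p1 q1)
          = ∑ A : ι, (ρ (Xb A) * m - m * ρ (Xb A)) p1 q1 * Matrix.trace (ρ (Xd A) * ρ Y) := by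
        rw [hsumY]
        simp only [Matrix.sum_apply]
        rw [Finset.mul_sum]
        refine Finset.sum_congr rfl fun A _ => ?_
        rw [htr (Xd A) Y,
          show killingForm ℂ L (Xd A) Y = killingForm ℂ L Y (Xd A) from
            LieModule.traceForm_comm ℂ L L (Xd A) Y,
          hrepr Y A]
        simp only [Matrix.smul_apply, smul_eq_mul]
        ring
      rw [e1]
      have e2 : ∀ A : ι, (ρ (Xb A) * m - m * ρ (Xb A)) p1 q1 * Matrix.trace (ρ (Xd A) * ρ Y)
          = ∑ p2 : Fin d, ∑ q2 : Fin d,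
            (ρ (Xb A) * m - m * ρ (Xb A)) p1 q1 * (ρ (Xd A)) p2 q2 * (ρ Y) q2 p2 := by
        intro A
        rw [Matrix.trace, Finset.mul_sum]
        refine Finset.sum_congr rfl fun p2 _ => ?_
        rw [Matrix.diag_apply, Matrix.mul_apply, Finset.mul_sum]
        exact Finset.sum_congr rfl fun q2 _ => by ring
      simp only [e2]
      rw [Finset.sum_comm]
      refine Finset.sum_eq_zero fun p2 _ => ?_
      rw [Finset.sum_comm]
      refine Finset.sum_eq_zero fun q2 _ => ?_
      rw [← Finset.sum_mul, hme p1 q1 p2 q2, zero_mul]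
    have hz : ρ Y * m - m * ρ Y = 0 := by
      ext p1 q1
      have := key p1 q1
      rcases mul_eq_zero.mp this with h | h
      · exact absurd h hc
      · simpa using h
    exact sub_eq_zero.mp hz
  refine ⟨hcomm, fun hirr => ?_⟩
  -- Schur's lemma part
  have hscal : ∃ c₀ : ℂ, m = c₀ • (1 : Matrix (Fin d) (Fin d) ℂ) := by
    rcases Nat.eq_zero_or_pos d with hd | hd
    · refine ⟨0, ?_⟩
      subst hd
      ext i j
      exact absurd i.2 (by omega)
    · haveI : NeZero d := ⟨hd.ne'⟩
      haveI : Nontrivial (Fin d → ℂ) := by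
        refine ⟨0, Pi.single ⟨0, hd⟩ 1, fun h => ?_⟩
        have := congrFun h ⟨0, hd⟩
        simp at this
      obtain ⟨μ, hμ⟩ := Module.End.exists_eigenvalue (Matrix.mulVecLin m)
      set W := Module.End.eigenspace (Matrix.mulVecLin m) μ with hW
      have hWne : W ≠ ⊥ := hμ
      have hWinv : ∀ X : L, ∀ w ∈ W, (ρ X).mulVec w ∈ W := by
        intro X w hw
        rw [Module.End.mem_eigenspace_iff] at hw ⊢
        have hw' : m.mulVec w = μ • w := by simpa [Matrix.mulVecLin_apply] using hw
        have : m.mulVec ((ρ X).mulVec w) = μ • (ρ X).mulVec w := by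
          rw [Matrix.mulVec_mulVec, ← hcomm X, ← Matrix.mulVec_mulVec, hw',
            Matrix.mulVec_smul]
        simpa [Matrix.mulVecLin_apply] using this
      rcases hirr W hWinv with h | h
      · exact absurd h hWne
      · refine ⟨μ, ?_⟩
        have hall : ∀ v : Fin d → ℂ, m.mulVec v = μ • v := by
          intro v
          have hv : v ∈ W := h ▸ Submodule.mem_top
          rw [Module.End.mem_eigenspace_iff] at hv
          simpa [Matrix.mulVecLin_apply] using hv
        ext i j
        have := congrFun (hall (Pi.single j 1)) i
        simp only [Matrix.mulVec_single, mul_one, Pi.smul_apply, smul_eq_mul, MulOpposite.op_one, one_smul, Matrix.col_apply] at this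
        rw [this]
        by_cases hij : i = j <;> simp [Pi.single_apply, hij, Matrix.one_apply]
  refine ⟨hscal, fun htr0 => ?_⟩
  obtain ⟨c₀, hc₀⟩ := hscal
  rcases Nat.eq_zero_or_pos d with hd | hd
  · subst hd; ext i j; exact absurd i.2 (by omega)
  · rw [hc₀] at htr0 ⊢
    rw [Matrix.trace_smul, Matrix.trace_one] at htr0
    simp only [smul_eq_mul, Finset.card_univ, Fintype.card_fin] at htr0
    have : c₀ = 0 := by
      rcases mul_eq_zero.mp htr0 with h | h
      · exact h
      · exfalso
        have : (d : ℂ) ≠ 0 := Nat.cast_ne_zero.mpr hd.ne'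
        exact this h
    rw [this, zero_smul]
end

section
/- Let ρ : 𝔤 → End(ℂ^d) be a faithful irreducible representation with Tr(ρ(X)ρ(Y)) = c·B(X,Y), c ≠ 0. If m ∈ End(ℂ^d) satisfies Σ_A ([ρ(X_A), m] ⊗ ρ(X^A) + ρ(X_A) ⊗ [ρ(X^A), m]) = 0 in End(ℂ^d ⊗ ℂ^d), then m ∈ ρ(𝔤) + ℂ·1, i.e. m = ρ(Y) + c₀·1 for some Y ∈ 𝔤 and c₀ ∈ ℂ. -/
open Kronecker

attribute [local instance 100] LieRing.ofAssociativeRing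

/-- Partial trace against a fixed matrix `N`: sends `P ⊗ₖ Q` to `trace (Q * N) • P`. -/
noncomputable def ptrace {d : ℕ} (N : Matrix (Fin d) (Fin d) ℂ) :
    Matrix (Fin d × Fin d) (Fin d × Fin d) ℂ →ₗ[ℂ] Matrix (Fin d) (Fin d) ℂ where
  toFun M := Matrix.of fun i j => ∑ k, ∑ l, M (i, k) (j, l) * N l k
  map_add' M M' := by
    ext i j
    simp [add_mul, Finset.sum_add_distrib]
  map_smul' a M := by
    ext i j
    simp [Finset.mul_sum, mul_assoc]

lemma ptrace_kron {d : ℕ} (N P Q : Matrix (Fin d) (Fin d) ℂ) :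
    ptrace N (P ⊗ₖ Q) = Matrix.trace (Q * N) • P := by
  ext i j
  simp only [ptrace, LinearMap.coe_mk, AddHom.coe_mk, Matrix.of_apply,
    Matrix.kroneckerMap_apply, Matrix.smul_apply, smul_eq_mul,
    Matrix.trace, Matrix.diag, Matrix.mul_apply]
  rw [Finset.sum_mul]
  refine Finset.sum_congr rfl fun k _ => ?_
  rw [Finset.sum_mul]
  refine Finset.sum_congr rfl fun l _ => ?_
  ring

/-- if `ρ` is faithful irreducible and
`Σ_A ([ρ(X_A), m] ⊗ ρ(X^A) + ρ(X_A) ⊗ [ρ(X^A), m]) = 0`, then `m ∈ ρ(𝔤) + ℂ·1`. -/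
theorem stmt_10 {L : Type*} [LieRing L] [LieAlgebra ℂ L] [FiniteDimensional ℂ L]
    [LieAlgebra.IsSimple ℂ L]
    (hB : LinearMap.BilinForm.Nondegenerate (killingForm ℂ L))
    {d : ℕ} (ρ : L →ₗ⁅ℂ⁆ Matrix (Fin d) (Fin d) ℂ)
    (hρ : Function.Injective ρ)
    (c : ℂ) (hc : c ≠ 0)
    (htr : ∀ X Y : L, Matrix.trace (ρ X * ρ Y) = c * killingForm ℂ L X Y)
    {ι : Type*} [Fintype ι] [DecidableEq ι] (Xb : Module.Basis ι ℂ L) (Xd : ι → L)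
    (hdual : ∀ A B : ι, killingForm ℂ L (Xb A) (Xd B) = if A = B then 1 else 0)
    (hirr : MatIrreducible (fun X : L => ρ X))
    (m : Matrix (Fin d) (Fin d) ℂ)
    (hm : ∑ A : ι, ((ρ (Xb A) * m - m * ρ (Xb A)) ⊗ₖ ρ (Xd A) +
        ρ (Xb A) ⊗ₖ (ρ (Xd A) * m - m * ρ (Xd A))) = 0) :
    ∃ (Y : L) (c₀ : ℂ), m = ρ Y + c₀ • (1 : Matrix (Fin d) (Fin d) ℂ) := by
  classical
  haveI : LieAlgebra.IsKilling ℂ L := by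
    constructor
    have h := LieIdeal.coe_killingCompl_top (R := ℂ) (L := L)
    rw [LinearMap.BilinForm.nondegenerate_iff_ker_eq_bot.mp hB] at h
    exact (LieSubmodule.toSubmodule_inj _ _).mp (by simpa using h)
  -- completeness of the dual basis
  have hrepr : ∀ (Z : L) (A : ι), killingForm ℂ L (Xd A) Z = Xb.repr Z A := by
    intro Z A
    rw [LieModule.traceForm_comm ℂ L L]
    conv_lhs => rw [← Xb.sum_repr Z]
    rw [map_sum]
    simp [hdual]
  have hcomp : ∀ Z : L, ∑ A, (killingForm ℂ L (Xd A) Z) • Xb A = Z := by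
    intro Z
    simp_rw [hrepr]
    exact Xb.sum_repr Z
  -- the commutator map
  set glin : L →ₗ[ℂ] Matrix (Fin d) (Fin d) ℂ :=
    { toFun := fun X => ρ X * m - m * ρ X
      map_add' := by
        intro X X'
        simp only [map_add, add_mul, mul_add]
        abel
      map_smul' := by
        intro a X
        simp [map_smul, smul_mul_assoc, mul_smul_comm, smul_sub] } with hglin
  -- partial-trace identity
  have key : ∀ Y : L,
      c • glin Y + ∑ A : ι, (Matrix.trace (glin (Xd A) * ρ Y)) • ρ (Xb A) = 0 := by
    intro Y
    have h0 := congrArg (ptrace (ρ Y)) hm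
    rw [map_sum, map_zero] at h0
    simp only [map_add, ptrace_kron] at h0
    rw [Finset.sum_add_distrib] at h0
    have h1 : ∑ A : ι, Matrix.trace (ρ (Xd A) * ρ Y) • (ρ (Xb A) * m - m * ρ (Xb A))
        = c • glin Y := by
      have : ∀ A : ι, Matrix.trace (ρ (Xd A) * ρ Y) • (ρ (Xb A) * m - m * ρ (Xb A))
          = c • ((killingForm ℂ L (Xd A) Y) • glin (Xb A)) := by
        intro A
        rw [htr, mul_smul]
        rfl
      rw [Finset.sum_congr rfl fun A _ => this A, ← Finset.smul_sum]
      congr 1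
      calc ∑ A : ι, (killingForm ℂ L (Xd A) Y) • glin (Xb A)
          = ∑ A : ι, glin ((killingForm ℂ L (Xd A) Y) • Xb A) := by
            simp [map_smul]
        _ = glin (∑ A : ι, (killingForm ℂ L (Xd A) Y) • Xb A) := (map_sum glin _ _).symm
        _ = glin Y := by rw [hcomp]
    rw [h1] at h0
    convert h0 using 3
    rfl
  -- the preimage map ψ
  set ψ : L → L := fun Y =>
    (-c⁻¹) • ∑ A : ι, (Matrix.trace (glin (Xd A) * ρ Y)) • Xb A with hψdef
  have hψ : ∀ Y : L, ρ (ψ Y) = glin Y := by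
    intro Y
    have hsum : ∑ A : ι, (Matrix.trace (glin (Xd A) * ρ Y)) • ρ (Xb A) = -(c • glin Y) :=
      eq_neg_of_add_eq_zero_right (key Y)
    have hmap : ρ (ψ Y) = (-c⁻¹) • ∑ A : ι, (Matrix.trace (glin (Xd A) * ρ Y)) • ρ (Xb A) := by
      show ρ.toLinearMap _ = _
      rw [hψdef]
      simp only [map_smul, map_sum, LieHom.coe_toLinearMap]
    rw [hmap, hsum, smul_neg, neg_smul, neg_neg, smul_smul, inv_mul_cancel₀ hc, one_smul]
  -- ψ is linear (via injectivity of ρ)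
  have hψadd : ∀ X X' : L, ψ (X + X') = ψ X + ψ X' := by
    intro X X'
    apply hρ
    rw [hψ (X + X'), map_add glin, ← hψ X, ← hψ X', ← map_add]
  have hψsmul : ∀ (a : ℂ) (X : L), ψ (a • X) = a • ψ X := by
    intro a X
    apply hρ
    rw [hψ (a • X), map_smul glin, ← hψ X, ← map_smul]
  -- ψ satisfies the Leibniz rule, so it is a derivation
  have hlei : ∀ a b : L, ψ ⁅a, b⁆ = ⁅a, ψ b⁆ - ⁅b, ψ a⁆ := by
    intro a b
    apply hρ
    rw [hψ ⁅a, b⁆, map_sub, LieHom.map_lie, LieHom.map_lie, hψ a, hψ b]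
    show ρ ⁅a, b⁆ * m - m * ρ ⁅a, b⁆ = ⁅ρ a, ρ b * m - m * ρ b⁆ - ⁅ρ b, ρ a * m - m * ρ a⁆
    rw [LieHom.map_lie]
    simp only [Ring.lie_def]
    noncomm_ring
  let D : LieDerivation ℂ L L :=
    { toFun := ψ
      map_add' := hψadd
      map_smul' := hψsmul
      leibniz' := hlei }
  obtain ⟨Y₀, hY₀⟩ := LieDerivation.IsKilling.exists_eq_ad (R := ℂ) D
  have hY₀X : ∀ X : L, ⁅Y₀, X⁆ = ψ X := by
    intro X
    have h1 : (LieDerivation.ad ℂ L Y₀) X = ψ X := by rw [hY₀]; rfl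
    have h2 : (LieDerivation.ad ℂ L Y₀) X = (LieAlgebra.ad ℂ L Y₀) X := by
      have := LieDerivation.coe_ad_apply_eq_ad_apply (R := ℂ) (L := L) Y₀
      exact DFunLike.congr_fun this X
    rw [← h1, h2, LieAlgebra.ad_apply]
  -- m + ρ Y₀ commutes with the image of ρ
  have hcomm : ∀ X : L, ρ X * (m + ρ Y₀) = (m + ρ Y₀) * ρ X := by
    intro X
    have e : ρ X * m - m * ρ X = ρ Y₀ * ρ X - ρ X * ρ Y₀ := by
      have h1 : ρ (ψ X) = ρ X * m - m * ρ X := hψ X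
      rw [← hY₀X X, LieHom.map_lie, Ring.lie_def] at h1
      exact h1.symm
    rw [mul_add, add_mul]
    calc ρ X * m + ρ X * ρ Y₀
        = (ρ X * m - m * ρ X) + (m * ρ X + ρ X * ρ Y₀) := by abel
      _ = (ρ Y₀ * ρ X - ρ X * ρ Y₀) + (m * ρ X + ρ X * ρ Y₀) := by rw [e]
      _ = m * ρ X + ρ Y₀ * ρ X := by abel
  -- Schur's lemma
  rcases Nat.eq_zero_or_pos d with hd | hd
  · subst hd
    exact ⟨0, 0, by ext i j; exact Fin.elim0 i⟩
  haveI : Nonempty (Fin d) := ⟨⟨0, hd⟩⟩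
  set m' : Matrix (Fin d) (Fin d) ℂ := m + ρ Y₀ with hm'def
  obtain ⟨μ, hμ⟩ := Module.End.exists_eigenvalue (Matrix.mulVecLin m' : Module.End ℂ (Fin d → ℂ))
  set W : Submodule ℂ (Fin d → ℂ) := Module.End.eigenspace (Matrix.mulVecLin m') μ with hWdef
  have hWinv : ∀ X : L, ∀ w ∈ W, (ρ X).mulVec w ∈ W := by
    intro X w hw
    rw [hWdef, Module.End.mem_eigenspace_iff] at hw ⊢
    rw [Matrix.mulVecLin_apply] at hw ⊢
    rw [Matrix.mulVec_mulVec, ← hcomm X, ← Matrix.mulVec_mulVec, hw, Matrix.mulVec_smul]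
  rcases hirr W hWinv with hbot | htop
  · exact absurd hbot hμ
  have hall : ∀ v : Fin d → ℂ, m'.mulVec v = μ • v := by
    intro v
    have hv : v ∈ W := htop ▸ Submodule.mem_top
    rw [hWdef, Module.End.mem_eigenspace_iff, Matrix.mulVecLin_apply] at hv
    exact hv
  have hm'eq : m' = μ • (1 : Matrix (Fin d) (Fin d) ℂ) := by
    ext i j
    have := congrFun (hall (Pi.single j 1)) i
    rw [Matrix.mulVec_single_one] at this
    simpa [Matrix.one_apply, Pi.single_apply, eq_comm] using this
  refine ⟨-Y₀, μ, ?_⟩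
  rw [map_neg]
  have h3 : m + ρ Y₀ = μ • (1 : Matrix (Fin d) (Fin d) ℂ) := by rw [← hm'def]; exact hm'eq
  have h4 : m = μ • (1 : Matrix (Fin d) (Fin d) ℂ) - ρ Y₀ := eq_sub_of_add_eq h3
  rw [h4]
  abel
end

section
/- Let ρ : 𝔤 → End(ℂ^d) be a faithful representation with Tr(ρ(X)ρ(Y)) = c·B(X,Y), c ≠ 0, and let α : 𝔤 → 𝔤 be a Lie algebra involution with fixed subalgebra 𝔥 := {X : α(X) = X}. If m ∈ End(ℂ^d) satisfies Σ_A ρ(X_A + α(X_A)) ⊗ [ρ(X^A), m] = 0 in End(ℂ^d ⊗ ℂ^d), then [ρ(X), m] = 0 for all X ∈ 𝔥. -/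
open Kronecker

attribute [local instance 100] LieRing.ofAssociativeRing

/-- if `α` is a Lie algebra involution with fixed subalgebra
`𝔥 = {X : α(X) = X}` and `Σ_A ρ(X_A + α(X_A)) ⊗ [ρ(X^A), m] = 0`, then `[ρ(X), m] = 0`
for all `X ∈ 𝔥`. -/
theorem stmt_11 {L : Type*} [LieRing L] [LieAlgebra ℂ L] [FiniteDimensional ℂ L]
    [LieAlgebra.IsSimple ℂ L]
    (hB : LinearMap.BilinForm.Nondegenerate (killingForm ℂ L))
    {d : ℕ} (ρ : L →ₗ⁅ℂ⁆ Matrix (Fin d) (Fin d) ℂ)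
    (hρ : Function.Injective ρ)
    (c : ℂ) (hc : c ≠ 0)
    (htr : ∀ X Y : L, Matrix.trace (ρ X * ρ Y) = c * killingForm ℂ L X Y)
    {ι : Type*} [Fintype ι] [DecidableEq ι] (Xb : Module.Basis ι ℂ L) (Xd : ι → L)
    (hdual : ∀ A B : ι, killingForm ℂ L (Xb A) (Xd B) = if A = B then 1 else 0)
    (α : L →ₗ⁅ℂ⁆ L) (hα : ∀ X : L, α (α X) = X)
    (m : Matrix (Fin d) (Fin d) ℂ)
    (hm : ∑ A : ι, ρ (Xb A + α (Xb A)) ⊗ₖ (ρ (Xd A) * m - m * ρ (Xd A)) = 0) :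
    ∀ X : L, α X = X → ρ X * m = m * ρ X := by
  classical
  -- α preserves the Killing form
  let e : L ≃ₗ⁅ℂ⁆ L := { α with invFun := α, left_inv := hα, right_inv := hα }
  have hαB : ∀ x y : L, killingForm ℂ L (α x) (α y) = killingForm ℂ L x y := by
    intro x y
    exact LieAlgebra.killingForm_of_equiv_apply e x y
  have hαB' : ∀ x y : L, killingForm ℂ L x (α y) = killingForm ℂ L (α x) y := by
    intro x y
    conv_lhs => rw [← hα x]
    exact hαB (α x) y
  have hsymm : ∀ x y : L, killingForm ℂ L x y = killingForm ℂ L y x :=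
    fun x y => LieModule.traceForm_comm ℂ L L x y
  -- expansion of any element in terms of the dual basis
  have hexp : ∀ W : L, ∑ A : ι, killingForm ℂ L W (Xb A) • Xd A = W := by
    intro W
    have hz : ∀ Z : L,
        killingForm ℂ L ((∑ A : ι, killingForm ℂ L W (Xb A) • Xd A) - W) Z = 0 := by
      intro Z
      have hinner : ∀ A : ι,
          ∑ C : ι, killingForm ℂ L W (Xb C) * killingForm ℂ L (Xd C) (Xb A)
            = killingForm ℂ L W (Xb A) := by
        intro A
        have h1 : ∀ C : ι, killingForm ℂ L (Xd C) (Xb A) = if A = C then 1 else 0 := by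
          intro C
          rw [hsymm (Xd C) (Xb A), hdual A C]
        simp [h1]
      have hy := Module.Basis.sum_repr Xb Z
      rw [← hy, map_sum]
      simp [hinner]
    have := hB.1 _ hz
    rw [sub_eq_zero] at this
    exact this
  -- commutator with m, as a function of X
  set C : L → Matrix (Fin d) (Fin d) ℂ := fun X => ρ X * m - m * ρ X with hC
  -- the key identity
  have key : ∀ Y : L, C (Y + α Y) = 0 := by
    intro Y
    -- partial trace linear map
    set Φ : Matrix (Fin d × Fin d) (Fin d × Fin d) ℂ →ₗ[ℂ] Matrix (Fin d) (Fin d) ℂ :=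
      { toFun := fun M => Matrix.of fun j l => ∑ i, ∑ k, (ρ Y) k i * M (i, j) (k, l)
        map_add' := by
          intro M N
          ext j l
          simp [mul_add, Finset.sum_add_distrib]
        map_smul' := by
          intro r M
          ext j l
          simp [Finset.mul_sum, mul_left_comm] } with hΦ
    have hΦk : ∀ (Z : L) (N : Matrix (Fin d) (Fin d) ℂ),
        Φ (ρ Z ⊗ₖ N) = Matrix.trace (ρ Y * ρ Z) • N := by
      intro Z N
      ext j l
      simp only [hΦ, LinearMap.coe_mk, AddHom.coe_mk, Matrix.of_apply,
        Matrix.kroneckerMap_apply, Matrix.smul_apply, smul_eq_mul,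
        Matrix.trace, Matrix.diag, Matrix.mul_apply]
      simp only [Finset.sum_mul, mul_assoc]
      rw [Finset.sum_comm]
    have h0 : ∑ A : ι, Matrix.trace (ρ Y * ρ (Xb A + α (Xb A))) • C (Xd A) = 0 := by
      have := congrArg Φ hm
      rw [map_sum, map_zero] at this
      simpa only [hΦk] using this
    have hcoef : ∀ A : ι, Matrix.trace (ρ Y * ρ (Xb A + α (Xb A)))
        = c * killingForm ℂ L (Y + α Y) (Xb A) := by
      intro A
      rw [htr Y (Xb A + α (Xb A))]
      simp only [map_add, LinearMap.add_apply, hαB' Y (Xb A)]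
    rw [show (fun A : ι => Matrix.trace (ρ Y * ρ (Xb A + α (Xb A))) • C (Xd A))
        = fun A : ι => (c * killingForm ℂ L (Y + α Y) (Xb A)) • C (Xd A) from
      funext fun A => by rw [hcoef A]] at h0
    -- now rewrite the sum as c • C (Y + α Y)
    have hsum : ∑ A : ι, (c * killingForm ℂ L (Y + α Y) (Xb A)) • C (Xd A)
        = c • C (Y + α Y) := by
      have hρW : ρ (Y + α Y) = ∑ A : ι, killingForm ℂ L (Y + α Y) (Xb A) • ρ (Xd A) := by
        conv_lhs => rw [← hexp (Y + α Y)]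
        rw [← LieHom.coe_toLinearMap, map_sum]
        simp
      simp only [hC, hρW, Finset.sum_mul, Finset.mul_sum, Matrix.smul_mul, Matrix.mul_smul,
        ← Finset.sum_sub_distrib, ← smul_sub, Finset.smul_sum]
      congr 1
      ext A
      rw [mul_smul]
    rw [hsum] at h0
    rcases smul_eq_zero.mp h0 with h | h
    · exact absurd h hc
    · exact h
  intro X hX
  have hk : ρ (X + X) * m - m * ρ (X + X) = 0 := by
    have h := key X; rw [hX] at h; exact h
  rw [map_add] at hk
  have h2 : (ρ X * m - m * ρ X) + (ρ X * m - m * ρ X) = 0 := by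
    rw [← hk]; noncomm_ring
  have h3 : (2 : ℂ) • (ρ X * m - m * ρ X) = 0 := by
    rw [two_smul]; exact h2
  rcases smul_eq_zero.mp h3 with h | h
  · exact absurd h two_ne_zero
  · exact sub_eq_zero.mp h
end

section
/- Let n ≥ 1, let P ∈ End(ℂⁿ ⊗ ℂⁿ) be the flip P(x⊗y) = y⊗x, and define the rational (Yang) R-matrix R(u) := 1 + u⁻¹·P. For any matrix κ ∈ End(ℂⁿ) with κ² = 0, the matrix-valued function K(u) := κ + u⁻¹·1 satisfies the boundary Yang–Baxter equation R(u−v)·(K(u)⊗1)·R(u+v)·(1⊗K(v)) = (1⊗K(v))·R(u+v)·(K(u)⊗1)·R(u−v) for all u, v ∈ ℂ with u, v, u−v, u+v all nonzero. -/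
open Kronecker

lemma key {A : Type*} [Ring A] [Algebra ℂ A] (a b p : A)
    (hpa : p * a = b * p) (hpb : p * b = a * p) (hpp : p * p = 1)
    (ha : a * a = 0) (hb : b * b = 0) (hab : b * a = a * b) (u v : ℂ) :
    ((u - v) • 1 + p) * (u • a + 1) * ((u + v) • 1 + p) * (v • b + 1) =
      (v • b + 1) * ((u + v) • 1 + p) * (u • a + 1) * ((u - v) • 1 + p) := by
  have hpa' : ∀ x : A, p * (a * x) = b * (p * x) := fun x => by
    rw [← mul_assoc, hpa, mul_assoc]
  have hpb' : ∀ x : A, p * (b * x) = a * (p * x) := fun x => by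
    rw [← mul_assoc, hpb, mul_assoc]
  have hpp' : ∀ x : A, p * (p * x) = x := fun x => by
    rw [← mul_assoc, hpp, one_mul]
  have ha' : ∀ x : A, a * (a * x) = 0 := fun x => by
    rw [← mul_assoc, ha, zero_mul]
  have hb' : ∀ x : A, b * (b * x) = 0 := fun x => by
    rw [← mul_assoc, hb, zero_mul]
  have hab' : ∀ x : A, b * (a * x) = a * (b * x) := fun x => by
    rw [← mul_assoc, hab, mul_assoc]
  simp only [add_mul, mul_add, mul_one, one_mul, smul_mul_assoc, mul_smul_comm,
    smul_smul, mul_assoc, smul_add, hpa, hpb, hpp, ha, hb, hab,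
    hpa', hpb', hpp', ha', hb', hab', smul_zero, zero_mul, mul_zero, add_zero, zero_add]
  module

/-- for the rational (Yang) R-matrix `R(u) = 1 + u⁻¹P` and any `κ` with
`κ² = 0`, the function `K(u) = κ + u⁻¹·1` satisfies the boundary Yang–Baxter equation
for all `u, v` with `u, v, u−v, u+v ≠ 0`. -/
theorem stmt_16 (n : ℕ) (hn : 1 ≤ n)
    (P : Matrix (Fin n × Fin n) (Fin n × Fin n) ℂ)
    (hP : P = fun p q => if p.1 = q.2 ∧ p.2 = q.1 then 1 else 0)
    (R : ℂ → Matrix (Fin n × Fin n) (Fin n × Fin n) ℂ)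
    (hR : ∀ u : ℂ, R u = 1 + u⁻¹ • P)
    (κ : Matrix (Fin n) (Fin n) ℂ) (hκ : κ * κ = 0)
    (K : ℂ → Matrix (Fin n) (Fin n) ℂ)
    (hK : ∀ u : ℂ, K u = κ + u⁻¹ • (1 : Matrix (Fin n) (Fin n) ℂ)) :
    ∀ u v : ℂ, u ≠ 0 → v ≠ 0 → u - v ≠ 0 → u + v ≠ 0 →
      R (u - v) * (K u ⊗ₖ (1 : Matrix (Fin n) (Fin n) ℂ)) * R (u + v) *
          ((1 : Matrix (Fin n) (Fin n) ℂ) ⊗ₖ K v) =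
        ((1 : Matrix (Fin n) (Fin n) ℂ) ⊗ₖ K v) * R (u + v) *
          (K u ⊗ₖ (1 : Matrix (Fin n) (Fin n) ℂ)) * R (u - v) := by
  intro u v hu hv hw hs
  set a : Matrix (Fin n × Fin n) (Fin n × Fin n) ℂ := κ ⊗ₖ 1 with ha_def
  set b : Matrix (Fin n × Fin n) (Fin n × Fin n) ℂ := 1 ⊗ₖ κ with hb_def
  -- entrywise products with P
  have hPmul : ∀ M : Matrix (Fin n × Fin n) (Fin n × Fin n) ℂ,
      P * M = fun p q => M (p.2, p.1) q := by
    intro M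
    ext p q
    rw [Matrix.mul_apply, hP]
    rw [Finset.sum_eq_single ((p.2, p.1) : Fin n × Fin n)]
    · simp
    · intro r _ hr
      have : ¬ (p.1 = r.2 ∧ p.2 = r.1) := by
        rintro ⟨h1, h2⟩; exact hr (by rw [Prod.ext_iff]; exact ⟨h2.symm, h1.symm⟩)
      simp [this]
    · simp
  have hmulP : ∀ M : Matrix (Fin n × Fin n) (Fin n × Fin n) ℂ,
      M * P = fun p q => M p (q.2, q.1) := by
    intro M
    ext p q
    rw [Matrix.mul_apply, hP]
    rw [Finset.sum_eq_single ((q.2, q.1) : Fin n × Fin n)]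
    · simp
    · intro r _ hr
      have : ¬ (r.1 = q.2 ∧ r.2 = q.1) := by
        rintro ⟨h1, h2⟩; exact hr (by rw [Prod.ext_iff]; exact ⟨h1, h2⟩)
      simp [this]
    · simp
  have hpp : P * P = 1 := by
    rw [hPmul, hP]
    ext p q
    by_cases h : p = q
    · subst h; simp
    · have : ¬ ((p.2 : Fin n) = q.2 ∧ (p.1 : Fin n) = q.1) := by
        rintro ⟨h1, h2⟩; exact h (Prod.ext h2 h1)
      simp [Matrix.one_apply, this, h]
  have hpa : P * a = b * P := by
    rw [hPmul, hmulP]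
    ext p q
    simp [ha_def, hb_def, Matrix.kroneckerMap_apply, Matrix.one_apply, mul_comm]
  have hpb : P * b = a * P := by
    rw [hPmul, hmulP]
    ext p q
    simp [ha_def, hb_def, Matrix.kroneckerMap_apply, Matrix.one_apply, mul_comm]
  have haa : a * a = 0 := by
    rw [ha_def, ← Matrix.mul_kronecker_mul, hκ, mul_one]
    simp [Matrix.zero_kronecker]
  have hbb : b * b = 0 := by
    rw [hb_def, ← Matrix.mul_kronecker_mul, hκ, mul_one]
    simp [Matrix.kronecker_zero]
  have hab : b * a = a * b := by
    rw [ha_def, hb_def, ← Matrix.mul_kronecker_mul, ← Matrix.mul_kronecker_mul]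
    simp
  -- rewrite factors
  have hKu : K u ⊗ₖ (1 : Matrix (Fin n) (Fin n) ℂ) = u⁻¹ • (u • a + 1) := by
    rw [hK, Matrix.add_kronecker, Matrix.smul_kronecker, Matrix.one_kronecker_one,
      smul_add, smul_smul, inv_mul_cancel₀ hu, one_smul, ← ha_def]
  have hKv : (1 : Matrix (Fin n) (Fin n) ℂ) ⊗ₖ K v = v⁻¹ • (v • b + 1) := by
    rw [hK, Matrix.kronecker_add, Matrix.kronecker_smul, Matrix.one_kronecker_one,
      smul_add, smul_smul, inv_mul_cancel₀ hv, one_smul, ← hb_def]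
  have hRw : ∀ c : ℂ, c ≠ 0 → R c = c⁻¹ • (c • (1 : Matrix (Fin n × Fin n) (Fin n × Fin n) ℂ) + P) := by
    intro c hc
    rw [hR, smul_add, smul_smul, inv_mul_cancel₀ hc, one_smul]
  rw [hRw _ hw, hRw _ hs, hKu, hKv]
  simp only [smul_mul_assoc, mul_smul_comm, smul_smul]
  rw [show (u - v)⁻¹ * (u⁻¹ * ((u + v)⁻¹ * v⁻¹)) = v⁻¹ * ((u + v)⁻¹ * (u⁻¹ * (u - v)⁻¹)) by ring]
  congr 1
  exact key a b P hpa hpb hpp haa hbb hab u v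
end

section
/- Let n, k be integers with 0 < 2k < n. In gl(n,ℂ) define the subspaces 𝔥₂ := span{E_{2a−1,2b} : 1 ≤ a,b ≤ k}, 𝔥_D := span{H_a := E_{2a−1,2a−1} + E_{2a,2a} − (2/(n−2k))·Σ_{i=2k+1}^{n} E_{i,i} : 1 ≤ a ≤ k}, 𝔥₊ := span{E_{2a−1,i} : 1 ≤ a ≤ k, 2k+1 ≤ i ≤ n}, 𝔥₋ := span{E_{i,2a} : 1 ≤ a ≤ k, 2k+1 ≤ i ≤ n}. Then: [𝔥₂,𝔥₂] = [𝔥₂,𝔥₊] = [𝔥₂,𝔥₋] = [𝔥_D,𝔥_D] = [𝔥₊,𝔥₊] = [𝔥₋,𝔥₋] = 0; [𝔥_D,𝔥₂] ⊆ 𝔥₂; [𝔥_D,𝔥₊] ⊆ 𝔥₊; [𝔥_D,𝔥₋] ⊆ 𝔥₋; [𝔥₊,𝔥₋] ⊆ 𝔥₂. Consequently 𝔥_s := 𝔥₂ + 𝔥_D + 𝔥₊ + 𝔥₋ is a Lie subalgebra of gl(n,ℂ) with [𝔥_s,𝔥_s] ⊆ 𝔥₂ + 𝔥₊ + 𝔥₋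 and [[𝔥_s,𝔥_s],[𝔥_s,𝔥_s]] ⊆ 𝔥₂ abelian; in particular 𝔥_s is solvable. -/
attribute [local instance] LieRing.ofAssociativeRing

private lemma stmt17aux {L : Type*} [LieRing L] [LieAlgebra ℂ L] {s t : Set L}
    {r : Submodule ℂ L} (h : ∀ x ∈ s, ∀ y ∈ t, ⁅x, y⁆ ∈ r) :
    ∀ x ∈ Submodule.span ℂ s, ∀ y ∈ Submodule.span ℂ t, ⁅x, y⁆ ∈ r := by
  intro x hx
  induction hx using Submodule.span_induction with
  | mem x hxs =>
    intro y hy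
    induction hy using Submodule.span_induction with
    | mem y hyt => exact h x hxs y hyt
    | zero => simp
    | add y z _ _ hy hz => rw [lie_add]; exact r.add_mem hy hz
    | smul c y _ hy => rw [lie_smul]; exact r.smul_mem c hy
  | zero => intro y hy; simp
  | add x z _ _ hx hz => intro y hy; rw [add_lie]; exact r.add_mem (hx y hy) (hz y hy)
  | smul c x _ hx => intro y hy; rw [smul_lie]; exact r.smul_mem c (hx y hy)

private lemma stmt17mul {n : ℕ} (i j p q : Fin n) :
    Matrix.single i j (1:ℂ) * Matrix.single p q 1
      = if j = p then Matrix.single i q 1 else 0 := by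
  split_ifs with h
  · subst h; simpa using Matrix.single_mul_single_same (c := (1:ℂ)) i j q 1
  · exact Matrix.single_mul_single_of_ne (c := (1:ℂ)) i j p h 1

private lemma stmt17diaglie {n : ℕ} (d : Fin n → ℂ) (i j : Fin n) :
    ⁅Matrix.diagonal d, Matrix.single i j (1:ℂ)⁆
      = (d i - d j) • Matrix.single i j 1 := by
  ext a b
  simp only [Ring.lie_def, Matrix.sub_apply, Matrix.diagonal_mul, Matrix.mul_diagonal,
    Matrix.smul_apply, Matrix.single, Matrix.of_apply, smul_eq_mul]
  split_ifs with h
  · obtain ⟨rfl, rfl⟩ := h; ring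
  · ring

private lemma stmt17stddiag {n : ℕ} (p : Fin n) :
    Matrix.single p p (1:ℂ)
      = Matrix.diagonal (fun m : Fin n => if m = p then 1 else 0) := by
  ext a b
  simp only [Matrix.diagonal, Matrix.single, Matrix.of_apply]
  split_ifs <;> simp_all <;> omega

private lemma stmt17sumdiag {n k : ℕ} :
    (∑ l : Fin n, if 2 * k ≤ (l : ℕ) then Matrix.single l l (1:ℂ) else 0)
      = Matrix.diagonal (fun m : Fin n => if 2 * k ≤ (m : ℕ) then 1 else 0) := by
  ext a b
  simp only [Matrix.sum_apply, Matrix.diagonal, Matrix.single, Matrix.of_apply]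
  rw [Finset.sum_eq_single a]
  · split_ifs <;> simp_all [eq_comm]
  · intro l _ hl
    split_ifs <;> simp_all [eq_comm]
  · simp

/-- the decomposition `𝔥_s = 𝔥₂ + 𝔥_D + 𝔥₊ + 𝔥₋` in `gl(n, ℂ)` (elementary
matrices are indexed here 0-based: 1-based row `2a−1` is 0-based even `< 2k`, 1-based
column `2b` is 0-based odd `< 2k`, and 1-based `2k+1 ≤ i ≤ n` is 0-based `2k ≤ i`):
all the stated bracket relations hold, `𝔥₂` is abelian, and `𝔥_s` is a solvable Lie
subalgebra of `gl(n, ℂ)`. -/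
theorem stmt_17 (n k : ℕ) (hk : 0 < k) (hkn : 2 * k < n)
    (E : Fin n → Fin n → Matrix (Fin n) (Fin n) ℂ)
    (hE : ∀ i j, E i j = Matrix.single i j 1)
    (h₂ hD hplus hminus : Submodule ℂ (Matrix (Fin n) (Fin n) ℂ))
    (hh₂ : h₂ = Submodule.span ℂ
      {M | ∃ i j : Fin n, (i : ℕ) < 2 * k ∧ Even (i : ℕ) ∧ (j : ℕ) < 2 * k ∧ Odd (j : ℕ) ∧
        M = E i j})
    (hhD : hD = Submodule.span ℂ
      {M | ∃ i j : Fin n, (i : ℕ) < 2 * k ∧ Even (i : ℕ) ∧ (j : ℕ) = (i : ℕ) + 1 ∧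
        M = E i i + E j j -
          ((2 : ℂ) / ((n : ℂ) - 2 * k)) • ∑ l : Fin n, if 2 * k ≤ (l : ℕ) then E l l else 0})
    (hhplus : hplus = Submodule.span ℂ
      {M | ∃ i j : Fin n, (i : ℕ) < 2 * k ∧ Even (i : ℕ) ∧ 2 * k ≤ (j : ℕ) ∧ M = E i j})
    (hhminus : hminus = Submodule.span ℂ
      {M | ∃ i j : Fin n, 2 * k ≤ (i : ℕ) ∧ (j : ℕ) < 2 * k ∧ Odd (j : ℕ) ∧ M = E i j}) :
    (∀ x ∈ h₂, ∀ y ∈ h₂, ⁅x, y⁆ = (0 : Matrix (Fin n) (Fin n) ℂ)) ∧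
    (∀ x ∈ h₂, ∀ y ∈ hplus, ⁅x, y⁆ = (0 : Matrix (Fin n) (Fin n) ℂ)) ∧
    (∀ x ∈ h₂, ∀ y ∈ hminus, ⁅x, y⁆ = (0 : Matrix (Fin n) (Fin n) ℂ)) ∧
    (∀ x ∈ hD, ∀ y ∈ hD, ⁅x, y⁆ = (0 : Matrix (Fin n) (Fin n) ℂ)) ∧
    (∀ x ∈ hplus, ∀ y ∈ hplus, ⁅x, y⁆ = (0 : Matrix (Fin n) (Fin n) ℂ)) ∧
    (∀ x ∈ hminus, ∀ y ∈ hminus, ⁅x, y⁆ = (0 : Matrix (Fin n) (Fin n) ℂ)) ∧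
    (∀ x ∈ hD, ∀ y ∈ h₂, ⁅x, y⁆ ∈ h₂) ∧
    (∀ x ∈ hD, ∀ y ∈ hplus, ⁅x, y⁆ ∈ hplus) ∧
    (∀ x ∈ hD, ∀ y ∈ hminus, ⁅x, y⁆ ∈ hminus) ∧
    (∀ x ∈ hplus, ∀ y ∈ hminus, ⁅x, y⁆ ∈ h₂) ∧
    (∀ x ∈ h₂ ⊔ hD ⊔ hplus ⊔ hminus, ∀ y ∈ h₂ ⊔ hD ⊔ hplus ⊔ hminus,
      ⁅x, y⁆ ∈ h₂ ⊔ hplus ⊔ hminus) ∧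
    (∀ x ∈ h₂ ⊔ hD ⊔ hplus ⊔ hminus, ∀ y ∈ h₂ ⊔ hD ⊔ hplus ⊔ hminus,
      ∀ z ∈ h₂ ⊔ hD ⊔ hplus ⊔ hminus, ∀ w ∈ h₂ ⊔ hD ⊔ hplus ⊔ hminus,
        ⁅⁅x, y⁆, ⁅z, w⁆⁆ ∈ h₂) ∧
    (∃ S : LieSubalgebra ℂ (Matrix (Fin n) (Fin n) ℂ),
      S.toSubmodule = h₂ ⊔ hD ⊔ hplus ⊔ hminus ∧ LieAlgebra.IsSolvable S) := by
  set S2 : Set (Matrix (Fin n) (Fin n) ℂ) :=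
    {M | ∃ i j : Fin n, (i : ℕ) < 2 * k ∧ Even (i : ℕ) ∧ (j : ℕ) < 2 * k ∧ Odd (j : ℕ) ∧
        M = E i j} with hS2
  set SD : Set (Matrix (Fin n) (Fin n) ℂ) :=
    {M | ∃ i j : Fin n, (i : ℕ) < 2 * k ∧ Even (i : ℕ) ∧ (j : ℕ) = (i : ℕ) + 1 ∧
        M = E i i + E j j -
          ((2 : ℂ) / ((n : ℂ) - 2 * k)) • ∑ l : Fin n, if 2 * k ≤ (l : ℕ) then E l l else 0}
    with hSD
  set SP : Set (Matrix (Fin n) (Fin n) ℂ) :=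
    {M | ∃ i j : Fin n, (i : ℕ) < 2 * k ∧ Even (i : ℕ) ∧ 2 * k ≤ (j : ℕ) ∧ M = E i j} with hSP
  set SM : Set (Matrix (Fin n) (Fin n) ℂ) :=
    {M | ∃ i j : Fin n, 2 * k ≤ (i : ℕ) ∧ (j : ℕ) < 2 * k ∧ Odd (j : ℕ) ∧ M = E i j} with hSM
  subst hh₂ hhD hhplus hhminus
  -- basic computation lemmas
  have Emul : ∀ i j p q : Fin n, E i j * E p q = if j = p then E i q else 0 := by
    intro i j p q
    simp only [hE]
    exact stmt17mul i j p q
  have lie_zero' : ∀ {i j p q : Fin n}, j ≠ p → q ≠ i → ⁅E i j, E p q⁆ = 0 := by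
    intro i j p q h1 h2
    rw [Ring.lie_def, Emul, Emul, if_neg h1, if_neg h2, sub_zero]
  have ne_oe : ∀ {a b : Fin n}, Odd (a : ℕ) → Even (b : ℕ) → a ≠ b := by
    intro a b ha hb h
    rw [h, Nat.odd_iff] at ha; rw [Nat.even_iff] at hb; omega
  have ne_ge : ∀ {a b : Fin n}, 2 * k ≤ (a : ℕ) → (b : ℕ) < 2 * k → a ≠ b := by
    intro a b ha hb h; rw [h] at ha; omega
  have diag_lie : ∀ (d : Fin n → ℂ) (i j : Fin n),
      ⁅Matrix.diagonal d, E i j⁆ = (d i - d j) • E i j := by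
    intro d i j
    rw [hE]
    exact stmt17diaglie d i j
  have SD_diag : ∀ M ∈ SD, ∃ d : Fin n → ℂ, M = Matrix.diagonal d := by
    rintro M ⟨i, j, hi, hei, hj, rfl⟩
    have hdd : ∀ p : Fin n,
        Matrix.single p p (1:ℂ)
          = Matrix.diagonal (fun m : Fin n => if m = p then 1 else 0) := stmt17stddiag
    have hsum : (∑ l : Fin n, if 2 * k ≤ (l : ℕ) then E l l else 0)
        = Matrix.diagonal (fun m : Fin n => if 2 * k ≤ (m : ℕ) then 1 else 0) := by
      simp only [hE]
      exact stmt17sumdiag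
    refine ⟨fun m : Fin n => (if m = i then 1 else 0) + (if m = j then 1 else 0)
      - ((2 : ℂ) / ((n : ℂ) - 2 * k)) * (if 2 * k ≤ (m : ℕ) then 1 else 0), ?_⟩
    rw [hE i i, hE j j, hdd i, hdd j, hsum, ← Matrix.diagonal_smul, Matrix.diagonal_add,
      Matrix.diagonal_sub]
    try rfl
    try (congr 1; funext m; simp [smul_eq_mul])
  -- generator-level zero brackets
  have e22 : ∀ x ∈ S2, ∀ y ∈ S2, ⁅x, y⁆ = 0 := by
    rintro x ⟨i, j, hi, hei, hj, hoj, rfl⟩ y ⟨p, q, hp, hep, hq, hoq, rfl⟩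
    exact lie_zero' (ne_oe hoj hep) (ne_oe hoq hei)
  have e2p : ∀ x ∈ S2, ∀ y ∈ SP, ⁅x, y⁆ = 0 := by
    rintro x ⟨i, j, hi, hei, hj, hoj, rfl⟩ y ⟨p, q, hp, hep, hq, rfl⟩
    exact lie_zero' (ne_oe hoj hep) (ne_ge hq hi)
  have e2m : ∀ x ∈ S2, ∀ y ∈ SM, ⁅x, y⁆ = 0 := by
    rintro x ⟨i, j, hi, hei, hj, hoj, rfl⟩ y ⟨p, q, hp, hq, hoq, rfl⟩
    exact lie_zero' (ne_ge hp hj).symm (ne_oe hoq hei)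
  have epp : ∀ x ∈ SP, ∀ y ∈ SP, ⁅x, y⁆ = 0 := by
    rintro x ⟨i, j, hi, hei, hj, rfl⟩ y ⟨p, q, hp, hep, hq, rfl⟩
    exact lie_zero' (ne_ge hj hp) (ne_ge hq hi)
  have emm : ∀ x ∈ SM, ∀ y ∈ SM, ⁅x, y⁆ = 0 := by
    rintro x ⟨i, j, hi, hj, hoj, rfl⟩ y ⟨p, q, hp, hq, hoq, rfl⟩
    exact lie_zero' (ne_ge hp hj).symm (ne_ge hi hq).symm
  have ep2 : ∀ x ∈ SP, ∀ y ∈ S2, ⁅x, y⁆ = 0 := by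
    rintro x ⟨i, j, hi, hei, hj, rfl⟩ y ⟨p, q, hp, hep, hq, hoq, rfl⟩
    exact lie_zero' (ne_ge hj hp) (ne_oe hoq hei)
  have em2 : ∀ x ∈ SM, ∀ y ∈ S2, ⁅x, y⁆ = 0 := by
    rintro x ⟨i, j, hi, hj, hoj, rfl⟩ y ⟨p, q, hp, hep, hq, hoq, rfl⟩
    exact lie_zero' (ne_oe hoj hep) (ne_ge hi hq).symm
  have eDD : ∀ x ∈ SD, ∀ y ∈ SD, ⁅x, y⁆ = 0 := by
    intro x hx y hy
    obtain ⟨d, rfl⟩ := SD_diag x hx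
    obtain ⟨e, rfl⟩ := SD_diag y hy
    rw [Ring.lie_def, Matrix.diagonal_mul_diagonal, Matrix.diagonal_mul_diagonal]
    rw [show (fun i => d i * e i) = fun i => e i * d i from funext fun i => mul_comm _ _, sub_self]
  -- generator-level inclusions
  have gD2 : ∀ x ∈ SD, ∀ y ∈ S2, ⁅x, y⁆ ∈ Submodule.span ℂ S2 := by
    rintro x hx y ⟨i, j, hi, hei, hj, hoj, rfl⟩
    obtain ⟨d, rfl⟩ := SD_diag x hx
    rw [diag_lie]
    exact Submodule.smul_mem _ _ (Submodule.subset_span ⟨i, j, hi, hei, hj, hoj, rfl⟩)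
  have gDp : ∀ x ∈ SD, ∀ y ∈ SP, ⁅x, y⁆ ∈ Submodule.span ℂ SP := by
    rintro x hx y ⟨i, j, hi, hei, hj, rfl⟩
    obtain ⟨d, rfl⟩ := SD_diag x hx
    rw [diag_lie]
    exact Submodule.smul_mem _ _ (Submodule.subset_span ⟨i, j, hi, hei, hj, rfl⟩)
  have gDm : ∀ x ∈ SD, ∀ y ∈ SM, ⁅x, y⁆ ∈ Submodule.span ℂ SM := by
    rintro x hx y ⟨i, j, hi, hj, hoj, rfl⟩
    obtain ⟨d, rfl⟩ := SD_diag x hx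
    rw [diag_lie]
    exact Submodule.smul_mem _ _ (Submodule.subset_span ⟨i, j, hi, hj, hoj, rfl⟩)
  have gpm : ∀ x ∈ SP, ∀ y ∈ SM, ⁅x, y⁆ ∈ Submodule.span ℂ S2 := by
    rintro x ⟨i, j, hi, hei, hj, rfl⟩ y ⟨p, q, hp, hq, hoq, rfl⟩
    rw [Ring.lie_def, Emul, Emul, if_neg (ne_oe hoq hei), sub_zero]
    split_ifs with h
    · exact Submodule.subset_span ⟨i, q, hi, hei, hq, hoq, rfl⟩
    · exact Submodule.zero_mem _
  -- span-level zero brackets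
  have Z : ∀ {s t : Set (Matrix (Fin n) (Fin n) ℂ)}, (∀ x ∈ s, ∀ y ∈ t, ⁅x, y⁆ = 0) →
      ∀ x ∈ Submodule.span ℂ s, ∀ y ∈ Submodule.span ℂ t, ⁅x, y⁆ = 0 := by
    intro s t e x hx y hy
    have := stmt17aux (r := (⊥ : Submodule ℂ (Matrix (Fin n) (Fin n) ℂ)))
      (fun a ha b hb => (Submodule.mem_bot ℂ).mpr (e a ha b hb)) x hx y hy
    exact (Submodule.mem_bot ℂ).mp this
  have P1 := Z e22
  have P2 := Z e2p
  have P3 := Z e2m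
  have P4 := Z eDD
  have P5 := Z epp
  have P6 := Z emm
  have P7 := stmt17aux gD2
  have P8 := stmt17aux gDp
  have P9 := stmt17aux gDm
  have P10 := stmt17aux gpm
  -- sup as span of union
  have hsup4 : Submodule.span ℂ S2 ⊔ Submodule.span ℂ SD ⊔ Submodule.span ℂ SP
      ⊔ Submodule.span ℂ SM = Submodule.span ℂ (S2 ∪ SD ∪ SP ∪ SM) := by
    rw [Submodule.span_union, Submodule.span_union, Submodule.span_union]
  have hsup3 : Submodule.span ℂ S2 ⊔ Submodule.span ℂ SP ⊔ Submodule.span ℂ SM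
      = Submodule.span ℂ (S2 ∪ SP ∪ SM) := by
    rw [Submodule.span_union, Submodule.span_union]
  set K : Submodule ℂ (Matrix (Fin n) (Fin n) ℂ) :=
    Submodule.span ℂ S2 ⊔ Submodule.span ℂ SP ⊔ Submodule.span ℂ SM with hK
  have mem2 : ∀ {m : Matrix (Fin n) (Fin n) ℂ}, m ∈ Submodule.span ℂ S2 → m ∈ K :=
    fun h => Submodule.mem_sup_left (Submodule.mem_sup_left h)
  have memP : ∀ {m : Matrix (Fin n) (Fin n) ℂ}, m ∈ Submodule.span ℂ SP → m ∈ K :=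
    fun h => Submodule.mem_sup_left (Submodule.mem_sup_right h)
  have memM : ∀ {m : Matrix (Fin n) (Fin n) ℂ}, m ∈ Submodule.span ℂ SM → m ∈ K :=
    fun h => Submodule.mem_sup_right h
  have sp : ∀ {s : Set (Matrix (Fin n) (Fin n) ℂ)} {m}, m ∈ s → m ∈ Submodule.span ℂ s :=
    fun h => Submodule.subset_span h
  have gBig : ∀ x ∈ S2 ∪ SD ∪ SP ∪ SM, ∀ y ∈ S2 ∪ SD ∪ SP ∪ SM, ⁅x, y⁆ ∈ K := by
    rintro x (((hx | hx) | hx) | hx) y (((hy | hy) | hy) | hy)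
    · rw [e22 x hx y hy]; exact K.zero_mem
    · rw [← lie_skew]; exact neg_mem (mem2 (gD2 y hy x hx))
    · rw [e2p x hx y hy]; exact K.zero_mem
    · rw [e2m x hx y hy]; exact K.zero_mem
    · exact mem2 (gD2 x hx y hy)
    · rw [eDD x hx y hy]; exact K.zero_mem
    · exact memP (gDp x hx y hy)
    · exact memM (gDm x hx y hy)
    · rw [ep2 x hx y hy]; exact K.zero_mem
    · rw [← lie_skew]; exact neg_mem (memP (gDp y hy x hx))
    · rw [epp x hx y hy]; exact K.zero_mem
    · exact mem2 (gpm x hx y hy)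
    · rw [em2 x hx y hy]; exact K.zero_mem
    · rw [← lie_skew]; exact neg_mem (memM (gDm y hy x hx))
    · rw [← lie_skew]; exact neg_mem (mem2 (gpm y hy x hx))
    · rw [emm x hx y hy]; exact K.zero_mem
  have P11 : ∀ x ∈ Submodule.span ℂ S2 ⊔ Submodule.span ℂ SD ⊔ Submodule.span ℂ SP
      ⊔ Submodule.span ℂ SM, ∀ y ∈ Submodule.span ℂ S2 ⊔ Submodule.span ℂ SD
      ⊔ Submodule.span ℂ SP ⊔ Submodule.span ℂ SM, ⁅x, y⁆ ∈ K := by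
    intro x hx y hy
    rw [hsup4] at hx hy
    exact stmt17aux gBig x hx y hy
  have gK : ∀ x ∈ S2 ∪ SP ∪ SM, ∀ y ∈ S2 ∪ SP ∪ SM, ⁅x, y⁆ ∈ Submodule.span ℂ S2 := by
    rintro x ((hx | hx) | hx) y ((hy | hy) | hy)
    · rw [e22 x hx y hy]; exact Submodule.zero_mem _
    · rw [e2p x hx y hy]; exact Submodule.zero_mem _
    · rw [e2m x hx y hy]; exact Submodule.zero_mem _
    · rw [ep2 x hx y hy]; exact Submodule.zero_mem _
    · rw [epp x hx y hy]; exact Submodule.zero_mem _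
    · exact gpm x hx y hy
    · rw [em2 x hx y hy]; exact Submodule.zero_mem _
    · rw [← lie_skew]; exact neg_mem (gpm y hy x hx)
    · rw [emm x hx y hy]; exact Submodule.zero_mem _
  have PKK : ∀ u ∈ K, ∀ v ∈ K, ⁅u, v⁆ ∈ Submodule.span ℂ S2 := by
    intro u hu v hv
    rw [hsup3] at hu hv
    exact stmt17aux gK u hu v hv
  -- the subalgebra
  have hKle : K ≤ Submodule.span ℂ S2 ⊔ Submodule.span ℂ SD ⊔ Submodule.span ℂ SP
      ⊔ Submodule.span ℂ SM := by
    refine sup_le (sup_le ?_ ?_) ?_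
    · exact le_sup_of_le_left (le_sup_of_le_left le_sup_left)
    · exact le_sup_of_le_left le_sup_right
    · exact le_sup_right
  refine ⟨P1, P2, P3, P4, P5, P6, P7, P8, P9, P10, P11, ?_, ?_⟩
  · intro x hx y hy z hz w hw
    exact PKK _ (P11 x hx y hy) _ (P11 z hz w hw)
  · set Salg : LieSubalgebra ℂ (Matrix (Fin n) (Fin n) ℂ) :=
      ⟨Submodule.span ℂ S2 ⊔ Submodule.span ℂ SD ⊔ Submodule.span ℂ SP ⊔ Submodule.span ℂ SM,
        fun hx hy => hKle (P11 _ hx _ hy)⟩ with hSalg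
    refine ⟨Salg, rfl, ?_⟩
    have hPhsK : ∀ x : Salg, ∀ m : Salg, (m : Matrix (Fin n) (Fin n) ℂ) ∈ K →
        ((⁅x, m⁆ : Salg) : Matrix (Fin n) (Fin n) ℂ) ∈ K := by
      intro x m hm
      rw [LieSubalgebra.coe_bracket]
      -- [hs, K] ⊆ K
      have : ∀ a ∈ S2 ∪ SD ∪ SP ∪ SM, ∀ b ∈ S2 ∪ SP ∪ SM, ⁅a, b⁆ ∈ K := by
        rintro a (((ha | ha) | ha) | ha) b ((hb | hb) | hb)
        · rw [e22 a ha b hb]; exact K.zero_mem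
        · rw [e2p a ha b hb]; exact K.zero_mem
        · rw [e2m a ha b hb]; exact K.zero_mem
        · exact mem2 (gD2 a ha b hb)
        · exact memP (gDp a ha b hb)
        · exact memM (gDm a ha b hb)
        · rw [ep2 a ha b hb]; exact K.zero_mem
        · rw [epp a ha b hb]; exact K.zero_mem
        · exact mem2 (gpm a ha b hb)
        · rw [em2 a ha b hb]; exact K.zero_mem
        · rw [← lie_skew]; exact neg_mem (mem2 (gpm b hb a ha))
        · rw [emm a ha b hb]; exact K.zero_mem
      have hx' : (x : Matrix (Fin n) (Fin n) ℂ) ∈ Submodule.span ℂ (S2 ∪ SD ∪ SP ∪ SM) := by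
        rw [← hsup4]; exact x.2
      have hm' : (m : Matrix (Fin n) (Fin n) ℂ) ∈ Submodule.span ℂ (S2 ∪ SP ∪ SM) := by
        rw [← hsup3]; exact hm
      exact stmt17aux this _ hx' _ hm'
    have hPhs2 : ∀ x : Salg, ∀ m : Salg, (m : Matrix (Fin n) (Fin n) ℂ) ∈ Submodule.span ℂ S2 →
        ((⁅x, m⁆ : Salg) : Matrix (Fin n) (Fin n) ℂ) ∈ Submodule.span ℂ S2 := by
      intro x m hm
      rw [LieSubalgebra.coe_bracket]
      have : ∀ a ∈ S2 ∪ SD ∪ SP ∪ SM, ∀ b ∈ S2, ⁅a, b⁆ ∈ Submodule.span ℂ S2 := by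
        rintro a (((ha | ha) | ha) | ha) b hb
        · rw [e22 a ha b hb]; exact Submodule.zero_mem _
        · exact gD2 a ha b hb
        · rw [ep2 a ha b hb]; exact Submodule.zero_mem _
        · rw [em2 a ha b hb]; exact Submodule.zero_mem _
      have hx' : (x : Matrix (Fin n) (Fin n) ℂ) ∈ Submodule.span ℂ (S2 ∪ SD ∪ SP ∪ SM) := by
        rw [← hsup4]; exact x.2
      exact stmt17aux this _ hx' _ hm
    -- ideals
    let IK : LieIdeal ℂ Salg :=
      { carrier := {m : Salg | (m : Matrix (Fin n) (Fin n) ℂ) ∈ K}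
        add_mem' := fun {a b} ha hb => by
          simp only [Set.mem_setOf_eq] at *
          exact K.add_mem ha hb
        zero_mem' := by
          show ((0 : Salg) : Matrix (Fin n) (Fin n) ℂ) ∈ K
          rw [ZeroMemClass.coe_zero]; exact K.zero_mem
        smul_mem' := fun c a ha => by
          simp only [Set.mem_setOf_eq] at *
          exact K.smul_mem c ha
        lie_mem := fun {x m} hm => hPhsK x m hm }
    let I2 : LieIdeal ℂ Salg :=
      { carrier := {m : Salg | (m : Matrix (Fin n) (Fin n) ℂ) ∈ Submodule.span ℂ S2}
        add_mem' := fun {a b} ha hb => by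
          simp only [Set.mem_setOf_eq] at *
          exact Submodule.add_mem _ ha hb
        zero_mem' := by
          show ((0 : Salg) : Matrix (Fin n) (Fin n) ℂ) ∈ Submodule.span ℂ S2
          rw [ZeroMemClass.coe_zero]; exact Submodule.zero_mem _
        smul_mem' := fun c a ha => by
          simp only [Set.mem_setOf_eq] at *
          exact Submodule.smul_mem _ c ha
        lie_mem := fun {x m} hm => hPhs2 x m hm }
    rw [LieAlgebra.isSolvable_iff ℂ]
    refine ⟨3, ?_⟩
    have h1 : LieAlgebra.derivedSeries ℂ Salg 1 ≤ IK := by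
      rw [LieAlgebra.derivedSeries_def, LieAlgebra.derivedSeriesOfIdeal_succ,
        LieSubmodule.lie_le_iff]
      intro x hx m hm
      have : ((⁅(⟨x, x.2⟩ : Salg), (⟨m, m.2⟩ : Salg)⁆ : Salg) : Matrix (Fin n) (Fin n) ℂ) ∈ K := by
        rw [LieSubalgebra.coe_bracket]
        exact P11 _ x.2 _ m.2
      exact this
    have h2 : LieAlgebra.derivedSeries ℂ Salg 2 ≤ I2 := by
      rw [LieAlgebra.derivedSeries_def, LieAlgebra.derivedSeriesOfIdeal_succ,
        ← LieAlgebra.derivedSeries_def]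
      refine le_trans (LieSubmodule.mono_lie h1 h1) ?_
      rw [LieSubmodule.lie_le_iff]
      intro x hx m hm
      show ((⁅x, m⁆ : Salg) : Matrix (Fin n) (Fin n) ℂ) ∈ Submodule.span ℂ S2
      rw [LieSubalgebra.coe_bracket]
      exact PKK _ hx _ hm
    have h3 : LieAlgebra.derivedSeries ℂ Salg 3 ≤ ⊥ := by
      rw [LieAlgebra.derivedSeries_def, LieAlgebra.derivedSeriesOfIdeal_succ,
        ← LieAlgebra.derivedSeries_def]
      refine le_trans (LieSubmodule.mono_lie h2 h2) ?_
      rw [LieSubmodule.lie_le_iff]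
      intro x hx m hm
      rw [LieSubmodule.mem_bot]
      apply Subtype.ext
      rw [LieSubalgebra.coe_bracket]
      exact P1 _ hx _ hm
    exact le_bot_iff.mp h3
end
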